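/- arXiv:0910.1585 — 6 statements merged into one kernel-verified Lean document; each statement's English description precedes it below -/
import Mathlib

section
/- Consider an interaction system with n nodes in which every node i has a deterministic, historyless, self-independent reaction function g_i : A → A_i. If there exist two distinct stable states (two distinct profiles a ≠ b with g_i(a) = a_i and g_i(b) = b_i for all i), then the system is not convergent: there exist an initial profile s⁰ and a fair schedule σ such that the (s⁰,σ)-dynamics is not eventually constant. -/
/-- A schedule `σ` is fair if every node is activated infinitely often. -/
def Fair {n : ℕ} (σ : ℕ → Finset (Fin n)) : Prop :=
  ∀ i : Fin n, ∀ N : ℕ, ∃ t, N ≤ t ∧ i ∈ σ t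

/-- A schedule is `r`-fair if every node is activated at least once in every
`r` consecutive time steps. -/
def RFair {n : ℕ} (r : ℕ) (σ : ℕ → Finset (Fin n)) : Prop :=
  ∀ i : Fin n, ∀ t0 : ℕ, ∃ t, t0 ≤ t ∧ t < t0 + r ∧ i ∈ σ t

/-- A (deterministic, historyless) reaction function is self-independent if
it does not depend on node `i`'s own action. -/
def SelfIndependent {n : ℕ} {A : Fin n → Type*} (i : Fin n)
    (g : (∀ j, A j) → A i) : Prop :=
  ∀ a b : ∀ j, A j, (∀ j, j ≠ i → a j = b j) → g a = g b

/-- A stable state is a fixed point of all reaction functions. -/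
def Stable {n : ℕ} {A : Fin n → Type*}
    (g : ∀ i : Fin n, (∀ j, A j) → A i) (a : ∀ j, A j) : Prop :=
  ∀ i, g i a = a i

/-- The `(s0, σ)`-dynamics of a system of deterministic historyless reaction
functions: at each time step, each activated node reacts to the current
profile and the other nodes repeat their previous action. -/
def dynamics {n : ℕ} {A : Fin n → Type*}
    (g : ∀ i : Fin n, (∀ j, A j) → A i) (s0 : ∀ j, A j)
    (σ : ℕ → Finset (Fin n)) : ℕ → ∀ j, A j
  | 0 => s0
  | t + 1 => fun i =>
      if i ∈ σ (t + 1) then g i (dynamics g s0 σ t) else dynamics g s0 σ t i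

/-- A sequence converges if it is eventually constant. -/
def EventuallyConstant {α : Type*} (s : ℕ → α) : Prop :=
  ∃ t0 : ℕ, ∀ t, t0 ≤ t → s t = s t0

/-- The system is convergent if the dynamics converges for every initial
profile and every fair schedule. -/
def Convergent {n : ℕ} {A : Fin n → Type*}
    (g : ∀ i : Fin n, (∀ j, A j) → A i) : Prop :=
  ∀ (s0 : ∀ j, A j) (σ : ℕ → Finset (Fin n)),
    (∀ t, (σ t).Nonempty) → Fair σ → EventuallyConstant (dynamics g s0 σ)

/-- The system is `r`-convergent if the dynamics converges for every initial
profile and every `r`-fair schedule. -/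
def RConvergent {n : ℕ} {A : Fin n → Type*} (r : ℕ)
    (g : ∀ i : Fin n, (∀ j, A j) → A i) : Prop :=
  ∀ (s0 : ∀ j, A j) (σ : ℕ → Finset (Fin n)),
    (∀ t, (σ t).Nonempty) → RFair r σ → EventuallyConstant (dynamics g s0 σ)

namespace TwoStable

variable {n : ℕ} {A : Fin n → Type*}

def Fstep (g : ∀ i : Fin n, (∀ j, A j) → A i) (S : Finset (Fin n)) (s : ∀ j, A j) :
    ∀ j, A j := fun i => if i ∈ S then g i s else s i

def runW (g : ∀ i : Fin n, (∀ j, A j) → A i) (w : List (Finset (Fin n))) (s : ∀ j, A j) :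
    ∀ j, A j := w.foldl (fun st S => Fstep g S st) s

def applyL (g : ∀ i : Fin n, (∀ j, A j) → A i) (l : List (Fin n)) (s : ∀ j, A j) :
    ∀ j, A j := runW g (l.map fun j => ({j} : Finset (Fin n))) s

def Reach (g : ∀ i : Fin n, (∀ j, A j) → A i) (s t : ∀ j, A j) : Prop :=
  ∃ l : List (Fin n), applyL g l s = t

def Val (g : ∀ i : Fin n, (∀ j, A j) → A i) (s : ∀ j, A j) : Set (∀ j, A j) :=
  {x | Stable g x ∧ Reach g s x}

def Biv (g : ∀ i : Fin n, (∀ j, A j) → A i) (s : ∀ j, A j) : Prop :=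
  ∃ x y, x ∈ Val g s ∧ y ∈ Val g s ∧ x ≠ y

variable {g : ∀ i : Fin n, (∀ j, A j) → A i}

theorem runW_append (w1 w2 : List (Finset (Fin n))) (s : ∀ j, A j) :
    runW g (w1 ++ w2) s = runW g w2 (runW g w1 s) := by
  simp [runW, List.foldl_append]

theorem runW_nil (s : ∀ j, A j) : runW g [] s = s := rfl

theorem runW_cons (S : Finset (Fin n)) (w : List (Finset (Fin n))) (s : ∀ j, A j) :
    runW g (S :: w) s = runW g w (Fstep g S s) := rfl

theorem applyL_nil (s : ∀ j, A j) : applyL g [] s = s := rfl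

theorem applyL_append (l1 l2 : List (Fin n)) (s : ∀ j, A j) :
    applyL g (l1 ++ l2) s = applyL g l2 (applyL g l1 s) := by
  simp [applyL, runW_append]

theorem applyL_concat (l : List (Fin n)) (j : Fin n) (s : ∀ j, A j) :
    applyL g (l ++ [j]) s = Fstep g {j} (applyL g l s) := by
  rw [applyL_append]; rfl

theorem reach_trans {s t u : ∀ j, A j} (h1 : Reach g s t) (h2 : Reach g t u) :
    Reach g s u := by
  obtain ⟨l1, rfl⟩ := h1; obtain ⟨l2, rfl⟩ := h2
  exact ⟨l1 ++ l2, applyL_append l1 l2 _⟩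

theorem val_mono {s t : ∀ j, A j} (h : Reach g s t) : Val g t ⊆ Val g s :=
  fun _ hx => ⟨hx.1, reach_trans h hx.2⟩

theorem stable_Fstep {x : ∀ j, A j} (hx : Stable g x) (S : Finset (Fin n)) :
    Fstep g S x = x := by
  funext j; simp only [Fstep]; split <;> simp [hx j]

theorem stable_applyL {x : ∀ j, A j} (hx : Stable g x) (l : List (Fin n)) :
    applyL g l x = x := by
  induction l with
  | nil => rfl
  | cons j l ih => simpa [applyL, runW_cons, stable_Fstep hx] using ih

theorem val_stable {x z : ∀ j, A j} (hx : Stable g x) (hz : z ∈ Val g x) : z = x := by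
  obtain ⟨l, hl⟩ := hz.2; rw [stable_applyL hx] at hl; exact hl.symm

theorem merge (hsi : ∀ i, SelfIndependent i (g i)) (i : Fin n) {u v : ∀ j, A j}
    (h : ∀ j, j ≠ i → u j = v j) : Fstep g {i} u = Fstep g {i} v := by
  funext j
  simp only [Fstep, Finset.mem_singleton]
  by_cases hj : j = i
  · subst hj; simp [hsi j u v h]
  · simp [hj, h j hj]

theorem Fstep_ne {S : Finset (Fin n)} {s : ∀ j, A j} {j : Fin n} (h : j ∉ S) :
    Fstep g S s j = s j := by simp [Fstep, h]

theorem idem (hsi : ∀ i, SelfIndependent i (g i)) (i : Fin n) (u : ∀ j, A j) :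
    Fstep g {i} (Fstep g {i} u) = Fstep g {i} u :=
  merge hsi i fun j hj => Fstep_ne (by simpa using hj)

theorem dyn_succ (s0 : ∀ j, A j) (σ : ℕ → Finset (Fin n)) (t : ℕ) :
    dynamics g s0 σ (t + 1) = Fstep g (σ (t + 1)) (dynamics g s0 σ t) := rfl

theorem dyn_runW (s0 : ∀ j, A j) (σ : ℕ → Finset (Fin n)) (t : ℕ) :
    dynamics g s0 σ t = runW g ((List.range t).map fun m => σ (m + 1)) s0 := by
  induction t with
  | zero => rfl
  | succ t ih => rw [dyn_succ, ih, List.range_succ, List.map_append, runW_append]; rfl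

theorem limit_stable {s0 : ∀ j, A j} {σ : ℕ → Finset (Fin n)} (hf : Fair σ) {t0 : ℕ}
    (h : ∀ t, t0 ≤ t → dynamics g s0 σ t = dynamics g s0 σ t0) :
    Stable g (dynamics g s0 σ t0) := by
  intro i
  obtain ⟨t, ht, hi⟩ := hf i (t0 + 1)
  obtain ⟨p, rfl⟩ : ∃ p, t = p + 1 := ⟨t - 1, by omega⟩
  have hp : dynamics g s0 σ p = dynamics g s0 σ t0 := h p (by omega)
  have hp1 : dynamics g s0 σ (p + 1) = dynamics g s0 σ t0 := h (p + 1) (by omega)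
  have := congrFun hp1 i
  rw [dyn_succ] at this
  simp only [Fstep, hi, if_pos] at this
  rw [hp] at this
  exact this


theorem subsingleton_of_not_biv {s : ∀ j, A j} (h : ¬ Biv g s) :
    ∀ x y, x ∈ Val g s → y ∈ Val g s → x = y := by
  intro x y hx hy
  by_contra hxy
  exact h ⟨x, y, hx, hy, hxy⟩

theorem take_step (l : List (Fin n)) (m : ℕ) (hm : m < l.length) (s : ∀ j, A j) :
    applyL g (l.take (m + 1)) s = Fstep g {l.get ⟨m, hm⟩} (applyL g (l.take m) s) := by
  rw [← applyL_concat, ← List.take_concat_get (l := l) (i := m) hm, List.concat_eq_append]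
  rfl

theorem claimA (hsi : ∀ i, SelfIndependent i (g i))
    (hVNE : ∀ s : ∀ j, A j, ∃ x, x ∈ Val g s)
    {s : ∀ j, A j} (hs : Biv g s) (i : Fin n) :
    ∃ w : List (Finset (Fin n)), (∀ S ∈ w, S.Nonempty) ∧ (∃ S ∈ w, i ∈ S) ∧
      Biv g (runW g w s) := by
  by_contra hcon
  push_neg at hcon
  -- every word touching i leads to a subsingleton valence set
  have Sub : ∀ (l1 : List (Fin n)) (S : Finset (Fin n)), i ∈ S →
      ∀ x y, x ∈ Val g (Fstep g S (applyL g l1 s)) →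
        y ∈ Val g (Fstep g S (applyL g l1 s)) → x = y := by
    intro l1 S hiS x y hx hy
    have hne : ∀ T ∈ (l1.map fun j => ({j} : Finset (Fin n))) ++ [S], T.Nonempty := by
      intro T hT
      rcases List.mem_append.1 hT with hT | hT
      · obtain ⟨j, _, rfl⟩ := List.mem_map.1 hT
        exact Finset.singleton_nonempty j
      · rw [List.mem_singleton.1 hT]; exact ⟨i, hiS⟩
    have htouch : ∃ T ∈ (l1.map fun j => ({j} : Finset (Fin n))) ++ [S], i ∈ T :=
      ⟨S, List.mem_append.2 (Or.inr (List.mem_singleton.2 rfl)), hiS⟩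
    have hrun : runW g ((l1.map fun j => ({j} : Finset (Fin n))) ++ [S]) s
        = Fstep g S (applyL g l1 s) := by
      rw [runW_append]; rfl
    have := hcon _ hne htouch
    rw [hrun] at this
    exact subsingleton_of_not_biv this x y hx hy
  obtain ⟨x, y, hx, hy, hxy⟩ := hs
  obtain ⟨X0, hX0⟩ := hVNE (Fstep g {i} s)
  -- pick a target distinct from X0
  obtain ⟨xx, hxx, hne⟩ : ∃ xx, xx ∈ Val g s ∧ xx ≠ X0 := by
    by_cases hxX : x = X0
    · exact ⟨y, hy, by rw [← hxX]; exact fun h => hxy h.symm⟩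
    · exact ⟨x, hx, hxX⟩
  obtain ⟨l, hl⟩ := hxx.2
  have hxxS : Stable g xx := hxx.1
  have main : ∀ d m, m + d = l.length →
      ∀ z, z ∈ Val g (Fstep g {i} (applyL g (l.take m) s)) → z = xx := by
    intro d
    induction d with
    | zero =>
      intro m hm z hz
      have : l.take m = l := List.take_of_length_le (by omega)
      rw [this, hl, stable_Fstep hxxS] at hz
      exact val_stable hxxS hz
    | succ d ih =>
      intro m hm z hz
      have hmlt : m < l.length := by omega
      set v := applyL g (l.take m) s with hv
      set j := l.get ⟨m, hmlt⟩ with hj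
      have hv' : applyL g (l.take (m + 1)) s = Fstep g {j} v := take_step l m hmlt s
      have IH : ∀ z, z ∈ Val g (Fstep g {i} (applyL g (l.take (m + 1)) s)) → z = xx :=
        ih (m + 1) (by omega)
      by_cases hji : j = i
      · -- the step activates i itself
        apply IH
        rw [hv', hji, idem hsi]
        exact hz
      · -- critical square
        set P := Fstep g {i} v with hP
        set Q := Fstep g {i} (Fstep g {j} v) with hQ
        set R := Fstep g ({i, j} : Finset (Fin n)) v with hR
        have hRQ : Fstep g {i} R = Q := by
          have h1 : Fstep g {i} R = Fstep g {i} (Fstep g {j} v) := by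
            apply merge hsi
            intro k hk
            simp only [hR, Fstep, Finset.mem_insert, Finset.mem_singleton]
            by_cases hkj : k = j
            · simp [hkj]
            · simp [hkj, hk]
          rw [h1, hQ]
        have hRP : Fstep g {j} R = Fstep g {j} P := by
          apply merge hsi
          intro k hk
          simp only [hR, hP, Fstep, Finset.mem_insert, Finset.mem_singleton]
          by_cases hki : k = i
          · simp [hki]
          · simp [hki, hk]
        obtain ⟨q, hq⟩ := hVNE Q
        obtain ⟨r, hr⟩ := hVNE (Fstep g {j} R)
        have hqR : q ∈ Val g R := val_mono ⟨[i], by rw [applyL, List.map_singleton]; exact hRQ⟩ hq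
        have hrR : r ∈ Val g R := val_mono ⟨[j], by rw [applyL, List.map_singleton]; rfl⟩ hr
        have hrP : r ∈ Val g P := by
          apply val_mono (t := Fstep g {j} P) ⟨[j], by rw [applyL, List.map_singleton]; rfl⟩
          rw [← hRP]; exact hr
        have hrq : r = q := Sub (l.take m) {i, j} (Finset.mem_insert_self i _) r q hrR hqR
        have hzr : z = r := Sub (l.take m) {i} (Finset.mem_singleton_self i) z r hz hrP
        have hqxx : q = xx := by
          apply IH
          rw [hv']
          exact hq
        rw [hzr, hrq, hqxx]
  have := main l.length 0 (by omega) X0 (by simpa [applyL_nil] using hX0)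
  exact hne this.symm


theorem existsBiv (hsi : ∀ i, SelfIndependent i (g i))
    (hVNE : ∀ s : ∀ j, A j, ∃ x, x ∈ Val g s)
    {a b : ∀ j, A j} (hab : a ≠ b) (ha : Stable g a) (hb : Stable g b) :
    ∃ s, Biv g s := by
  by_contra hcon
  push_neg at hcon
  have sub : ∀ s x y, x ∈ Val g s → y ∈ Val g s → x = y :=
    fun s => subsingleton_of_not_biv (hcon s)
  set c : ℕ → ∀ j, A j := fun k j => if (j : ℕ) < k then b j else a j with hc
  have hc0 : c 0 = a := by funext j; simp [hc]
  have hcn : c n = b := by funext j; simp [hc, j.isLt]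
  have key : ∀ k, a ∈ Val g (c k) := by
    intro k
    induction k with
    | zero => rw [hc0]; exact ⟨ha, [], rfl⟩
    | succ k ih =>
      by_cases hk : k < n
      · set jj : Fin n := ⟨k, hk⟩ with hjj
        have hmerge : Fstep g {jj} (c k) = Fstep g {jj} (c (k + 1)) := by
          apply merge hsi
          intro j' hj'
          have : (j' : ℕ) ≠ k := by
            intro h; apply hj'; apply Fin.ext; simp [hjj, h]
          simp only [hc]
          by_cases h1 : (j' : ℕ) < k
          · rw [if_pos h1, if_pos (by omega)]
          · rw [if_neg h1, if_neg (by omega)]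
        obtain ⟨z, hz⟩ := hVNE (Fstep g {jj} (c k))
        have hz1 : z ∈ Val g (c k) :=
          val_mono ⟨[jj], by rw [applyL, List.map_singleton]; rfl⟩ hz
        have hza : z = a := sub _ _ _ hz1 ih
        have hz2 : z ∈ Val g (c (k + 1)) := by
          apply val_mono (t := Fstep g {jj} (c (k + 1)))
            ⟨[jj], by rw [applyL, List.map_singleton]; rfl⟩
          rw [← hmerge]; exact hz
        rw [← hza]; exact hz2
      · have : c (k + 1) = c k := by
          funext j
          simp only [hc]
          have : (j : ℕ) < k := by have := j.isLt; omega
          rw [if_pos this, if_pos (by omega)]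
        rw [this]; exact ih
  have := key n
  rw [hcn] at this
  exact hab (val_stable hb this)


theorem get_congr {α : Type*} (l l' : List α) (h : l = l') (i i' : ℕ)
    (h1 : i < l.length) (h2 : i' < l'.length) (hi : i = i') :
    l.get ⟨i, h1⟩ = l'.get ⟨i', h2⟩ := by subst h; subst hi; rfl

theorem runW_take_step (w : List (Finset (Fin n))) (m : ℕ) (hm : m < w.length)
    (s : ∀ j, A j) :
    runW g (w.take (m + 1)) s = Fstep g (w.get ⟨m, hm⟩) (runW g (w.take m) s) := by
  rw [← List.take_concat_get (l := w) (i := m) hm, List.concat_eq_append, runW_append]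
  rfl

end TwoStable

open TwoStable

/-- A system of deterministic, historyless, self-independent
reaction functions with two distinct stable states is not convergent. -/
theorem two_stable_states_not_convergent
    {n : ℕ} {A : Fin n → Type*} [∀ i, Nonempty (A i)]
    (g : ∀ i : Fin n, (∀ j, A j) → A i)
    (hsi : ∀ i, SelfIndependent i (g i))
    (a b : ∀ j, A j) (hab : a ≠ b)
    (ha : Stable g a) (hb : Stable g b) :
    ∃ (s0 : ∀ j, A j) (σ : ℕ → Finset (Fin n)),
      (∀ t, (σ t).Nonempty) ∧ Fair σ ∧
      ¬ EventuallyConstant (dynamics g s0 σ) := by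
  by_contra hcon
  push_neg at hcon
  have hn : 0 < n := by
    by_contra h
    exact hab (funext fun j => absurd j.isLt (by omega))
  -- round-robin schedule, used to show every state can reach a stable state
  set σrr : ℕ → Finset (Fin n) := fun t => {⟨t % n, Nat.mod_lt _ hn⟩} with hσrr
  have hmodfin : ∀ (i : Fin n) (N : ℕ), (⟨(i.val + n * N) % n, Nat.mod_lt _ hn⟩ : Fin n) = i := by
    intro i N
    apply Fin.ext
    simp only [Nat.add_mul_mod_self_left]
    exact Nat.mod_eq_of_lt i.isLt
  have fair_rr : Fair σrr := by
    intro i N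
    refine ⟨i.val + n * N, by nlinarith [i.isLt], ?_⟩
    rw [hσrr]
    simp only [Finset.mem_singleton]
    exact (hmodfin i N).symm
  have hVNE : ∀ s : ∀ j, A j, ∃ x, x ∈ Val g s := by
    intro s
    obtain ⟨t0, hEC⟩ := hcon s σrr (fun t => Finset.singleton_nonempty _) fair_rr
    refine ⟨dynamics g s σrr t0, limit_stable fair_rr hEC, ?_⟩
    refine ⟨(List.range t0).map (fun m => ⟨(m + 1) % n, Nat.mod_lt _ hn⟩), ?_⟩
    rw [dyn_runW, applyL, List.map_map]
    rfl
  obtain ⟨sstar, hsstar⟩ := existsBiv hsi hVNE hab ha hb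
  have choice : ∀ s : {s : ∀ j, A j // Biv g s}, ∀ i : Fin n,
      ∃ w : List (Finset (Fin n)), (∀ S ∈ w, S.Nonempty) ∧ (∃ S ∈ w, i ∈ S) ∧
        Biv g (runW g w s.1) := fun s i => claimA hsi hVNE s.2 i
  let Wd : {s : ∀ j, A j // Biv g s} → Fin n → List (Finset (Fin n)) :=
    fun s i => (choice s i).choose
  let ik : ℕ → Fin n := fun k => ⟨k % n, Nat.mod_lt _ hn⟩
  let seq : ℕ → {s : ∀ j, A j // Biv g s} := fun k =>
    Nat.rec (motive := fun _ => {s : ∀ j, A j // Biv g s}) ⟨sstar, hsstar⟩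
      (fun k sk => ⟨runW g (Wd sk (ik k)) sk.1, (choice sk (ik k)).choose_spec.2.2⟩) k
  let words : ℕ → List (Finset (Fin n)) := fun k => Wd (seq k) (ik k)
  have hw1 : ∀ k, ∀ S ∈ words k, S.Nonempty := fun k => (choice (seq k) (ik k)).choose_spec.1
  have hw2 : ∀ k, ∃ S ∈ words k, ik k ∈ S := fun k => (choice (seq k) (ik k)).choose_spec.2.1
  have hwlen : ∀ k, 1 ≤ (words k).length := by
    intro k
    obtain ⟨S, hS, _⟩ := hw2 k
    calc 1 = [S].length := rfl
    _ ≤ _ := List.Sublist.length_le (List.singleton_sublist.2 hS)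
  have hseq : ∀ k, (seq (k + 1)).1 = runW g (words k) (seq k).1 := fun k => rfl
  let T : ℕ → ℕ := fun k => Nat.rec 0 (fun k Tk => Tk + (words k).length) k
  have hT0 : T 0 = 0 := rfl
  have hTs : ∀ k, T (k + 1) = T k + (words k).length := fun k => rfl
  have hTmono : Monotone T := monotone_nat_of_le_succ (fun k => by rw [hTs]; omega)
  have hTk : ∀ k, k ≤ T k := by
    intro k
    induction k with
    | zero => omega
    | succ k ih => have := hwlen k; rw [hTs]; omega
  have exK : ∀ p : ℕ, ∃ k, p < T (k + 1) := by
    intro p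
    exact ⟨p, by have := hTk (p + 1); omega⟩
  let K : ℕ → ℕ := fun p => Nat.find (exK p)
  have hK2 : ∀ p, p < T (K p + 1) := fun p => Nat.find_spec (exK p)
  have hK1 : ∀ p, T (K p) ≤ p := by
    intro p
    cases hKp : K p with
    | zero => omega
    | succ k =>
      have hlt : k < K p := hKp ▸ Nat.lt_succ_self k
      have h2 : ¬ p < T (k + 1) := Nat.find_min (exK p) hlt
      omega
  let σ : ℕ → Finset (Fin n) := fun t => match t with
    | 0 => Finset.univ
    | p + 1 => (words (K p)).get ⟨p - T (K p),
        by have h1 := hK1 p; have h2 := hK2 p; rw [hTs] at h2; omega⟩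
  have hσ : ∀ p, σ (p + 1) = (words (K p)).get ⟨p - T (K p),
      by have h1 := hK1 p; have h2 := hK2 p; rw [hTs] at h2; omega⟩ := fun p => rfl
  have σ_spec : ∀ k m (hm : m < (words k).length),
      σ (T k + m + 1) = (words k).get ⟨m, hm⟩ := by
    intro k m hm
    set p := T k + m with hp
    have e : K p = k := by
      rw [show K p = Nat.find (exK p) from rfl, Nat.find_eq_iff]
      constructor
      · rw [hTs]; omega
      · intro k' hk'
        have : T (k' + 1) ≤ T k := hTmono (show k' + 1 ≤ k by omega)
        omega
    rw [hσ p]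
    exact get_congr _ _ (congrArg words e) _ _ _ hm (by rw [e]; omega)
  have key1 : ∀ k, dynamics g sstar σ (T k) = (seq k).1 := by
    intro k
    induction k with
    | zero => rfl
    | succ k ih =>
      have inner : ∀ m, m ≤ (words k).length →
          dynamics g sstar σ (T k + m) = runW g ((words k).take m) (seq k).1 := by
        intro m
        induction m with
        | zero => intro _; rw [Nat.add_zero, ih]; rfl
        | succ m ihm =>
          intro hm
          have hmlt : m < (words k).length := by omega
          have h1 : dynamics g sstar σ (T k + m + 1)
              = Fstep g (σ (T k + m + 1)) (dynamics g sstar σ (T k + m)) :=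
            dyn_succ sstar σ (T k + m)
          rw [show T k + (m + 1) = T k + m + 1 by omega, h1, σ_spec k m hmlt,
            ihm (by omega), runW_take_step (g := g) (words k) m hmlt]
      have h2 := inner (words k).length le_rfl
      rw [hTs, h2, List.take_length, ← hseq]
  have hnonempty : ∀ t, (σ t).Nonempty := by
    intro t
    cases t with
    | zero =>
      haveI : Nonempty (Fin n) := ⟨⟨0, hn⟩⟩
      exact Finset.univ_nonempty
    | succ p =>
      rw [hσ p]
      exact hw1 (K p) _ (List.get_mem _ _)
  have hfair : Fair σ := by
    intro i N
    set k := i.val + n * N with hk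
    have hkN : N ≤ k := by
      have h1 : N ≤ n * N := Nat.le_mul_of_pos_left N hn
      omega
    have hik : ik k = i := hmodfin i N
    obtain ⟨S, hS, hiS⟩ := hw2 k
    rw [hik] at hiS
    obtain ⟨⟨m, hmlt⟩, hget⟩ := List.mem_iff_get.1 hS
    refine ⟨T k + m + 1, ?_, ?_⟩
    · have := hTk k; omega
    · rw [σ_spec k m hmlt, hget]; exact hiS
  obtain ⟨t0, hEC⟩ := hcon sstar σ hnonempty hfair
  have hstab : Stable g (dynamics g sstar σ t0) := limit_stable hfair hEC
  have hbiv : Biv g (dynamics g sstar σ t0) := by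
    have h1 : dynamics g sstar σ (T t0) = (seq t0).1 := key1 t0
    have h2 : dynamics g sstar σ (T t0) = dynamics g sstar σ t0 := hEC (T t0) (hTk t0)
    rw [← h2, h1]
    exact (seq t0).2
  obtain ⟨x, y, hx, hy, hxy⟩ := hbiv
  exact hxy ((val_stable hstab hx).trans (val_stable hstab hy).symm)
end

section
/- Fix k ≥ 1. Consider an interaction system with n nodes in which every node i has a deterministic, stationary, self-independent k-recall reaction function g_i : A^k → A_i. If there exist two distinct stable states (two distinct profiles a ≠ b with g_i(a,…,a) = a_i and g_i(b,…,b) = b_i for all i), then the system is not convergent: there exist an initial history in A^k and a fair schedule for which the dynamics is not eventually constant. -/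
namespace KRecall

variable {n k : ℕ} {A : Fin n → Type*}

/-- One step of the interaction dynamics on `(k+1)`-histories. -/
def stepF (g : ∀ i : Fin n, (Fin (k+1) → ∀ j, A j) → A i)
    (S : Finset (Fin n)) (h : Fin (k+1) → ∀ j, A j) : Fin (k+1) → ∀ j, A j :=
  fun m => if hm : (m : ℕ) < k then h ⟨(m : ℕ)+1, by omega⟩
    else fun i => if i ∈ S then g i h else h (Fin.last k) i

lemma stepF_last (g : ∀ i : Fin n, (Fin (k+1) → ∀ j, A j) → A i)
    (S : Finset (Fin n)) (h : Fin (k+1) → ∀ j, A j) :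
    stepF g S h (Fin.last k) = fun i => if i ∈ S then g i h else h (Fin.last k) i := by
  have : ¬ ((Fin.last k : ℕ) < k) := by simp
  simp only [stepF, dif_neg this]

/-- Run of the dynamics on histories. -/
def histF (g : ∀ i : Fin n, (Fin (k+1) → ∀ j, A j) → A i)
    (h0 : Fin (k+1) → ∀ j, A j) (τ : ℕ → Finset (Fin n)) : ℕ → Fin (k+1) → ∀ j, A j
  | 0 => h0
  | T+1 => stepF g (τ T) (histF g h0 τ T)

variable (g : ∀ i : Fin n, (Fin (k+1) → ∀ j, A j) → A i)

/-- `x` is an achievable limit from history `h0`. -/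
def InVal (h0 : Fin (k+1) → ∀ j, A j) (x : ∀ j, A j) : Prop :=
  ∃ τ : ℕ → Finset (Fin n), (∀ t, (τ t).Nonempty) ∧ Fair τ ∧
    ∃ T0, ∀ T, T0 ≤ T → histF g h0 τ T = fun _ => x

def stepRel (h h' : Fin (k+1) → ∀ j, A j) : Prop :=
  ∃ S : Finset (Fin n), S.Nonempty ∧ h' = stepF g S h

def Reach : (Fin (k+1) → ∀ j, A j) → (Fin (k+1) → ∀ j, A j) → Prop :=
  Relation.ReflTransGen (stepRel g)

def ReachAvoid (i : Fin n) : (Fin (k+1) → ∀ j, A j) → (Fin (k+1) → ∀ j, A j) → Prop :=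
  Relation.ReflTransGen (fun h h' => ∃ S : Finset (Fin n), S.Nonempty ∧ i ∉ S ∧ h' = stepF g S h)

def ReachAct (i : Fin n) (h h' : Fin (k+1) → ∀ j, A j) : Prop :=
  ∃ h1 S, Reach g h h1 ∧ i ∈ S ∧ Reach g (stepF g S h1) h'

def Bival (h : Fin (k+1) → ∀ j, A j) : Prop :=
  ∃ x y, x ≠ y ∧ InVal g h x ∧ InVal g h y

lemma reachAvoid_reach {i h h'} (hr : ReachAvoid g i h h') : Reach g h h' :=
  Relation.ReflTransGen.mono (r := fun h h' => ∃ S : Finset (Fin n), S.Nonempty ∧ i ∉ S ∧ h' = stepF g S h)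
    (p := stepRel g) (fun _ _ ⟨S, hS, _, he⟩ => ⟨S, hS, he⟩) _ _ hr

lemma hist_add (h0 : Fin (k+1) → ∀ j, A j) (τ : ℕ → Finset (Fin n)) (T0 T : ℕ) :
    histF g h0 τ (T0 + T) = histF g (histF g h0 τ T0) (fun t => τ (t + T0)) T := by
  induction T with
  | zero => rfl
  | succ T ih =>
      show histF g h0 τ (T0 + T + 1) = _
      rw [histF, ih, Nat.add_comm T0 T]; rfl

lemma step_inval {h h' : Fin (k+1) → ∀ j, A j} {S : Finset (Fin n)} (hS : S.Nonempty)
    (he : h' = stepF g S h) {x : ∀ j, A j} (hv : InVal g h' x) : InVal g h x := by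
  obtain ⟨τ, hne, hfair, T0, hlim⟩ := hv
  refine ⟨fun t => Nat.casesOn t S τ, ?_, ?_, T0 + 1, ?_⟩
  · intro t; cases t with
    | zero => exact hS
    | succ t => exact hne t
  · intro i N
    obtain ⟨t, ht, hi⟩ := hfair i N
    exact ⟨t + 1, by omega, hi⟩
  · have key : ∀ T, histF g h (fun t => Nat.casesOn t S τ) (T + 1) = histF g h' τ T := by
      intro T
      induction T with
      | zero => show stepF g S h = h'; exact he.symm
      | succ T ih =>
          show stepF g (τ T) (histF g h (fun t => Nat.casesOn t S τ) (T + 1)) = _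
          rw [ih]; rfl
    intro T hT
    obtain ⟨T', rfl⟩ : ∃ T', T = T' + 1 := ⟨T - 1, by omega⟩
    rw [key]
    exact hlim T' (by omega)

lemma reach_inval {h h' : Fin (k+1) → ∀ j, A j} (hr : Reach g h h') {x : ∀ j, A j}
    (hv : InVal g h' x) : InVal g h x := by
  induction hr with
  | refl => exact hv
  | tail _ hstep ih =>
      obtain ⟨S, hS, he⟩ := hstep
      exact ih (step_inval g hS he hv)

lemma reach_iter (i : Fin n) (h : Fin (k+1) → ∀ j, A j) (r : ℕ) :
    Reach g h ((stepF g {i})^[r] h) := by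
  induction r with
  | zero => exact Relation.ReflTransGen.refl
  | succ r ih =>
      rw [Function.iterate_succ_apply']
      exact ih.tail ⟨{i}, Finset.singleton_nonempty i, rfl⟩


section Const

lemma stepF_const {x : ∀ j, A j} (hx : ∀ i, g i (fun _ => x) = x i) (S : Finset (Fin n)) :
    stepF g S (fun _ => x) = fun _ => x := by
  funext m
  by_cases hm : (m : ℕ) < k
  · simp [stepF, hm]
  · simp only [stepF, dif_neg hm]
    funext i
    by_cases hi : i ∈ S
    · simp [hi, hx]
    · simp [hi]

lemma histF_const {x : ∀ j, A j} (hx : ∀ i, g i (fun _ => x) = x i)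
    (τ : ℕ → Finset (Fin n)) : ∀ T, histF g (fun _ => x) τ T = fun _ => x := by
  intro T
  induction T with
  | zero => rfl
  | succ T ih => rw [histF, ih, stepF_const g hx]

lemma inval_const_self {x : ∀ j, A j} (hx : ∀ i, g i (fun _ => x) = x i) (hn : 0 < n) :
    InVal g (fun _ => x) x := by
  have : Nonempty (Fin n) := ⟨⟨0, hn⟩⟩
  refine ⟨fun _ => Finset.univ, fun _ => Finset.univ_nonempty, ?_, 0, ?_⟩
  · intro i N; exact ⟨N, le_refl _, Finset.mem_univ i⟩
  · intro T _; exact histF_const g hx _ T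

lemma inval_const_eq {x y : ∀ j, A j} (hx : ∀ i, g i (fun _ => x) = x i)
    (hv : InVal g (fun _ => x) y) : y = x := by
  obtain ⟨τ, _, _, T0, hlim⟩ := hv
  have h1 := hlim T0 (le_refl _)
  have h2 := histF_const g hx τ T0
  have := h1.symm.trans h2
  exact congrFun this 0

end Const

/-- If the run is eventually constant, eventually the history is a constant profile. -/
lemma ec_limit (h0 : Fin (k+1) → ∀ j, A j) (τ : ℕ → Finset (Fin n))
    (hec : EventuallyConstant (histF g h0 τ)) :
    ∃ x T0, ∀ T, T0 ≤ T → histF g h0 τ T = fun _ => x := by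
  obtain ⟨T0, hT0⟩ := hec
  set x := histF g h0 τ T0 (Fin.last k) with hxdef
  have key : ∀ d, ∀ m : Fin (k+1), (m : ℕ) + d = k → histF g h0 τ T0 m = x := by
    intro d
    induction d with
    | zero =>
        intro m hm
        have : m = Fin.last k := by
          apply Fin.ext; simpa using hm
        rw [this]
    | succ d ih =>
        intro m hm
        have hmk : (m : ℕ) < k := by omega
        have hstep : histF g h0 τ (T0 + 1) = histF g h0 τ T0 := hT0 (T0+1) (by omega)
        have : histF g h0 τ (T0 + 1) m = histF g h0 τ T0 ⟨(m : ℕ)+1, by omega⟩ := by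
          show stepF g (τ T0) (histF g h0 τ T0) m = _
          simp [stepF, hmk]
        rw [hstep] at this
        rw [this]
        exact ih ⟨(m : ℕ)+1, by omega⟩ (by simp; omega)
  refine ⟨x, T0, fun T hT => ?_⟩
  rw [hT0 T hT]
  funext m
  exact key (k - (m : ℕ)) m (by omega)

/-- Under the convergence hypothesis, every history has some achievable limit. -/
lemma inval_nonempty
    (HC : ∀ (h0 : Fin (k+1) → ∀ j, A j) (τ : ℕ → Finset (Fin n)),
      (∀ t, (τ t).Nonempty) → Fair τ → EventuallyConstant (histF g h0 τ))
    (hn : 0 < n) (h0 : Fin (k+1) → ∀ j, A j) : ∃ x, InVal g h0 x := by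
  have : Nonempty (Fin n) := ⟨⟨0, hn⟩⟩
  have hne : ∀ t : ℕ, (Finset.univ : Finset (Fin n)).Nonempty := fun _ => Finset.univ_nonempty
  have hfair : Fair (fun _ : ℕ => (Finset.univ : Finset (Fin n))) :=
    fun i N => ⟨N, le_refl _, Finset.mem_univ i⟩
  obtain ⟨x, T0, hlim⟩ := ec_limit g h0 _ (HC h0 _ hne hfair)
  exact ⟨x, _, hne, hfair, T0, hlim⟩

/-- Merging lemma: two histories that agree away from column `i` become equal
after `k+1` activations of `i` alone. -/
lemma merge (hsi : ∀ i : Fin n, ∀ h h' : Fin (k+1) → ∀ j, A j,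
      (∀ (m : Fin (k+1)) (j : Fin n), j ≠ i → h m j = h' m j) → g i h = g i h')
    (i : Fin n) (h1 h2 : Fin (k+1) → ∀ j, A j)
    (hag : ∀ (m : Fin (k+1)) (j : Fin n), j ≠ i → h1 m j = h2 m j) :
    (stepF g {i})^[k+1] h1 = (stepF g {i})^[k+1] h2 := by
  have key : ∀ r, (∀ (m : Fin (k+1)) (j : Fin n), j ≠ i →
        (stepF g {i})^[r] h1 m j = (stepF g {i})^[r] h2 m j) ∧
      (∀ m : Fin (k+1), k + 1 ≤ (m : ℕ) + r →
        (stepF g {i})^[r] h1 m = (stepF g {i})^[r] h2 m) := by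
    intro r
    induction r with
    | zero =>
        refine ⟨hag, fun m hm => ?_⟩
        exfalso; omega
    | succ r ih =>
        obtain ⟨ih1, ih2⟩ := ih
        rw [Function.iterate_succ_apply', Function.iterate_succ_apply']
        set u1 := (stepF g {i})^[r] h1
        set u2 := (stepF g {i})^[r] h2
        have hgi : g i u1 = g i u2 := hsi i u1 u2 ih1
        constructor
        · intro m j hj
          by_cases hm : (m : ℕ) < k
          · simp only [stepF, dif_pos hm]
            exact ih1 _ j hj
          · simp only [stepF, dif_neg hm]
            have : j ∉ ({i} : Finset (Fin n)) := by simp [hj]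
            simp only [if_neg this]
            exact ih1 _ j hj
        · intro m hm
          by_cases hmk : (m : ℕ) < k
          · simp only [stepF, dif_pos hmk]
            exact ih2 ⟨(m : ℕ)+1, by omega⟩ (by simp; omega)
          · simp only [stepF, dif_neg hmk]
            funext i'
            by_cases hi' : i' ∈ ({i} : Finset (Fin n))
            · have : i' = i := Finset.mem_singleton.mp hi'
              subst this
              simp only [if_pos hi']
              exact hgi
            · simp only [if_neg hi']
              have : i' ≠ i := by simpa using hi'
              exact ih1 _ i' this
  funext m
  exact (key (k+1)).2 m (by omega)

/-- Two one-step successors built from `S` and `insert j S` agree away from column `j`. -/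
lemma step_agree (S : Finset (Fin n)) (j : Fin n) (h : Fin (k+1) → ∀ j, A j) :
    ∀ (m : Fin (k+1)) (p : Fin n), p ≠ j →
      stepF g S h m p = stepF g (insert j S) h m p := by
  intro m p hp
  by_cases hm : (m : ℕ) < k
  · simp [stepF, hm]
  · simp only [stepF, dif_neg hm]
    have : p ∈ insert j S ↔ p ∈ S := by
      simp [Finset.mem_insert, hp]
    by_cases hpS : p ∈ S
    · rw [if_pos hpS, if_pos (this.mpr hpS)]
    · rw [if_neg hpS, if_neg (fun hc => hpS (this.mp hc))]


section Main

variable (HC : ∀ (h0 : Fin (k+1) → ∀ j, A j) (τ : ℕ → Finset (Fin n)),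
      (∀ t, (τ t).Nonempty) → Fair τ → EventuallyConstant (histF g h0 τ))
  (hn : 0 < n)
  (hsi : ∀ i : Fin n, ∀ h h' : Fin (k+1) → ∀ j, A j,
      (∀ (m : Fin (k+1)) (j : Fin n), j ≠ i → h m j = h' m j) → g i h = g i h')

include HC hn hsi

/-- Lemma A: with two distinct stable states there is a bivalent history. -/
lemma exists_bival (a b : ∀ j, A j) (hab : a ≠ b)
    (ha : ∀ i, g i (fun _ => a) = a i) (hb : ∀ i, g i (fun _ => b) = b i) :
    ∃ h, Bival g h := by
  by_contra hno
  push_neg at hno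
  have uniq : ∀ h x y, InVal g h x → InVal g h y → x = y := by
    intro h x y hx hy
    by_contra hne
    exact hno h ⟨x, y, hne, hx, hy⟩
  set c : ℕ → Fin (k+1) → ∀ j, A j := fun r => fun _ i => if (i : ℕ) < r then b i else a i with hc
  have claim : ∀ r, r ≤ n → InVal g (c r) a := by
    intro r
    induction r with
    | zero =>
        intro _
        have : c 0 = fun _ => a := by
          funext m i; simp [hc]
        rw [this]
        exact inval_const_self g ha hn
    | succ r ih =>
        intro hr
        have hIH := ih (by omega)
        set i : Fin n := ⟨r, by omega⟩ with hi
        have hag : ∀ (m : Fin (k+1)) (j : Fin n), j ≠ i → c r m j = c (r+1) m j := by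
          intro m j hj
          have hjr : (j : ℕ) ≠ r := fun hc' => hj (Fin.ext hc')
          simp only [hc]
          by_cases h1 : (j : ℕ) < r
          · rw [if_pos h1, if_pos (by omega)]
          · rw [if_neg h1, if_neg (by omega)]
        have hmg : (stepF g {i})^[k+1] (c r) = (stepF g {i})^[k+1] (c (r+1)) :=
          merge g hsi i _ _ hag
        obtain ⟨z, hz⟩ := inval_nonempty g HC hn ((stepF g {i})^[k+1] (c r))
        have hz1 : InVal g (c r) z := reach_inval g (reach_iter g i _ (k+1)) hz
        have hz2 : InVal g (c (r+1)) z := reach_inval g (reach_iter g i _ (k+1)) (hmg ▸ hz)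
        have : z = a := uniq _ _ _ hz1 hIH
        rwa [this] at hz2
  have hcn : c n = fun _ => b := by
    funext m i; simp [hc, i.isLt]
  have : InVal g (fun _ => b) a := hcn ▸ claim n le_rfl
  exact hab (inval_const_eq g hb this)

/-- Lemma B: from a bivalent history one can reach, via a route that activates `i`,
another bivalent history. -/
lemma bival_ext (h : Fin (k+1) → ∀ j, A j) (hbv : Bival g h) (i : Fin n) :
    ∃ h', ReachAct g i h h' ∧ Bival g h' := by
  by_contra hnex
  push_neg at hnex
  have hbad : ∀ h', ReachAct g i h h' → ∀ x y, InVal g h' x → InVal g h' y → x = y := by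
    intro h' hra x y hx hy
    by_contra hne
    exact hnex h' hra ⟨x, y, hne, hx, hy⟩
  -- (b) values after a step activating `i` agree with the `univ`-step value
  have hCl : ∀ (h' : Fin (k+1) → ∀ j, A j), ReachAvoid g i h h' →
      ∀ d (S : Finset (Fin n)), (Finset.univ \ S).card = d → i ∈ S →
      ∀ x y, InVal g (stepF g S h') x → InVal g (stepF g Finset.univ h') y → x = y := by
    intro h' hR d
    induction d with
    | zero =>
        intro S hcard hiS x y hx hy
        have hSu : S = Finset.univ := by
          have h1 : Finset.univ \ S = ∅ := Finset.card_eq_zero.mp hcard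
          exact Finset.univ_subset_iff.mp (Finset.sdiff_eq_empty_iff_subset.mp h1)
        subst hSu
        exact hbad _ ⟨h', _, reachAvoid_reach g hR, hiS, .refl⟩ x y hx hy
    | succ d ih =>
        intro S hcard hiS x y hx hy
        have hne2 : (Finset.univ \ S).Nonempty := Finset.card_pos.mp (by omega)
        obtain ⟨j, hj⟩ := hne2
        have hjS : j ∉ S := (Finset.mem_sdiff.mp hj).2
        have hmg : (stepF g {j})^[k+1] (stepF g S h')
            = (stepF g {j})^[k+1] (stepF g (insert j S) h') :=
          merge g hsi j _ _ (step_agree g S j h')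
        obtain ⟨z, hz⟩ := inval_nonempty g HC hn ((stepF g {j})^[k+1] (stepF g S h'))
        have hz1 : InVal g (stepF g S h') z := reach_inval g (reach_iter g j _ (k+1)) hz
        have hz2 : InVal g (stepF g (insert j S) h') z :=
          reach_inval g (reach_iter g j _ (k+1)) (hmg ▸ hz)
        have hxz : x = z := hbad _ ⟨h', S, reachAvoid_reach g hR, hiS, .refl⟩ x z hx hz1
        have hcard' : (Finset.univ \ insert j S).card = d := by
          rw [Finset.sdiff_insert, Finset.card_erase_of_mem hj, hcard]
          omega
        have hzy := ih (insert j S) hcard' (Finset.mem_insert_of_mem hiS) z y hz2 hy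
        exact hxz.trans hzy
  -- (b2) any two steps activating `i` have the same value
  have hb2 : ∀ (h' : Fin (k+1) → ∀ j, A j), ReachAvoid g i h h' →
      ∀ (S1 S2 : Finset (Fin n)), i ∈ S1 → i ∈ S2 →
      ∀ x y, InVal g (stepF g S1 h') x → InVal g (stepF g S2 h') y → x = y := by
    intro h' hR S1 S2 h1 h2 x y hx hy
    obtain ⟨u, hu⟩ := inval_nonempty g HC hn (stepF g Finset.univ h')
    have e1 := hCl h' hR _ S1 rfl h1 x u hx hu
    have e2 := hCl h' hR _ S2 rfl h2 y u hy hu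
    rw [e1, e2]
  -- (c)
  have hCc : ∀ (h' : Fin (k+1) → ∀ j, A j), ReachAvoid g i h h' →
      ∀ S : Finset (Fin n), S.Nonempty → i ∉ S →
      ∀ x y, InVal g (stepF g {i} (stepF g S h')) x → InVal g (stepF g {i} h') y → x = y := by
    intro h' hR S hSne hiS x y hx hy
    have hmg : (stepF g {i})^[k+1] (stepF g S h')
        = (stepF g {i})^[k+1] (stepF g (insert i S) h') :=
      merge g hsi i _ _ (step_agree g S i h')
    obtain ⟨z, hz⟩ := inval_nonempty g HC hn ((stepF g {i})^[k+1] (stepF g S h'))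
    have hit : (stepF g {i})^[k+1] (stepF g S h')
        = (stepF g {i})^[k] (stepF g {i} (stepF g S h')) := by
      rw [← Function.iterate_succ_apply]
    have hz1 : InVal g (stepF g {i} (stepF g S h')) z :=
      reach_inval g (reach_iter g i _ k) (hit ▸ hz)
    have hz2 : InVal g (stepF g (insert i S) h') z :=
      reach_inval g (reach_iter g i _ (k+1)) (hmg ▸ hz)
    have hrS : Reach g h (stepF g S h') := (reachAvoid_reach g hR).tail ⟨S, hSne, rfl⟩
    have hxz : x = z :=
      hbad _ ⟨stepF g S h', {i}, hrS, Finset.mem_singleton_self i, .refl⟩ x z hx hz1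
    have hzy : z = y := hb2 h' hR (insert i S) {i} (Finset.mem_insert_self i S)
      (Finset.mem_singleton_self i) z y hz2 hy
    exact hxz.trans hzy
  -- (d)
  have hCd : ∀ (h' : Fin (k+1) → ∀ j, A j), ReachAvoid g i h h' →
      ∀ x y, InVal g (stepF g {i} h') x → InVal g (stepF g {i} h) y → x = y := by
    intro h' hR
    induction hR with
    | refl =>
        intro x y hx hy
        exact hbad _ ⟨h, {i}, .refl, Finset.mem_singleton_self i, .refl⟩ x y hx hy
    | @tail h1 h2 hR1 hstep ih =>
        obtain ⟨S, hSne, hiS, rfl⟩ := hstep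
        intro x y hx hy
        obtain ⟨z, hz⟩ := inval_nonempty g HC hn (stepF g {i} h1)
        have hxz := hCc h1 hR1 S hSne hiS x z hx hz
        exact hxz.trans (ih z y hz hy)
  -- (e)
  obtain ⟨x, y, hxy, hx, hy⟩ := hbv
  obtain ⟨w0, hw0⟩ := inval_nonempty g HC hn (stepF g {i} h)
  have main : ∀ z, InVal g h z → z = w0 := by
    intro z hz
    obtain ⟨τ, hne, hfair, T0, hlim⟩ := hz
    set tstar := Nat.find (hfair i 0) with htstar
    have hmem : i ∈ τ tstar := (Nat.find_spec (hfair i 0)).2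
    have hmin : ∀ t, t < tstar → i ∉ τ t :=
      fun t ht hc' => Nat.find_min (hfair i 0) ht ⟨Nat.zero_le t, hc'⟩
    have havoid : ∀ T, T ≤ tstar → ReachAvoid g i h (histF g h τ T) := by
      intro T
      induction T with
      | zero => intro _; exact .refl
      | succ T ihT =>
          intro hT
          exact (ihT (by omega)).tail ⟨τ T, hne T, hmin T (by omega), rfl⟩
    have hshift : InVal g (histF g h τ (tstar+1)) z := by
      refine ⟨fun t => τ (t + (tstar+1)), fun t => hne _, ?_, T0, ?_⟩
      · intro i' N
        obtain ⟨t, ht, hi'⟩ := hfair i' (N + (tstar+1))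
        refine ⟨t - (tstar+1), by omega, ?_⟩
        have he : t - (tstar+1) + (tstar+1) = t := by omega
        show i' ∈ τ (t - (tstar+1) + (tstar+1))
        rw [he]; exact hi'
      · intro T hT
        rw [← hist_add g h τ (tstar+1) T]
        exact hlim _ (by omega)
    have hc' : histF g h τ (tstar+1) = stepF g (τ tstar) (histF g h τ tstar) := rfl
    obtain ⟨v, hv⟩ := inval_nonempty g HC hn (stepF g {i} (histF g h τ tstar))
    have hz_v : z = v := hb2 _ (havoid tstar le_rfl) (τ tstar) {i} hmem
      (Finset.mem_singleton_self i) z v (hc' ▸ hshift) hv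
    have hv_w : v = w0 := hCd _ (havoid tstar le_rfl) v w0 hv hw0
    exact hz_v.trans hv_w
  exact hxy ((main x hx).trans (main y hy).symm)

end Main

section Lists

lemma reach_list {h h' : Fin (k+1) → ∀ j, A j} (hr : Reach g h h') :
    ∃ L : List (Finset (Fin n)), (∀ S ∈ L, S.Nonempty) ∧
      h' = L.foldl (fun hh S => stepF g S hh) h := by
  induction hr with
  | refl => exact ⟨[], by simp, rfl⟩
  | tail hr1 hstep ih =>
      obtain ⟨L, hL, hfold⟩ := ih
      obtain ⟨S, hS, rfl⟩ := hstep
      refine ⟨L ++ [S], ?_, ?_⟩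
      · intro S' hS'
        rcases List.mem_append.mp hS' with h1 | h2
        · exact hL _ h1
        · rw [List.mem_singleton.mp h2]; exact hS
      · rw [List.foldl_append, ← hfold]
        rfl

lemma reachAct_list {i : Fin n} {h h' : Fin (k+1) → ∀ j, A j} (hr : ReachAct g i h h') :
    ∃ L : List (Finset (Fin n)), L ≠ [] ∧ (∀ S ∈ L, S.Nonempty) ∧ (∃ S ∈ L, i ∈ S) ∧
      h' = L.foldl (fun hh S => stepF g S hh) h := by
  obtain ⟨h1, S, hr1, hiS, hr2⟩ := hr
  obtain ⟨L1, hL1, hf1⟩ := reach_list g hr1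
  obtain ⟨L2, hL2, hf2⟩ := reach_list g hr2
  refine ⟨L1 ++ S :: L2, by simp, ?_, ⟨S, by simp, hiS⟩, ?_⟩
  · intro S' hS'
    rcases List.mem_append.mp hS' with h1' | h2'
    · exact hL1 _ h1'
    · rcases List.mem_cons.mp h2' with rfl | h3
      · exact ⟨i, hiS⟩
      · exact hL2 _ h3
  · rw [List.foldl_append, ← hf1, List.foldl_cons]
    exact hf2

end Lists

section Sched

variable {LL : ℕ → List (Finset (Fin n))}

/-- Cumulative lengths of the blocks. -/
def Tsum (LL : ℕ → List (Finset (Fin n))) : ℕ → ℕ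
  | 0 => 0
  | m+1 => Tsum LL m + (LL m).length

lemma Tsum_lt (hlen : ∀ m, LL m ≠ []) (m : ℕ) : Tsum LL m < Tsum LL (m+1) := by
  have := List.length_pos_iff.mpr (hlen m)
  show Tsum LL m < Tsum LL m + (LL m).length
  omega

lemma Tsum_strictMono (hlen : ∀ m, LL m ≠ []) : StrictMono (Tsum LL) :=
  strictMono_nat_of_lt_succ (Tsum_lt hlen)

lemma le_Tsum (hlen : ∀ m, LL m ≠ []) (m : ℕ) : m ≤ Tsum LL m := by
  induction m with
  | zero => exact Nat.zero_le _
  | succ m ih => have := Tsum_lt hlen m; omega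

lemma Tsum_ex (hlen : ∀ m, LL m ≠ []) (t : ℕ) : ∃ m, t < Tsum LL (m+1) :=
  ⟨t, lt_of_lt_of_le (Nat.lt_succ_self t) (le_Tsum hlen (t+1))⟩

/-- The block index of time `t`. -/
noncomputable def blkF (hlen : ∀ m, LL m ≠ []) (t : ℕ) : ℕ :=
  Nat.find (Tsum_ex hlen t)

lemma blkF_lt (hlen : ∀ m, LL m ≠ []) (t : ℕ) : t < Tsum LL (blkF hlen t + 1) :=
  Nat.find_spec (Tsum_ex hlen t)

lemma Tsum_blkF_le (hlen : ∀ m, LL m ≠ []) (t : ℕ) : Tsum LL (blkF hlen t) ≤ t := by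
  by_contra hlt
  push_neg at hlt
  have h0 : blkF hlen t ≠ 0 := by
    intro h0
    rw [h0] at hlt
    exact absurd hlt (by show ¬ t < 0; omega)
  have hm : blkF hlen t - 1 < blkF hlen t := by omega
  have hmin := Nat.find_min (Tsum_ex hlen t) hm
  have he : blkF hlen t - 1 + 1 = blkF hlen t := by omega
  rw [he] at hmin
  exact hmin hlt

lemma blkF_eq (hlen : ∀ m, LL m ≠ []) {t m : ℕ} (h1 : Tsum LL m ≤ t)
    (h2 : t < Tsum LL (m+1)) : blkF hlen t = m := by
  have hle : blkF hlen t ≤ m := Nat.find_le h2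
  by_contra hne
  have hlt : blkF hlen t < m := by omega
  have : Tsum LL (blkF hlen t + 1) ≤ Tsum LL m := (Tsum_strictMono hlen).monotone (by omega)
  have := blkF_lt hlen t
  omega

/-- The concatenated schedule. -/
noncomputable def schedF (hlen : ∀ m, LL m ≠ []) (t : ℕ) : Finset (Fin n) :=
  (LL (blkF hlen t)).getD (t - Tsum LL (blkF hlen t)) ∅

lemma schedF_eq (hlen : ∀ m, LL m ≠ []) (m j : ℕ) (hj : j < (LL m).length) :
    schedF hlen (Tsum LL m + j) = (LL m).get ⟨j, hj⟩ := by
  have hb : blkF hlen (Tsum LL m + j) = m :=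
    blkF_eq hlen (by omega) (by show Tsum LL m + j < Tsum LL m + (LL m).length; omega)
  rw [schedF, hb]
  have : Tsum LL m + j - Tsum LL m = j := by omega
  rw [this]
  exact List.getD_eq_getElem _ _ hj

lemma schedF_mem (hlen : ∀ m, LL m ≠ []) (t : ℕ) : schedF hlen t ∈ LL (blkF hlen t) := by
  rw [schedF]
  have hlt : t - Tsum LL (blkF hlen t) < (LL (blkF hlen t)).length := by
    have h1 := Tsum_blkF_le hlen t
    have h2 := blkF_lt hlen t
    have : Tsum LL (blkF hlen t + 1) = Tsum LL (blkF hlen t) + (LL (blkF hlen t)).length := rfl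
    omega
  rw [List.getD_eq_getElem (hn := hlt)]
  exact List.getElem_mem _

/-- Running the concatenated schedule visits every checkpoint. -/
lemma hist_sched (hlen : ∀ m, LL m ≠ []) (h0 : Fin (k+1) → ∀ j, A j)
    (cs : ℕ → Fin (k+1) → ∀ j, A j) (hcs0 : cs 0 = h0)
    (hfold : ∀ m, cs (m+1) = (LL m).foldl (fun hh S => stepF g S hh) (cs m)) :
    ∀ m, histF g h0 (schedF hlen) (Tsum LL m) = cs m := by
  intro m
  induction m with
  | zero => exact hcs0.symm
  | succ m ih =>
      have inner : ∀ j, j ≤ (LL m).length →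
          histF g h0 (schedF hlen) (Tsum LL m + j)
            = ((LL m).take j).foldl (fun hh S => stepF g S hh) (cs m) := by
        intro j
        induction j with
        | zero => intro _; simpa using ih
        | succ j ihj =>
            intro hj
            have hjl : j < (LL m).length := by omega
            have : Tsum LL m + (j+1) = (Tsum LL m + j) + 1 := by omega
            rw [this]
            show stepF g (schedF hlen (Tsum LL m + j)) (histF g h0 (schedF hlen) (Tsum LL m + j)) = _
            rw [ihj (by omega), schedF_eq hlen m j hjl]
            rw [← List.take_concat_get hjl, List.concat_eq_append, List.foldl_append]
            rfl
      have := inner (LL m).length le_rfl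
      rw [List.take_length] at this
      rw [hfold m]
      show histF g h0 (schedF hlen) (Tsum LL m + (LL m).length) = _
      exact this

end Sched

/-- The heart of the proof: if every fair run of the history dynamics converges,
then there cannot be two distinct stable states. -/
lemma main_false
    (HC : ∀ (h0 : Fin (k+1) → ∀ j, A j) (τ : ℕ → Finset (Fin n)),
      (∀ t, (τ t).Nonempty) → Fair τ → EventuallyConstant (histF g h0 τ))
    (hsi : ∀ i : Fin n, ∀ h h' : Fin (k+1) → ∀ j, A j,
      (∀ (m : Fin (k+1)) (j : Fin n), j ≠ i → h m j = h' m j) → g i h = g i h')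
    (a b : ∀ j, A j) (hab : a ≠ b)
    (ha : ∀ i, g i (fun _ => a) = a i) (hb : ∀ i, g i (fun _ => b) = b i) : False := by
  have hn : 0 < n := by
    rcases Nat.eq_zero_or_pos n with rfl | h
    · exact (hab (funext fun j => j.elim0)).elim
    · exact h
  obtain ⟨h0, hb0⟩ := exists_bival g HC hn hsi a b hab ha hb
  let node : ℕ → Fin n := fun m => ⟨m % n, Nat.mod_lt m hn⟩
  let F : ℕ → {h : Fin (k+1) → ∀ j, A j // Bival g h} → {h : Fin (k+1) → ∀ j, A j // Bival g h} :=
    fun m p => ⟨(bival_ext g HC hn hsi p.1 p.2 (node m)).choose,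
                ((bival_ext g HC hn hsi p.1 p.2 (node m)).choose_spec).2⟩
  let cs : ℕ → {h : Fin (k+1) → ∀ j, A j // Bival g h} :=
    fun m => Nat.rec ⟨h0, hb0⟩ F m
  have hra : ∀ m, ReachAct g (node m) (cs m).1 (cs (m+1)).1 :=
    fun m => ((bival_ext g HC hn hsi (cs m).1 (cs m).2 (node m)).choose_spec).1
  let LL : ℕ → List (Finset (Fin n)) := fun m => (reachAct_list g (hra m)).choose
  have hLL := fun m => (reachAct_list g (hra m)).choose_spec
  have hlen : ∀ m, LL m ≠ [] := fun m => (hLL m).1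
  have hne : ∀ m, ∀ S ∈ LL m, S.Nonempty := fun m => (hLL m).2.1
  have hact : ∀ m, ∃ S ∈ LL m, node m ∈ S := fun m => (hLL m).2.2.1
  have hfold : ∀ m, (cs (m+1)).1 = (LL m).foldl (fun hh S => stepF g S hh) (cs m).1 :=
    fun m => (hLL m).2.2.2
  have hσne : ∀ t, (schedF hlen t).Nonempty := fun t => hne _ _ (schedF_mem hlen t)
  have hfair : Fair (schedF hlen) := by
    intro i N
    set m := (i : ℕ) + N * n with hm
    have hnode : node m = i := by
      apply Fin.ext
      show ((i : ℕ) + N * n) % n = (i : ℕ)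
      rw [Nat.add_mul_mod_self_right]
      exact Nat.mod_eq_of_lt i.isLt
    obtain ⟨S, hSmem, hiS⟩ := hact m
    rw [hnode] at hiS
    obtain ⟨jf, hjf⟩ := List.mem_iff_get.mp hSmem
    refine ⟨Tsum LL m + (jf : ℕ), ?_, ?_⟩
    · have h1 : m ≤ Tsum LL m := le_Tsum hlen m
      have h2 : N ≤ N * n := Nat.le_mul_of_pos_right N hn
      omega
    · rw [schedF_eq hlen m (jf : ℕ) jf.isLt]
      have : ((LL m).get ⟨(jf : ℕ), jf.isLt⟩ : Finset (Fin n)) = S := by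
        rw [Fin.eta]; exact hjf
      rw [this]
      exact hiS
  have hrun : ∀ m, histF g h0 (schedF hlen) (Tsum LL m) = (cs m).1 :=
    hist_sched g hlen h0 (fun m => (cs m).1) rfl hfold
  obtain ⟨x, T0, hlim⟩ := ec_limit g h0 _ (HC h0 _ hσne hfair)
  have hxstable : ∀ i, g i (fun _ => x) = x i := by
    intro i
    obtain ⟨t, ht, hit⟩ := hfair i T0
    have h1 : histF g h0 (schedF hlen) (t+1) = fun _ => x := hlim (t+1) (by omega)
    have h2 : histF g h0 (schedF hlen) t = fun _ => x := hlim t ht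
    have h3 : histF g h0 (schedF hlen) (t+1)
        = stepF g (schedF hlen t) (fun _ => x) := by
      show stepF g (schedF hlen t) (histF g h0 (schedF hlen) t) = _
      rw [h2]
    have h4 := congrFun (h3.symm.trans h1) (Fin.last k)
    rw [stepF_last] at h4
    have h5 := congrFun h4 i
    rw [if_pos hit] at h5
    exact h5
  have hTm : T0 ≤ Tsum LL T0 := le_Tsum hlen T0
  have hconst : (cs T0).1 = fun _ => x := by rw [← hrun T0]; exact hlim _ hTm
  obtain ⟨p, q, hpq, hp, hq⟩ := (cs T0).2
  rw [hconst] at hp hq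
  exact hpq ((inval_const_eq g hxstable hp).trans (inval_const_eq g hxstable hq).symm)

section Package

variable (h0 : Fin (k+1) → ∀ j, A j) (τ : ℕ → Finset (Fin n))

/-- The flattened trajectory associated with a history run. -/
def sFun : ℕ → ∀ j, A j :=
  fun t => histF g h0 τ (t + 1 - (k+1))
    ⟨min t k, Nat.lt_succ_of_le (Nat.min_le_right _ _)⟩

/-- The shifted schedule. -/
def σFun : ℕ → Finset (Fin n) :=
  fun t => if t < k+1 then Finset.univ else τ (t - (k+1))

lemma hist_cast {T1 T2 : ℕ} {m1 m2 : Fin (k+1)} (hT : T1 = T2) (hm : m1 = m2) :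
    histF g h0 τ T1 m1 = histF g h0 τ T2 m2 := by
  subst hT; subst hm; rfl

lemma sFun_hist : ∀ T (m : Fin (k+1)), histF g h0 τ T m = sFun g h0 τ (T + (m : ℕ)) := by
  intro T
  induction T with
  | zero =>
      intro m
      show histF g h0 τ 0 m = histF g h0 τ (0 + (m:ℕ) + 1 - (k+1)) _
      exact hist_cast g h0 τ (by omega) (by apply Fin.ext; show (m:ℕ) = min (0 + (m:ℕ)) k; omega)
  | succ T ih =>
      intro m
      by_cases hm : (m : ℕ) < k
      · have lhs : histF g h0 τ (T+1) m = histF g h0 τ T ⟨(m:ℕ)+1, by omega⟩ := by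
          show stepF g (τ T) (histF g h0 τ T) m = _
          simp only [stepF, dif_pos hm]
        rw [lhs, ih ⟨(m:ℕ)+1, by omega⟩]
        show histF g h0 τ (T + ((m:ℕ)+1) + 1 - (k+1)) _ = histF g h0 τ ((T+1) + (m:ℕ) + 1 - (k+1)) _
        exact hist_cast g h0 τ (by omega)
          (by apply Fin.ext; show min (T + ((m:ℕ)+1)) k = min ((T+1) + (m:ℕ)) k; omega)
      · have hmk : (m : ℕ) = k := by have := m.isLt; omega
        show _ = histF g h0 τ ((T+1) + (m:ℕ) + 1 - (k+1)) _
        exact (hist_cast g h0 τ (by omega)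
          (by apply Fin.ext; show min ((T+1) + (m:ℕ)) k = (m:ℕ); omega)).symm

lemma package (hn : 0 < n) (hτne : ∀ t, (τ t).Nonempty) (hτfair : Fair τ)
    (hnec : ¬ EventuallyConstant (histF g h0 τ)) :
    ∃ (s0 : Fin (k+1) → ∀ j, A j) (σ : ℕ → Finset (Fin n)) (s : ℕ → ∀ j, A j),
      (∀ t, (σ t).Nonempty) ∧ Fair σ ∧
      (∀ m : Fin (k+1), s (m : ℕ) = s0 m) ∧
      (∀ t : ℕ, k+1 ≤ t → ∀ i : Fin n,
        (i ∈ σ t → s t i = g i (fun m : Fin (k+1) => s (t - (k+1) + (m : ℕ)))) ∧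
        (i ∉ σ t → s t i = s (t - 1) i)) ∧
      ¬ EventuallyConstant s := by
  have : Nonempty (Fin n) := ⟨⟨0, hn⟩⟩
  refine ⟨h0, σFun (k := k) τ, sFun g h0 τ, ?_, ?_, ?_, ?_, ?_⟩
  · intro t
    rw [σFun]
    by_cases ht : t < k+1
    · rw [if_pos ht]; exact Finset.univ_nonempty
    · rw [if_neg ht]; exact hτne _
  · intro i N
    obtain ⟨t, ht, hit⟩ := hτfair i N
    refine ⟨t + (k+1), by omega, ?_⟩
    rw [σFun, if_neg (by omega)]
    have he : t + (k+1) - (k+1) = t := by omega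
    rw [he]; exact hit
  · intro m
    have h1 := (sFun_hist g h0 τ 0 m).symm
    rw [Nat.zero_add] at h1
    exact h1
  · intro t htk i
    have hhist : (fun m : Fin (k+1) => sFun g h0 τ (t - (k+1) + (m:ℕ)))
        = histF g h0 τ (t - (k+1)) := funext fun m => (sFun_hist g h0 τ _ m).symm
    have hs : sFun g h0 τ t = histF g h0 τ (t - (k+1) + 1) (Fin.last k) := by
      have h2 := sFun_hist g h0 τ (t - (k+1) + 1) (Fin.last k)
      have he : t - (k+1) + 1 + ((Fin.last k : Fin (k+1)) : ℕ) = t := by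
        show t - (k+1) + 1 + k = t; omega
      rw [he] at h2
      exact h2.symm
    have hstep : histF g h0 τ (t - (k+1) + 1)
        = stepF g (τ (t - (k+1))) (histF g h0 τ (t - (k+1))) := rfl
    constructor
    · intro hiσ
      have hiτ : i ∈ τ (t - (k+1)) := by
        rw [σFun, if_neg (by omega)] at hiσ; exact hiσ
      rw [hhist, hs, hstep, stepF_last g]
      simp only [if_pos hiτ]
    · intro hiσ
      have hiτ : i ∉ τ (t - (k+1)) := by
        rw [σFun, if_neg (by omega)] at hiσ; exact hiσ
      rw [hs, hstep, stepF_last g]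
      simp only [if_neg hiτ]
      have h3 := sFun_hist g h0 τ (t - (k+1)) (Fin.last k)
      have he : t - (k+1) + ((Fin.last k : Fin (k+1)) : ℕ) = t - 1 := by
        show t - (k+1) + k = t - 1; omega
      rw [he] at h3
      exact congrFun h3 i
  · intro hec
    apply hnec
    obtain ⟨t0, ht0⟩ := hec
    refine ⟨t0, fun T hT => ?_⟩
    funext m
    rw [sFun_hist g h0 τ T m, sFun_hist g h0 τ t0 m]
    rw [ht0 (T + (m:ℕ)) (by omega), ht0 (t0 + (m:ℕ)) (by omega)]

end Package

end KRecall

/-- A system of deterministic, stationary, self-independent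
`k`-recall reaction functions (`k ≥ 1`) with two distinct stable states is not
convergent: there are an initial history and a fair schedule whose dynamics is
not eventually constant. -/
theorem k_recall_two_stable_states_not_convergent
    {n k : ℕ} {A : Fin n → Type*} [∀ i, Nonempty (A i)] (hk : 1 ≤ k)
    (g : ∀ i : Fin n, (Fin k → ∀ j, A j) → A i)
    (hsi : ∀ i : Fin n, ∀ h h' : Fin k → ∀ j, A j,
      (∀ (m : Fin k) (j : Fin n), j ≠ i → h m j = h' m j) → g i h = g i h')
    (a b : ∀ j, A j) (hab : a ≠ b)
    (ha : ∀ i, g i (fun _ => a) = a i) (hb : ∀ i, g i (fun _ => b) = b i) :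
    ∃ (s0 : Fin k → ∀ j, A j) (σ : ℕ → Finset (Fin n)) (s : ℕ → ∀ j, A j),
      (∀ t, (σ t).Nonempty) ∧ Fair σ ∧
      (∀ m : Fin k, s (m : ℕ) = s0 m) ∧
      (∀ t : ℕ, k ≤ t → ∀ i : Fin n,
        (i ∈ σ t → s t i = g i (fun m : Fin k => s (t - k + (m : ℕ)))) ∧
        (i ∉ σ t → s t i = s (t - 1) i)) ∧
      ¬ EventuallyConstant s := by
  obtain ⟨k', rfl⟩ : ∃ k'', k = k'' + 1 := ⟨k - 1, by omega⟩
  have hn : 0 < n := by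
    rcases Nat.eq_zero_or_pos n with rfl | h
    · exact (hab (funext fun j => j.elim0)).elim
    · exact h
  by_cases HC : ∀ (h0 : Fin (k'+1) → ∀ j, A j) (τ : ℕ → Finset (Fin n)),
      (∀ t, (τ t).Nonempty) → Fair τ → EventuallyConstant (KRecall.histF g h0 τ)
  · exact (KRecall.main_false g HC hsi a b hab ha hb).elim
  · push_neg at HC
    obtain ⟨h0, τ, hτne, hτfair, hnec⟩ := HC
    exact KRecall.package g h0 τ hn hτne hτfair hnec
end

section
/- Consider an interaction system with n nodes in which every action space A_i is finite and every node i has, for each time step t, a deterministic self-independent 1-recall reaction function f_{i,t} : A → A_i (not necessarily stationary, i.e., the functions may vary with t). Suppose there exist two distinct profiles a ≠ b that are stable, i.e., there is a time T such that f_{i,t}(a) = a_i and f_{i,t}(b) = b_i for every node i and every t ≥ T. Then the system is not safe: there exist an initial profile and a fair schedule for which the dynamics is not eventually constant. -/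
/-- The dynamics for (possibly non-stationary) time-indexed deterministic
1-recall reaction functions. -/
def dynamicsT {n : ℕ} {A : Fin n → Type*}
    (f : ℕ → ∀ i : Fin n, (∀ j, A j) → A i) (s0 : ∀ j, A j)
    (σ : ℕ → Finset (Fin n)) : ℕ → ∀ j, A j
  | 0 => s0
  | t + 1 => fun i =>
      if i ∈ σ (t + 1) then f (t + 1) i (dynamicsT f s0 σ t)
      else dynamicsT f s0 σ t i
namespace NSUnsafe

open Finset

variable {n : ℕ} {A : Fin n → Type*}

/-- One activation step: nodes in `S` react via `f t`, others keep their action. -/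
def patch (f : ℕ → ∀ i : Fin n, (∀ j, A j) → A i) (t : ℕ) (S : Finset (Fin n))
    (s : ∀ j, A j) : ∀ j, A j :=
  fun i => if i ∈ S then f t i s else s i

/-- The forward run from state `s` at time `t` under schedule `τ`. -/
def FR (f : ℕ → ∀ i : Fin n, (∀ j, A j) → A i) (s : ∀ j, A j) (t : ℕ)
    (τ : ℕ → Finset (Fin n)) : ℕ → ∀ j, A j
  | 0 => s
  | u + 1 => patch f (t + u + 1) (τ (t + u + 1)) (FR f s t τ u)

def NEs (σ : ℕ → Finset (Fin n)) : Prop := ∀ t, (σ t).Nonempty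

def Reach (f : ℕ → ∀ i : Fin n, (∀ j, A j) → A i) (s : ∀ j, A j) (t : ℕ) : Prop :=
  ∃ s0 σ, NEs σ ∧ dynamicsT f s0 σ t = s

def V (f : ℕ → ∀ i : Fin n, (∀ j, A j) → A i) (s : ∀ j, A j) (t : ℕ) :
    Set (∀ j, A j) :=
  {L | ∃ τ, NEs τ ∧ Fair τ ∧ ∃ u0, ∀ u, u0 ≤ u → FR f s t τ u = L}

def Biv (f : ℕ → ∀ i : Fin n, (∀ j, A j) → A i) (s : ∀ j, A j) (t : ℕ) : Prop :=
  Reach f s t ∧ ∃ L L', L ∈ V f s t ∧ L' ∈ V f s t ∧ L ≠ L'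

def SafeH (f : ℕ → ∀ i : Fin n, (∀ j, A j) → A i) : Prop :=
  ∀ s0 σ, (∀ u, (σ u).Nonempty) → Fair σ → EventuallyConstant (dynamicsT f s0 σ)

variable {f : ℕ → ∀ i : Fin n, (∀ j, A j) → A i}

lemma dynT_succ (s0 : ∀ j, A j) (σ : ℕ → Finset (Fin n)) (t : ℕ) :
    dynamicsT f s0 σ (t + 1) = patch f (t + 1) (σ (t + 1)) (dynamicsT f s0 σ t) := rfl

lemma FR_succ (s : ∀ j, A j) (t : ℕ) (τ : ℕ → Finset (Fin n)) (u : ℕ) :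
    FR f s t τ (u + 1) = patch f (t + u + 1) (τ (t + u + 1)) (FR f s t τ u) := rfl

lemma dynT_congr {s0 : ∀ j, A j} {σ σ' : ℕ → Finset (Fin n)} {t : ℕ}
    (h : ∀ u, u ≤ t → σ u = σ' u) :
    dynamicsT f s0 σ t = dynamicsT f s0 σ' t := by
  induction t with
  | zero => rfl
  | succ t ih =>
    rw [dynT_succ, dynT_succ, ih (fun u hu => h u (hu.trans (Nat.le_succ t))),
      h (t + 1) le_rfl]

lemma FR_congr {s : ∀ j, A j} {τ τ' : ℕ → Finset (Fin n)} {t u : ℕ}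
    (h : ∀ v, t < v → v ≤ t + u → τ v = τ' v) :
    FR f s t τ u = FR f s t τ' u := by
  induction u with
  | zero => rfl
  | succ u ih =>
    rw [FR_succ, FR_succ, ih (fun v h1 h2 => h v h1 (h2.trans (by omega))),
      h (t + u + 1) (by omega) (by omega)]

lemma FR_add (s : ∀ j, A j) (t : ℕ) (τ : ℕ → Finset (Fin n)) (v : ℕ) :
    ∀ u, FR f s t τ (v + u) = FR f (FR f s t τ v) (t + v) τ u := by
  intro u
  induction u with
  | zero => rfl
  | succ u ih =>
    have e : t + (v + u) + 1 = t + v + u + 1 := by omega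
    show FR f s t τ ((v + u) + 1) = _
    rw [FR_succ, ih, FR_succ, e]

lemma dynT_eq_FR (s0 : ∀ j, A j) (σ : ℕ → Finset (Fin n)) :
    ∀ u, dynamicsT f s0 σ u = FR f s0 0 σ u := by
  intro u
  induction u with
  | zero => rfl
  | succ u ih =>
    rw [dynT_succ, FR_succ, ih, Nat.zero_add]

lemma dynT_add (s0 : ∀ j, A j) (σ : ℕ → Finset (Fin n)) (t u : ℕ) :
    dynamicsT f s0 σ (t + u) = FR f (dynamicsT f s0 σ t) t σ u := by
  rw [dynT_eq_FR, dynT_eq_FR, FR_add, Nat.zero_add]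

lemma fair_of_eq_large {σ τ : ℕ → Finset (Fin n)} (M : ℕ)
    (hm : ∀ u, M ≤ u → σ u = τ u) (hτ : Fair τ) : Fair σ := by
  intro i N
  obtain ⟨t, ht, hi⟩ := hτ i (max N M)
  exact ⟨t, le_trans (le_max_left _ _) ht, by
    rw [hm t (le_trans (le_max_right _ _) ht)]; exact hi⟩

lemma reach_step {s : ∀ j, A j} {t : ℕ} (hr : Reach f s t) {S : Finset (Fin n)}
    (hS : S.Nonempty) : Reach f (patch f (t + 1) S s) (t + 1) := by
  obtain ⟨s0, σ, hne, hs⟩ := hr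
  refine ⟨s0, fun u => if u = t + 1 then S else σ u, fun u => ?_, ?_⟩
  · by_cases h : u = t + 1 <;> simp [h, hS, hne u]
  · rw [dynT_succ]
    have h1 : dynamicsT f s0 (fun u => if u = t + 1 then S else σ u) t
        = dynamicsT f s0 σ t := dynT_congr (fun u hu => by
      simp [Nat.ne_of_lt (by omega : u < t + 1)])
    rw [h1, hs]
    simp

lemma reach_FR {s : ∀ j, A j} {t : ℕ} (hr : Reach f s t) {τ : ℕ → Finset (Fin n)}
    (hne : NEs τ) : ∀ u, Reach f (FR f s t τ u) (t + u) := by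
  intro u
  induction u with
  | zero => exact hr
  | succ u ih =>
    have := reach_step ih (hne (t + u + 1))
    exact this

lemma reach_lim (H : SafeH f) {s : ∀ j, A j} {t : ℕ} (hr : Reach f s t)
    (τ : ℕ → Finset (Fin n)) (hne : NEs τ) (hfair : Fair τ) :
    ∃ L, ∃ u0, ∀ u, u0 ≤ u → FR f s t τ u = L := by
  obtain ⟨s0, σ, hσ, hs⟩ := hr
  set σ' := fun u => if u ≤ t then σ u else τ u with hσ'def
  have hne' : ∀ u, (σ' u).Nonempty := fun u => by
    by_cases h : u ≤ t <;> simp [hσ'def, h, hσ u, hne u]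
  have hfair' : Fair σ' := fair_of_eq_large (t + 1)
    (fun u hu => by simp [hσ'def, Nat.not_le.mpr (by omega : t < u)]) hfair
  obtain ⟨t0, ht0⟩ := H s0 σ' hne' hfair'
  have hst : dynamicsT f s0 σ' t = s := by
    rw [← hs]
    exact (dynT_congr (fun u hu => by simp [hσ'def, hu])).symm
  have key : ∀ u, FR f s t τ u = dynamicsT f s0 σ' (t + u) := by
    intro u
    rw [dynT_add, hst]
    exact (FR_congr (fun v h1 h2 => by
      simp [hσ'def, Nat.not_le.mpr h1])).symm
  refine ⟨dynamicsT f s0 σ' t0, t0, fun u hu => ?_⟩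
  rw [key u]
  exact ht0 (t + u) (by omega)

lemma V_nonempty [Nonempty (Fin n)] (H : SafeH f) {s : ∀ j, A j} {t : ℕ}
    (hr : Reach f s t) : (V f s t).Nonempty := by
  have hfair : Fair (fun _ : ℕ => (univ : Finset (Fin n))) :=
    fun i N => ⟨N, le_rfl, mem_univ i⟩
  have hne : NEs (fun _ : ℕ => (univ : Finset (Fin n))) := fun _ => univ_nonempty
  obtain ⟨L, u0, hL⟩ := reach_lim H hr _ hne hfair
  exact ⟨L, _, hne, hfair, u0, hL⟩

lemma V_step_subset {s : ∀ j, A j} {t : ℕ} {S : Finset (Fin n)} (hS : S.Nonempty) :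
    V f (patch f (t + 1) S s) (t + 1) ⊆ V f s t := by
  rintro L ⟨τ, hne, hfair, u0, hl⟩
  set τ' := fun u => if u = t + 1 then S else τ u with hτ'def
  have hne' : NEs τ' := fun u => by
    by_cases h : u = t + 1 <;> simp [hτ'def, h, hS, hne u]
  have hfair' : Fair τ' := fair_of_eq_large (t + 2)
    (fun u hu => if_neg (by omega)) hfair
  have h1 : FR f s t τ' 1 = patch f (t + 1) S s := by
    show patch f (t + 0 + 1) (τ' (t + 0 + 1)) s = patch f (t + 1) S s
    have : τ' (t + 0 + 1) = S := if_pos rfl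
    rw [this]
  refine ⟨τ', hne', hfair', u0 + 1, fun u hu => ?_⟩
  have e : u = 1 + (u - 1) := by omega
  rw [e, FR_add, h1]
  have h2 : FR f (patch f (t+1) S s) (t + 1) τ' (u - 1)
      = FR f (patch f (t+1) S s) (t + 1) τ (u - 1) :=
    FR_congr (fun v h1 h2 => if_neg (by omega))
  rw [h2]
  exact hl _ (by omega)

lemma lim_mem_tail {s L : ∀ j, A j} {t u0 : ℕ} {τ : ℕ → Finset (Fin n)}
    (hne : NEs τ) (hfair : Fair τ) (hl : ∀ u, u0 ≤ u → FR f s t τ u = L) (v : ℕ) :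
    L ∈ V f (FR f s t τ v) (t + v) := by
  refine ⟨τ, hne, hfair, u0, fun u hu => ?_⟩
  rw [← FR_add]
  exact hl (v + u) (by omega)

lemma not_biv_val {s : ∀ j, A j} {t : ℕ} (hr : Reach f s t) (hnb : ¬ Biv f s t) :
    ∀ L L', L ∈ V f s t → L' ∈ V f s t → L = L' := by
  intro L L' h1 h2
  by_contra hne
  exact hnb ⟨hr, L, L', h1, h2, hne⟩

end NSUnsafe
namespace NSUnsafe

open Finset

variable {n : ℕ} {A : Fin n → Type*}
variable {f : ℕ → ∀ i : Fin n, (∀ j, A j) → A i}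

lemma merge_patch (hsi : ∀ (t : ℕ) (i : Fin n), SelfIndependent i (f t i))
    {s s' : ∀ j, A j} {k : Fin n} (hk : ∀ i, i ≠ k → s i = s' i) (t : ℕ) :
    patch f t {k} s = patch f t {k} s' := by
  funext i
  by_cases h : i = k
  · subst h
    simp only [patch, mem_singleton, if_pos rfl]
    exact hsi t i s s' (fun j hj => hk j hj)
  · simp only [patch, mem_singleton, if_neg h]
    exact hk i h

lemma merge_vals [Nonempty (Fin n)] (H : SafeH f)
    (hsi : ∀ (t : ℕ) (i : Fin n), SelfIndependent i (f t i))
    {s s' : ∀ j, A j} {t : ℕ} {k : Fin n}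
    (hr : Reach f s t) (hr' : Reach f s' t) (hk : ∀ i, i ≠ k → s i = s' i) :
    ∃ L, L ∈ V f s t ∧ L ∈ V f s' t := by
  have hm := merge_patch hsi hk (t + 1)
  obtain ⟨L, hL⟩ := V_nonempty H (reach_step hr (singleton_nonempty k))
  refine ⟨L, V_step_subset (singleton_nonempty k) hL, ?_⟩
  exact V_step_subset (singleton_nonempty k) (hm ▸ hL)

lemma chain_vals [Nonempty (Fin n)] (H : SafeH f)
    (hsi : ∀ (t : ℕ) (i : Fin n), SelfIndependent i (f t i))
    {s : ∀ j, A j} {t : ℕ} (hr : Reach f s t)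
    (Q : Finset (Fin n) → Prop)
    (hup : ∀ S k, Q S → Q (insert k S))
    (hQne : ∀ S, Q S → S.Nonempty)
    (huni : ∀ S, Q S → ∀ L L', L ∈ V f (patch f (t+1) S s) (t+1) →
      L' ∈ V f (patch f (t+1) S s) (t+1) → L = L')
    (hQu : Q Finset.univ) :
    ∀ S, Q S → ∀ L, L ∈ V f (patch f (t+1) S s) (t+1) →
      ∀ L', L' ∈ V f (patch f (t+1) Finset.univ s) (t+1) → L = L' := by
  suffices h : ∀ m S, (Finset.univ \ S).card = m → Q S →
      ∀ L, L ∈ V f (patch f (t+1) S s) (t+1) →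
      ∀ L', L' ∈ V f (patch f (t+1) Finset.univ s) (t+1) → L = L' by
    intro S hS
    exact h _ S rfl hS
  intro m
  induction m with
  | zero =>
    intro S hc hQ L hL L' hL'
    have hSu : S = Finset.univ := by
      have h0 : Finset.univ \ S = ∅ := card_eq_zero.mp hc
      have : (Finset.univ : Finset (Fin n)) ⊆ S := sdiff_eq_empty_iff_subset.mp h0
      exact subset_antisymm (subset_univ S) this |>.symm ▸ rfl
    subst hSu
    exact huni _ hQ L L' hL hL'
  | succ m ih =>
    intro S hc hQ L hL L' hL'
    have hne : (Finset.univ \ S).Nonempty := card_pos.mp (by omega)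
    obtain ⟨k, hk⟩ := hne
    have hkS : k ∉ S := (mem_sdiff.mp hk).2
    have hcard : (Finset.univ \ insert k S).card = m := by
      have h1 : Finset.univ \ insert k S = (Finset.univ \ S).erase k := by
        ext x
        simp only [mem_sdiff, mem_insert, mem_erase, mem_univ, true_and]
        tauto
      rw [h1, card_erase_of_mem hk, hc]
      rfl
    have hdiff : ∀ i, i ≠ k →
        patch f (t+1) S s i = patch f (t+1) (insert k S) s i := by
      intro i hi
      simp only [patch, mem_insert]
      by_cases hiS : i ∈ S <;> simp [hiS, hi]
    obtain ⟨LC, hC1, hC2⟩ := merge_vals H hsi (reach_step hr (hQne S hQ))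
      (reach_step hr (hQne _ (hup S k hQ))) hdiff
    exact (huni S hQ L LC hL hC1).trans
      (ih (insert k S) hcard (hup S k hQ) LC hC2 L' hL')

lemma biv_step [Nonempty (Fin n)] (H : SafeH f)
    (hsi : ∀ (t : ℕ) (i : Fin n), SelfIndependent i (f t i))
    {s : ∀ j, A j} {t : ℕ} (hb : Biv f s t) :
    ∃ S : Finset (Fin n), S.Nonempty ∧ Biv f (patch f (t+1) S s) (t+1) := by
  by_contra hc
  push_neg at hc
  obtain ⟨hr, L, L', hL, hL', hne⟩ := hb
  have huni : ∀ S : Finset (Fin n), S.Nonempty →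
      ∀ x y, x ∈ V f (patch f (t+1) S s) (t+1) →
        y ∈ V f (patch f (t+1) S s) (t+1) → x = y :=
    fun S hS => not_biv_val (reach_step hr hS) (hc S hS)
  have hdec : ∀ x, x ∈ V f s t →
      ∀ y, y ∈ V f (patch f (t+1) Finset.univ s) (t+1) → x = y := by
    rintro x ⟨τ, hneτ, hfair, u0, hl⟩ y hy
    have hx1 : x ∈ V f (patch f (t+1) (τ (t+1)) s) (t+1) := by
      have h1 := lim_mem_tail hneτ hfair hl 1
      have h2 : FR f s t τ 1 = patch f (t+1) (τ (t+1)) s := rfl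
      rwa [h2] at h1
    exact chain_vals H hsi hr (fun S => S.Nonempty)
      (fun S k hS => Finset.insert_nonempty k S) (fun S h => h) huni univ_nonempty
      (τ (t+1)) (hneτ (t+1)) x hx1 y hy
  obtain ⟨Lu, hLu⟩ := V_nonempty H (reach_step hr univ_nonempty)
  exact hne ((hdec L hL Lu hLu).trans (hdec L' hL' Lu hLu).symm)

end NSUnsafe
namespace NSUnsafe

open Finset

variable {n : ℕ} {A : Fin n → Type*}
variable {f : ℕ → ∀ i : Fin n, (∀ j, A j) → A i}

lemma biv_j [Nonempty (Fin n)] (H : SafeH f)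
    (hsi : ∀ (t : ℕ) (i : Fin n), SelfIndependent i (f t i))
    {s : ∀ j, A j} {t : ℕ} (hb : Biv f s t) (j : Fin n) :
    ∃ τ u, NEs τ ∧ (∃ w, 1 ≤ w ∧ w ≤ u ∧ j ∈ τ (t + w)) ∧
      Biv f (FR f s t τ u) (t + u) := by
  classical
  by_contra hC
  push_neg at hC
  obtain ⟨hr, L, L', hL, hL', hneq⟩ := hb
  -- uniqueness of limits after any step activating j, from a j-free extension
  have huniJ : ∀ (τ : ℕ → Finset (Fin n)) (u : ℕ), NEs τ →
      (∀ w, 1 ≤ w → w ≤ u → j ∉ τ (t + w)) →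
      ∀ S : Finset (Fin n), j ∈ S →
      ∀ x y, x ∈ V f (patch f (t+u+1) S (FR f s t τ u)) (t+u+1) →
        y ∈ V f (patch f (t+u+1) S (FR f s t τ u)) (t+u+1) → x = y := by
    intro τ u hne hfree S hj
    set τ' := fun v => if v = t + u + 1 then S else τ v with hτ'
    have hne' : NEs τ' := by
      intro v
      by_cases h : v = t + u + 1
      · show (if v = t + u + 1 then S else τ v).Nonempty
        rw [if_pos h]; exact ⟨j, hj⟩
      · show (if v = t + u + 1 then S else τ v).Nonempty
        rw [if_neg h]; exact hne v
    have hFReq : FR f s t τ' u = FR f s t τ u :=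
      (FR_congr (fun v h1 h2 => (if_neg (by omega) : τ' v = τ v)))
    have hv : τ' (t + u + 1) = S := if_pos rfl
    have hFR1 : FR f s t τ' (u+1) = patch f (t+u+1) S (FR f s t τ u) := by
      rw [FR_succ, hv, hFReq]
    have hhit : ∃ w, 1 ≤ w ∧ w ≤ u + 1 ∧ j ∈ τ' (t + w) :=
      ⟨u + 1, by omega, le_rfl, by show j ∈ τ' (t+u+1); rw [hv]; exact hj⟩
    have hnb := hC τ' (u+1) hne' hhit
    rw [hFR1] at hnb
    exact not_biv_val (reach_step (reach_FR hr hne u) ⟨j, hj⟩) hnb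
  have hchainJ : ∀ (τ : ℕ → Finset (Fin n)) (u : ℕ), NEs τ →
      (∀ w, 1 ≤ w → w ≤ u → j ∉ τ (t + w)) →
      ∀ S : Finset (Fin n), j ∈ S →
      ∀ x, x ∈ V f (patch f (t+u+1) S (FR f s t τ u)) (t+u+1) →
      ∀ y, y ∈ V f (patch f (t+u+1) univ (FR f s t τ u)) (t+u+1) → x = y := by
    intro τ u hne hfree
    exact chain_vals H hsi (reach_FR hr hne u) (fun S => j ∈ S)
      (fun S k hS => mem_insert_of_mem hS) (fun S hS => ⟨j, hS⟩)
      (huniJ τ u hne hfree) (mem_univ j)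
  have hstep : ∀ (τ : ℕ → Finset (Fin n)) (u : ℕ), NEs τ →
      (∀ w, 1 ≤ w → w ≤ u + 1 → j ∉ τ (t + w)) →
      ∀ x, x ∈ V f (patch f (t+u+1) univ (FR f s t τ u)) (t+u+1) →
      ∀ y, y ∈ V f (patch f (t+u+2) univ (FR f s t τ (u+1))) (t+u+2) → x = y := by
    intro τ u hne hfree x hx y hy
    have hfreeu : ∀ w, 1 ≤ w → w ≤ u → j ∉ τ (t + w) :=
      fun w h1 h2 => hfree w h1 (h2.trans (Nat.le_succ u))
    have hSj : j ∉ τ (t + u + 1) := hfree (u+1) (by omega) le_rfl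
    have hdiff : ∀ i, i ≠ j → FR f s t τ (u+1) i
        = patch f (t+u+1) (insert j (τ (t+u+1))) (FR f s t τ u) i := by
      intro i hi
      show patch f (t+u+1) (τ (t+u+1)) (FR f s t τ u) i = _
      simp only [patch, mem_insert]
      by_cases hiS : i ∈ τ (t + u + 1) <;> simp [hiS, hi]
    have hmerge : patch f (t+u+2) {j} (FR f s t τ (u+1))
        = patch f (t+u+2) {j} (patch f (t+u+1) (insert j (τ (t+u+1))) (FR f s t τ u)) :=
      merge_patch hsi hdiff _
    have hre : Reach f (FR f s t τ (u+1)) (t+(u+1)) := reach_FR hr hne (u+1)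
    obtain ⟨LZ, hLZ⟩ := V_nonempty H (reach_step hre (singleton_nonempty j))
    have e1 : LZ = y := hchainJ τ (u+1) hne hfree {j} (mem_singleton_self j) LZ hLZ y hy
    have hLZ' : LZ ∈ V f (patch f (t+u+1) (insert j (τ (t+u+1))) (FR f s t τ u)) (t+u+1) := by
      have hLZ2 : LZ ∈ V f (patch f (t+u+2) {j} (FR f s t τ (u+1))) (t+u+2) := hLZ
      rw [hmerge] at hLZ2
      exact V_step_subset (singleton_nonempty j) hLZ2
    have e2 : LZ = x := hchainJ τ u hne hfreeu (insert j (τ (t+u+1)))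
      (mem_insert_self j _) LZ hLZ' x hx
    exact e2.symm.trans e1
  have hinv : ∀ (τ : ℕ → Finset (Fin n)) (u : ℕ), NEs τ →
      (∀ w, 1 ≤ w → w ≤ u → j ∉ τ (t + w)) →
      ∀ x, x ∈ V f (patch f (t+1) univ s) (t+1) →
      ∀ y, y ∈ V f (patch f (t+u+1) univ (FR f s t τ u)) (t+u+1) → x = y := by
    intro τ u hne
    induction u with
    | zero =>
      intro hfree x hx y hy
      exact huniJ τ 0 hne hfree univ (mem_univ j) x y hx hy
    | succ u ih =>
      intro hfree x hx y hy
      have hfreeu : ∀ w, 1 ≤ w → w ≤ u → j ∉ τ (t + w) :=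
        fun w h1 h2 => hfree w h1 (h2.trans (Nat.le_succ u))
      obtain ⟨z, hz⟩ := V_nonempty H (reach_step (reach_FR hr hne u) univ_nonempty)
      exact (ih hfreeu x hx z hz).trans (hstep τ u hne hfree z hz y hy)
  have final : ∀ x, x ∈ V f s t →
      ∀ y, y ∈ V f (patch f (t+1) univ s) (t+1) → x = y := by
    rintro x ⟨τ, hneτ, hfair, u0, hl⟩ y hy
    obtain ⟨t', ht', hjt⟩ := hfair j (t+1)
    have hex : ∃ m, j ∈ τ (t + m + 1) := ⟨t' - t - 1, by
      have e : t + (t' - t - 1) + 1 = t' := by omega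
      rw [e]; exact hjt⟩
    set m0 := Nat.find hex with hm0
    have hjm : j ∈ τ (t + m0 + 1) := Nat.find_spec hex
    have hfree : ∀ w, 1 ≤ w → w ≤ m0 → j ∉ τ (t + w) := by
      intro w h1 h2 hw
      refine Nat.find_min hex (show w - 1 < m0 by omega) ?_
      have e : t + (w - 1) + 1 = t + w := by omega
      rw [e]; exact hw
    have hxE : x ∈ V f (FR f s t τ (m0+1)) (t+(m0+1)) := lim_mem_tail hneτ hfair hl (m0+1)
    obtain ⟨z, hz⟩ := V_nonempty H (reach_step (reach_FR hr hneτ m0) univ_nonempty)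
    have e1 : x = z := hchainJ τ m0 hneτ hfree (τ (t+m0+1)) hjm x hxE z hz
    have e2 : y = z := hinv τ m0 hneτ hfree y hy z hz
    exact e1.trans e2.symm
  obtain ⟨Lu, hLu⟩ := V_nonempty H (reach_step hr univ_nonempty)
  exact hneq ((final L hL Lu hLu).trans (final L' hL' Lu hLu).symm)

end NSUnsafe
namespace NSUnsafe

open Finset

variable {n : ℕ} {A : Fin n → Type*}
variable {f : ℕ → ∀ i : Fin n, (∀ j, A j) → A i}

lemma biv_change [Nonempty (Fin n)] (H : SafeH f)
    (hsi : ∀ (t : ℕ) (i : Fin n), SelfIndependent i (f t i))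
    {s : ∀ j, A j} {t : ℕ} (hb : Biv f s t) :
    ∃ τ u, NEs τ ∧ (∃ w, 1 ≤ w ∧ w ≤ u ∧ FR f s t τ w ≠ s) ∧
      Biv f (FR f s t τ u) (t + u) := by
  classical
  by_contra hC
  push_neg at hC
  -- helper: splice a step set `S` at time `t+d+1` onto a schedule staying at `s`
  have hmk : ∀ d (τ : ℕ → Finset (Fin n)), NEs τ → (∀ w, w ≤ d → FR f s t τ w = s) →
      ∀ S : Finset (Fin n), S.Nonempty →
      ∃ τ' : ℕ → Finset (Fin n), NEs τ' ∧ (∀ w, w ≤ d → FR f s t τ' w = s) ∧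
        FR f s t τ' (d+1) = patch f (t+d+1) S s := by
    intro d τ hne hstay S hS
    refine ⟨fun v => if v = t+d+1 then S else τ v, ?_, ?_, ?_⟩
    · intro v
      by_cases h : v = t+d+1
      · show (if v = t+d+1 then S else τ v).Nonempty
        rw [if_pos h]; exact hS
      · show (if v = t+d+1 then S else τ v).Nonempty
        rw [if_neg h]; exact hne v
    · intro w hw
      have he : FR f s t (fun v => if v = t+d+1 then S else τ v) w = FR f s t τ w :=
        FR_congr (fun v h1 h2 => if_neg (by omega))
      rw [he]; exact hstay w hw
    · have hstay' : FR f s t (fun v => if v = t+d+1 then S else τ v) d = s := by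
        have he : FR f s t (fun v => if v = t+d+1 then S else τ v) d = FR f s t τ d :=
          FR_congr (fun v h1 h2 => if_neg (by omega))
        rw [he]; exact hstay d le_rfl
      rw [FR_succ, hstay']
      simp
  -- if a successor of a stationary reachable config is bivalent, it must equal `s`
  have hkey : ∀ d (τ : ℕ → Finset (Fin n)), NEs τ → (∀ w, w ≤ d → FR f s t τ w = s) →
      ∀ S : Finset (Fin n), S.Nonempty → Biv f (patch f (t+d+1) S s) (t+d+1) →
      patch f (t+d+1) S s = s := by
    intro d τ hne hstay S hS hbS
    by_contra hes
    obtain ⟨τ', hne', hstay', hFRd1⟩ := hmk d τ hne hstay S hS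
    have h := hC τ' (d+1) hne' ⟨d+1, by omega, le_rfl, by rw [hFRd1]; exact hes⟩
    rw [hFRd1] at h
    exact h hbS
  -- the config stays bivalent forever (with a stationary witness schedule)
  have hQ : ∀ d, (∃ τ, NEs τ ∧ ∀ w, w ≤ d → FR f s t τ w = s) ∧ Biv f s (t+d) := by
    intro d
    induction d with
    | zero =>
      exact ⟨⟨fun _ => univ, fun _ => univ_nonempty, fun w hw => by
        have hw0 : w = 0 := by omega
        subst hw0; rfl⟩, hb⟩
    | succ d ih =>
      obtain ⟨⟨τ, hne, hstay⟩, hbd⟩ := ih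
      obtain ⟨S, hS, hbS⟩ := biv_step H hsi hbd
      have hes : patch f (t+d+1) S s = s := hkey d τ hne hstay S hS hbS
      obtain ⟨τ', hne', hstay', hFRd1⟩ := hmk d τ hne hstay S hS
      constructor
      · refine ⟨τ', hne', fun w hw => ?_⟩
        rcases Nat.lt_or_ge w (d+1) with h | h
        · exact hstay' w (by omega)
        · have hw1 : w = d+1 := by omega
          subst hw1
          rw [hFRd1]; exact hes
      · have hgoal : Biv f (patch f (t+d+1) S s) (t+d+1) := hbS
        rw [hes] at hgoal
        exact hgoal
  -- β-successors (which change the state) are univalent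
  have hbeta : ∀ d (S : Finset (Fin n)) (i : Fin n), i ∈ S → f (t+d+1) i s ≠ s i →
      ∀ x y, x ∈ V f (patch f (t+d+1) S s) (t+d+1) →
        y ∈ V f (patch f (t+d+1) S s) (t+d+1) → x = y := by
    intro d S i hiS hi
    obtain ⟨⟨τ, hne, hstay⟩, hbd⟩ := hQ d
    have hps : patch f (t+d+1) S s ≠ s := by
      intro h
      apply hi
      have h2 := congrFun h i
      simpa [patch, hiS] using h2
    obtain ⟨τ', hne', hstay', hFRd1⟩ := hmk d τ hne hstay S ⟨i, hiS⟩
    have h := hC τ' (d+1) hne' ⟨d+1, by omega, le_rfl, by rw [hFRd1]; exact hps⟩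
    rw [hFRd1] at h
    exact not_biv_val (reach_step hbd.1 ⟨i, hiS⟩) h
  -- all β-successors share the valence of the full-activation successor
  have hbetachain : ∀ d (i : Fin n), f (t+d+1) i s ≠ s i →
      ∀ S : Finset (Fin n), i ∈ S →
      ∀ x, x ∈ V f (patch f (t+d+1) S s) (t+d+1) →
      ∀ y, y ∈ V f (patch f (t+d+1) univ s) (t+d+1) → x = y := by
    intro d i hi S hiS
    exact chain_vals H hsi (hQ d).2.1 (fun S => i ∈ S)
      (fun S k hS => mem_insert_of_mem hS) (fun S hS => ⟨i, hS⟩)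
      (fun S hS => hbeta d S i hS hi) (mem_univ i) S hiS
  -- a node once unstable at `s` stays unstable at `s`
  have hB : ∀ d (k : Fin n), f (t+d+1) k s ≠ s k → f (t+d+1+1) k s ≠ s k := by
    intro d k hk hk1
    have hEdiff : ∀ i, i ≠ k → patch f (t+d+1) {k} s i = s i := by
      intro i hi; simp [patch, hi]
    have hmerge : patch f (t+d+1+1) {k} (patch f (t+d+1) {k} s) = patch f (t+d+1+1) {k} s :=
      merge_patch hsi hEdiff _
    have hsucc : patch f (t+d+1+1) {k} s = s := by
      funext i
      by_cases h : i = k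
      · subst h; simp only [patch, mem_singleton, if_pos rfl]; exact hk1
      · simp only [patch, mem_singleton, if_neg h]
    have hsub := V_step_subset (f := f) (s := patch f (t+d+1) {k} s) (t := t+d+1)
      (singleton_nonempty k)
    rw [hmerge, hsucc] at hsub
    obtain ⟨_, L1, L2, hL1, hL2, hL12⟩ := (hQ (d+2)).2
    exact hL12 (hbeta d {k} k (mem_singleton_self k) hk L1 L2 (hsub hL1) (hsub hL2))
  -- the full-activation valence is invariant in time (while some node is unstable)
  have hC1 : ∀ d (k : Fin n), f (t+d+1) k s ≠ s k →
      ∀ x, x ∈ V f (patch f (t+d+1) univ s) (t+d+1) →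
      ∀ y, y ∈ V f (patch f (t+d+1+1) univ s) (t+d+1+1) → x = y := by
    intro d k hk x hx y hy
    have hk1 : f (t+d+1+1) k s ≠ s k := hB d k hk
    have hEdiff : ∀ i, i ≠ k → patch f (t+d+1) {k} s i = s i := by
      intro i hi; simp [patch, hi]
    have hmerge : patch f (t+d+1+1) {k} (patch f (t+d+1) {k} s) = patch f (t+d+1+1) {k} s :=
      merge_patch hsi hEdiff _
    have hrX : Reach f (patch f (t+d+1+1) {k} s) (t+d+1+1) :=
      reach_step (hQ (d+1)).2.1 (singleton_nonempty k)
    obtain ⟨LX, hLX⟩ := V_nonempty H hrX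
    have hLXE : LX ∈ V f (patch f (t+d+1) {k} s) (t+d+1) := by
      have h2 : LX ∈ V f (patch f (t+d+1+1) {k} (patch f (t+d+1) {k} s)) (t+d+1+1) := by
        rw [hmerge]; exact hLX
      exact V_step_subset (singleton_nonempty k) h2
    have e1 : LX = x := hbetachain d k hk {k} (mem_singleton_self k) LX hLXE x hx
    have e2 : LX = y := hbetachain (d+1) k hk1 {k} (mem_singleton_self k) LX hLX y hy
    exact e1.symm.trans e2
  -- some node must be unstable at some time (else `s` would be univalent)
  obtain ⟨d2, k2, hk2⟩ : ∃ (d : ℕ) (k : Fin n), f (t+d+1) k s ≠ s k := by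
    by_contra hno
    push_neg at hno
    obtain ⟨hrt, L, L', hL, hL', hneq⟩ := hb
    have hstay : ∀ (τ : ℕ → Finset (Fin n)) u, FR f s t τ u = s := by
      intro τ u
      induction u with
      | zero => rfl
      | succ u ih =>
        rw [FR_succ, ih]
        funext i
        by_cases h : i ∈ τ (t+u+1) <;> simp [patch, h, hno u i]
    have hval : ∀ x, x ∈ V f s t → x = s := by
      rintro x ⟨τ, hne, hfair, u0, hl⟩
      rw [← hl u0 le_rfl, hstay]
    exact hneq ((hval L hL).trans (hval L' hL').symm)
  have hkall : ∀ e, f (t+(d2+e)+1) k2 s ≠ s k2 := by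
    intro e
    induction e with
    | zero => exact hk2
    | succ e ih => exact hB (d2+e) k2 ih
  -- the full-activation valence is globally constant from d2 on
  have hWconst : ∀ e, ∀ x, x ∈ V f (patch f (t+d2+1) univ s) (t+d2+1) →
      ∀ y, y ∈ V f (patch f (t+(d2+e)+1) univ s) (t+(d2+e)+1) → x = y := by
    intro e
    induction e with
    | zero => exact fun x hx y hy => hbetachain d2 k2 hk2 univ (mem_univ k2) x hx y hy
    | succ e ih =>
      intro x hx y hy
      obtain ⟨z, hz⟩ := V_nonempty H (reach_step (hQ (d2+e)).2.1 univ_nonempty)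
      exact (ih x hx z hz).trans (hC1 (d2+e) k2 (hkall e) z hz y hy)
  -- final contradiction
  obtain ⟨hr2, L, L', hL, hL', hneq⟩ := (hQ d2).2
  obtain ⟨w0, hw0⟩ := V_nonempty H (reach_step hr2 univ_nonempty)
  have hxw : ∃ x, x ∈ V f s (t+d2) ∧ x ≠ w0 := by
    by_cases h : L = w0
    · exact ⟨L', hL', fun he => hneq (h.trans he.symm)⟩
    · exact ⟨L, hL, h⟩
  obtain ⟨x, hx, hxw0⟩ := hxw
  obtain ⟨τ, hneτ, hfair, u0, hl⟩ := hx
  have hchg : ∃ m, FR f s (t+d2) τ (m+1) ≠ s := by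
    by_contra hnc
    push_neg at hnc
    have hall : ∀ u, FR f s (t+d2) τ u = s := by
      intro u
      cases u with
      | zero => rfl
      | succ u => exact hnc u
    obtain ⟨t', ht', hkmem⟩ := hfair k2 (t+d2+1)
    have he : t+d2+(t' - (t+d2) - 1)+1 = t' := by omega
    set m := t' - (t+d2) - 1 with hm
    have hstep : FR f s (t+d2) τ (m+1) = patch f (t+d2+m+1) (τ (t+d2+m+1)) s := by
      rw [FR_succ, hall m]
    have hne2 : FR f s (t+d2) τ (m+1) k2 ≠ s k2 := by
      rw [hstep]
      simp only [patch]
      rw [if_pos (by rw [he]; exact hkmem)]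
      have h3 := hkall m
      rwa [show t+(d2+m)+1 = t+d2+m+1 from by omega] at h3
    exact hne2 (congrFun (hall (m+1)) k2)
  set m0 := Nat.find hchg with hm0def
  have hm0 : FR f s (t+d2) τ (m0+1) ≠ s := Nat.find_spec hchg
  have hstaym : ∀ w, w ≤ m0 → FR f s (t+d2) τ w = s := by
    intro w hw
    cases w with
    | zero => rfl
    | succ w => exact not_not.mp (Nat.find_min hchg (by omega))
  have hE' : FR f s (t+d2) τ (m0+1) = patch f (t+d2+m0+1) (τ (t+d2+m0+1)) s := by
    rw [FR_succ, hstaym m0 le_rfl]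
  have hiex : ∃ i, i ∈ τ (t+d2+m0+1) ∧ f (t+d2+m0+1) i s ≠ s i := by
    by_contra hno2
    push_neg at hno2
    apply hm0
    rw [hE']
    funext i
    by_cases h : i ∈ τ (t+d2+m0+1)
    · simp [patch, h, hno2 i h]
    · simp [patch, h]
  obtain ⟨i2, hi2S, hi2⟩ := hiex
  have hxE : x ∈ V f (FR f s (t+d2) τ (m0+1)) ((t+d2)+(m0+1)) :=
    lim_mem_tail hneτ hfair hl (m0+1)
  rw [hE'] at hxE
  -- convert to `t+(d2+m0)` normal form
  have hassoc : t+d2+m0 = t+(d2+m0) := by omega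
  rw [hassoc] at hxE hi2S hi2
  rw [show t+d2+(m0+1) = t+(d2+m0)+1 from by omega] at hxE
  obtain ⟨z, hz⟩ := V_nonempty H (reach_step (hQ (d2+m0)).2.1 univ_nonempty)
  have e1 : x = z := hbetachain (d2+m0) i2 hi2 (τ (t+(d2+m0)+1)) hi2S x hxE z hz
  have e2 : w0 = z := hWconst m0 w0 hw0 z hz
  exact hxw0 (e1.trans e2.symm)
end NSUnsafe
namespace NSUnsafe

open Finset

variable {n : ℕ} {A : Fin n → Type*}
variable {f : ℕ → ∀ i : Fin n, (∀ j, A j) → A i}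

lemma biv_pr [Nonempty (Fin n)] (H : SafeH f)
    (hsi : ∀ (t : ℕ) (i : Fin n), SelfIndependent i (f t i))
    {s : ∀ j, A j} {t : ℕ} (hb : Biv f s t) (j : Fin n) :
    ∃ τ u, NEs τ ∧ 1 ≤ u ∧ (∃ w, 1 ≤ w ∧ w ≤ u ∧ j ∈ τ (t + w)) ∧
      (∃ w w', w < w' ∧ w' ≤ u ∧ FR f s t τ w ≠ FR f s t τ w') ∧
      Biv f (FR f s t τ u) (t + u) := by
  obtain ⟨τ1, u1, hne1, ⟨w1, hw11, hw12, hjw⟩, hb1⟩ := biv_j H hsi hb j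
  obtain ⟨τ2, u2, hne2, ⟨w2, hw21, hw22, hch⟩, hb2⟩ := biv_change H hsi hb1
  set τ := fun v => if v ≤ t + u1 then τ1 v else τ2 v with hτ
  have hne : NEs τ := by
    intro v
    by_cases h : v ≤ t + u1
    · show (if v ≤ t + u1 then τ1 v else τ2 v).Nonempty
      rw [if_pos h]; exact hne1 v
    · show (if v ≤ t + u1 then τ1 v else τ2 v).Nonempty
      rw [if_neg h]; exact hne2 v
  have hpre : ∀ u, u ≤ u1 → FR f s t τ u = FR f s t τ1 u := fun u hu =>
    FR_congr (fun v h1 h2 => if_pos (by omega))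
  have hu1e : FR f s t τ u1 = FR f s t τ1 u1 := hpre u1 le_rfl
  have hpost : ∀ u, FR f s t τ (u1 + u) = FR f (FR f s t τ1 u1) (t + u1) τ2 u := by
    intro u
    rw [FR_add, hu1e]
    exact FR_congr (fun v h1 h2 => if_neg (by omega))
  refine ⟨τ, u1 + u2, hne, by omega, ⟨w1, hw11, by omega, ?_⟩,
    ⟨u1, u1 + w2, by omega, by omega, ?_⟩, ?_⟩
  · show j ∈ (if t + w1 ≤ t + u1 then τ1 (t + w1) else τ2 (t + w1))
    rw [if_pos (by omega)]; exact hjw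
  · rw [hu1e, hpost w2]
    exact fun h => hch h.symm
  · rw [show t + (u1 + u2) = (t + u1) + u2 from by omega, hpost u2]
    exact hb2

lemma exists_biv0 [Nonempty (Fin n)] (H : SafeH f)
    (hsi : ∀ (t : ℕ) (i : Fin n), SelfIndependent i (f t i))
    (a b : ∀ j, A j) (hab : a ≠ b) (T : ℕ)
    (hstab : ∀ t : ℕ, T ≤ t → ∀ i : Fin n, f t i a = a i ∧ f t i b = b i) :
    ∃ s0, Biv f s0 0 := by
  classical
  by_contra hno
  push_neg at hno
  obtain ⟨j0⟩ := (inferInstance : Nonempty (Fin n))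
  have hstabV : ∀ (c : ∀ j, A j), (∀ (t : ℕ) (i : Fin n), T ≤ t → f t i c = c i) →
      c ∈ V f c 0 := by
    intro c hc
    set τ := fun u => if u ≤ T + 1 then ({j0} : Finset (Fin n)) else univ with hτ
    have hne : NEs τ := by
      intro u
      by_cases h : u ≤ T + 1
      · show (if u ≤ T + 1 then ({j0} : Finset (Fin n)) else univ).Nonempty
        rw [if_pos h]; exact singleton_nonempty j0
      · show (if u ≤ T + 1 then ({j0} : Finset (Fin n)) else univ).Nonempty
        rw [if_neg h]; exact univ_nonempty
    have hfair : Fair τ := by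
      intro i N
      refine ⟨max N (T + 2), le_max_left _ _, ?_⟩
      show i ∈ (if max N (T + 2) ≤ T + 1 then ({j0} : Finset (Fin n)) else univ)
      rw [if_neg (by omega)]
      exact mem_univ i
    have hA1 : ∀ u, u ≤ T + 1 → ∀ i, i ≠ j0 → FR f c 0 τ u i = c i := by
      intro u
      induction u with
      | zero => intro _ i _; rfl
      | succ u ih =>
        intro hu i hi
        show patch f (0 + u + 1) (τ (0 + u + 1)) (FR f c 0 τ u) i = c i
        have hτv : τ (0 + u + 1) = {j0} := by
          show (if 0 + u + 1 ≤ T + 1 then ({j0} : Finset (Fin n)) else univ) = {j0}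
          rw [if_pos (by omega)]
        rw [hτv]
        simp only [patch, mem_singleton, if_neg hi]
        exact ih (by omega) i hi
    have hA2 : FR f c 0 τ (T + 1) = c := by
      funext i
      by_cases hi : i = j0
      · rw [hi]
        show patch f (0 + T + 1) (τ (0 + T + 1)) (FR f c 0 τ T) j0 = c j0
        have hτv : τ (0 + T + 1) = {j0} := by
          show (if 0 + T + 1 ≤ T + 1 then ({j0} : Finset (Fin n)) else univ) = {j0}
          rw [if_pos (by omega)]
        rw [hτv]
        simp only [patch, mem_singleton, if_pos rfl]
        have he : f (0 + T + 1) j0 (FR f c 0 τ T) = f (0 + T + 1) j0 c :=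
          hsi (0 + T + 1) j0 _ _ (fun k hk => hA1 T (by omega) k hk)
        rw [he]
        exact hc (0 + T + 1) j0 (by omega)
      · exact hA1 (T + 1) le_rfl i hi
    have hA3 : ∀ u, FR f c 0 τ (T + 1 + u) = c := by
      intro u
      induction u with
      | zero => exact hA2
      | succ u ih =>
        show patch f (0 + (T + 1 + u) + 1) (τ (0 + (T + 1 + u) + 1)) (FR f c 0 τ (T + 1 + u)) = c
        have hτv : τ (0 + (T + 1 + u) + 1) = univ := by
          show (if 0 + (T + 1 + u) + 1 ≤ T + 1 then ({j0} : Finset (Fin n)) else univ) = univ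
          rw [if_neg (by omega)]
        rw [hτv, ih]
        funext i
        simp only [patch, mem_univ, if_pos]
        exact hc (0 + (T + 1 + u) + 1) i (by omega)
    refine ⟨τ, hne, hfair, T + 1, fun u hu => ?_⟩
    obtain ⟨v, rfl⟩ := Nat.exists_eq_add_of_le hu
    exact hA3 v
  have ha : a ∈ V f a 0 := hstabV a (fun t i ht => (hstab t ht i).1)
  have hbv : b ∈ V f b 0 := hstabV b (fun t i ht => (hstab t ht i).2)
  set c : ℕ → ∀ j, A j := fun m i => if (i : ℕ) < m then b i else a i with hcdef
  have hreach : ∀ m, Reach f (c m) 0 :=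
    fun m => ⟨c m, fun _ => {j0}, fun _ => singleton_nonempty j0, rfl⟩
  have hkey : ∀ m, ∀ L, L ∈ V f (c m) 0 → ∀ L', L' ∈ V f (c 0) 0 → L = L' := by
    intro m
    induction m with
    | zero => exact fun L hL L' hL' => not_biv_val (hreach 0) (hno (c 0)) L L' hL hL'
    | succ m ih =>
      intro L hL L' hL'
      by_cases hmn : m < n
      · have hdiff : ∀ i : Fin n, i ≠ (⟨m, hmn⟩ : Fin n) → c (m + 1) i = c m i := by
          intro i hi
          have him : (i : ℕ) ≠ m := fun h => hi (Fin.ext h)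
          show (if (i : ℕ) < m + 1 then b i else a i) = (if (i : ℕ) < m then b i else a i)
          by_cases h : (i : ℕ) < m
          · rw [if_pos (by omega), if_pos h]
          · rw [if_neg (by omega), if_neg h]
        obtain ⟨LC, hC1, hC2⟩ := merge_vals H hsi (hreach (m + 1)) (hreach m) hdiff
        have e1 : L = LC := not_biv_val (hreach (m + 1)) (hno (c (m + 1))) L LC hL hC1
        exact e1.trans (ih LC hC2 L' hL')
      · have hceq : c (m + 1) = c m := by
          funext i
          have := i.isLt
          show (if (i : ℕ) < m + 1 then b i else a i) = (if (i : ℕ) < m then b i else a i)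
          rw [if_pos (by omega), if_pos (by omega)]
        rw [hceq] at hL
        exact ih L hL L' hL'
  have hca : c 0 = a := by
    funext i
    show (if (i : ℕ) < 0 then b i else a i) = a i
    rw [if_neg (by omega)]
  have hcb : c n = b := by
    funext i
    have := i.isLt
    show (if (i : ℕ) < n then b i else a i) = b i
    rw [if_pos (by omega)]
  have hbn : b ∈ V f (c n) 0 := by rw [hcb]; exact hbv
  have han : a ∈ V f (c 0) 0 := by rw [hca]; exact ha
  exact hab (hkey n b hbn a han).symm

end NSUnsafe

/-- A system with finite action spaces and deterministic,
self-independent, 1-recall (not necessarily stationary) reaction functions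
that has two distinct stable profiles is not safe. -/
theorem nonstationary_two_stable_states_not_safe
    {n : ℕ} {A : Fin n → Type*} [∀ i, Nonempty (A i)] [∀ i, Fintype (A i)]
    (f : ℕ → ∀ i : Fin n, (∀ j, A j) → A i)
    (hsi : ∀ (t : ℕ) (i : Fin n), SelfIndependent i (f t i))
    (a b : ∀ j, A j) (hab : a ≠ b)
    (hstable : ∃ T : ℕ, ∀ t : ℕ, T ≤ t → ∀ i : Fin n,
      f t i a = a i ∧ f t i b = b i) :
    ∃ (s0 : ∀ j, A j) (σ : ℕ → Finset (Fin n)),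
      (∀ t, (σ t).Nonempty) ∧ Fair σ ∧
      ¬ EventuallyConstant (dynamicsT f s0 σ) := by
  classical
  by_contra hcon
  push_neg at hcon
  have hn : 0 < n := by
    by_contra h
    exact hab (funext fun i => absurd i.isLt (by omega))
  haveI : Nonempty (Fin n) := ⟨⟨0, hn⟩⟩
  obtain ⟨T, hstab⟩ := hstable
  have H : NSUnsafe.SafeH f := hcon
  obtain ⟨sstar, hbiv0⟩ := NSUnsafe.exists_biv0 H hsi a b hab T hstab
  -- one stage of the construction
  have hstep : ∀ (r : ℕ) (p : ℕ × (ℕ → Finset (Fin n))),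
      NSUnsafe.NEs p.2 → NSUnsafe.Biv f (dynamicsT f sstar p.2 p.1) p.1 →
      ∃ q : ℕ × (ℕ → Finset (Fin n)),
        (NSUnsafe.NEs q.2 ∧ NSUnsafe.Biv f (dynamicsT f sstar q.2 q.1) q.1) ∧
        p.1 < q.1 ∧ (∀ v, v ≤ p.1 → q.2 v = p.2 v) ∧
        (∃ w, p.1 < w ∧ w ≤ q.1 ∧ (⟨r % n, Nat.mod_lt r hn⟩ : Fin n) ∈ q.2 w) ∧
        (∃ w w', p.1 ≤ w ∧ w < w' ∧ w' ≤ q.1 ∧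
          dynamicsT f sstar q.2 w ≠ dynamicsT f sstar q.2 w') := by
    rintro r ⟨t, σ⟩ hne hbiv
    obtain ⟨τ, u, hneτ, hu1, ⟨w1, hw11, hw12, hjw⟩, ⟨wa, wb, hwab, hwbu, hchg⟩, hbiv'⟩ :=
      NSUnsafe.biv_pr H hsi hbiv (⟨r % n, Nat.mod_lt r hn⟩ : Fin n)
    set σ' := fun v => if v ≤ t then σ v else τ v with hσ'
    have hne' : NSUnsafe.NEs σ' := by
      intro v
      by_cases h : v ≤ t
      · show (if v ≤ t then σ v else τ v).Nonempty
        rw [if_pos h]; exact hne v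
      · show (if v ≤ t then σ v else τ v).Nonempty
        rw [if_neg h]; exact hneτ v
    have hg : ∀ w, dynamicsT f sstar σ' (t + w)
        = NSUnsafe.FR f (dynamicsT f sstar σ t) t τ w := by
      intro w
      rw [NSUnsafe.dynT_add]
      have h1 : dynamicsT f sstar σ' t = dynamicsT f sstar σ t :=
        NSUnsafe.dynT_congr (fun v hv => if_pos hv)
      rw [h1]
      exact NSUnsafe.FR_congr (fun v h1 h2 => if_neg (by omega))
    refine ⟨(t + u, σ'), ⟨hne', ?_⟩, by omega, fun v hv => if_pos hv,
      ⟨t + w1, by omega, by omega, ?_⟩, ⟨t + wa, t + wb, by omega, by omega, by omega, ?_⟩⟩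
    · rw [hg u]; exact hbiv'
    · show (⟨r % n, Nat.mod_lt r hn⟩ : Fin n) ∈ (if t + w1 ≤ t then σ (t + w1) else τ (t + w1))
      rw [if_neg (by omega)]; exact hjw
    · rw [hg wa, hg wb]; exact hchg
  choose qf hgood hlt hagree hhit hchg using hstep
  have hgood0 : NSUnsafe.NEs (fun _ : ℕ => (Finset.univ : Finset (Fin n))) ∧
      NSUnsafe.Biv f (dynamicsT f sstar (fun _ => Finset.univ) 0) 0 :=
    ⟨fun _ => Finset.univ_nonempty, hbiv0⟩
  let seq : ℕ → {p : ℕ × (ℕ → Finset (Fin n)) //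
      NSUnsafe.NEs p.2 ∧ NSUnsafe.Biv f (dynamicsT f sstar p.2 p.1) p.1} :=
    fun r => Nat.rec ⟨((0 : ℕ), fun _ => Finset.univ), hgood0⟩
      (fun r ih => ⟨qf r ih.1 ih.2.1 ih.2.2, hgood r ih.1 ih.2.1 ih.2.2⟩) r
  set tr : ℕ → ℕ := fun r => (seq r).1.1 with htr_def
  set sr : ℕ → ℕ → Finset (Fin n) := fun r => (seq r).1.2 with hsr_def
  have hseqS : ∀ r, (seq (r + 1)).1 = qf r (seq r).1 (seq r).2.1 (seq r).2.2 := fun r => rfl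
  have hlt' : ∀ r, tr r < tr (r + 1) := by
    intro r
    have h := hlt r (seq r).1 (seq r).2.1 (seq r).2.2
    rw [← hseqS r] at h
    exact h
  have hagree' : ∀ r, ∀ v, v ≤ tr r → sr (r + 1) v = sr r v := by
    intro r v hv
    have h := hagree r (seq r).1 (seq r).2.1 (seq r).2.2 v hv
    rw [← hseqS r] at h
    exact h
  have htrr : ∀ r, r ≤ tr r := by
    intro r
    induction r with
    | zero => exact Nat.zero_le _
    | succ r ih => have := hlt' r; omega
  have htrmono : ∀ r r', r ≤ r' → tr r ≤ tr r' := by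
    intro r r' h
    induction r' with
    | zero => have : r = 0 := by omega
              subst this; exact le_rfl
    | succ r' ih =>
      rcases Nat.lt_or_ge r (r' + 1) with h1 | h1
      · have := hlt' r'; have := ih (by omega); omega
      · have : r = r' + 1 := by omega
        subst this; exact le_rfl
  have hagree2 : ∀ r r', r ≤ r' → ∀ v, v ≤ tr r → sr r' v = sr r v := by
    intro r r' h
    induction r' with
    | zero => intro v hv
              have : r = 0 := by omega
              subst this; rfl
    | succ r' ih =>
      intro v hv
      rcases Nat.lt_or_ge r (r' + 1) with h1 | h1
      · rw [hagree' r' v (hv.trans (htrmono r r' (by omega)))]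
        exact ih (by omega) v hv
      · have : r = r' + 1 := by omega
        subst this; rfl
  set σF : ℕ → Finset (Fin n) := fun v => sr v v with hσF_def
  have hσF : ∀ r v, v ≤ tr r → σF v = sr r v := by
    intro r v hv
    rcases le_total v r with h | h
    · exact (hagree2 v r h v (htrr v)).symm
    · exact hagree2 r v h v hv
  have hNE : ∀ v, (σF v).Nonempty := fun v => (seq v).2.1 v
  have hrunF : ∀ r, ∀ w, w ≤ tr r →
      dynamicsT f sstar σF w = dynamicsT f sstar (sr r) w :=
    fun r w hw => NSUnsafe.dynT_congr (fun v hv => hσF r v (hv.trans hw))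
  have hFair : Fair σF := by
    intro i N
    set r := (i : ℕ) + n * (N + 1) with hrdef
    have hrmod : r % n = (i : ℕ) := by
      rw [hrdef, Nat.mul_comm, Nat.add_mul_mod_self_right]
      exact Nat.mod_eq_of_lt i.isLt
    have hrN : N < r := by
      have h1 : N + 1 ≤ n * (N + 1) := Nat.le_mul_of_pos_left (N + 1) hn
      omega
    obtain ⟨w, hw1, hw2, hwmem⟩ := hhit r (seq r).1 (seq r).2.1 (seq r).2.2
    rw [← hseqS r] at hwmem hw2
    have hw1' : tr r < w := hw1
    have hw2' : w ≤ tr (r + 1) := hw2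
    refine ⟨w, by have := htrr r; omega, ?_⟩
    have heq : σF w = sr (r + 1) w := hσF (r + 1) w hw2'
    rw [heq]
    have hieq : (⟨r % n, Nat.mod_lt r hn⟩ : Fin n) = i := Fin.ext hrmod
    rw [← hieq]
    exact hwmem
  have hec := H sstar σF hNE hFair
  obtain ⟨t0, ht0⟩ := hec
  obtain ⟨wa, wb, hw1, hw2, hw3, hnc⟩ := hchg t0 (seq t0).1 (seq t0).2.1 (seq t0).2.2
  rw [← hseqS t0] at hw3 hnc
  have hw1' : tr t0 ≤ wa := hw1
  have hw3' : wb ≤ tr (t0 + 1) := hw3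
  apply hnc
  have hmt : tr t0 ≤ tr (t0 + 1) := le_of_lt (hlt' t0)
  have hwa : dynamicsT f sstar (sr (t0 + 1)) wa = dynamicsT f sstar σF wa :=
    (hrunF (t0 + 1) wa (by omega)).symm
  have hwb : dynamicsT f sstar (sr (t0 + 1)) wb = dynamicsT f sstar σF wb :=
    (hrunF (t0 + 1) wb (by omega)).symm
  have h1 : dynamicsT f sstar σF wa = dynamicsT f sstar σF t0 :=
    ht0 wa (by have := htrr t0; omega)
  have h2 : dynamicsT f sstar σF wb = dynamicsT f sstar σF t0 :=
    ht0 wb (by have := htrr t0; omega)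
  rw [hwa, hwb, h1, h2]
end

section
/- Model an asynchronous Boolean circuit with n components (inputs and logic gates) as an interaction system in which each component i has action space {0,1} and a deterministic, historyless, self-independent reaction function g_i : {0,1}^n → {0,1} (the gate's truth table, which does not depend on the gate's own current output). A stable Boolean assignment is a vector a ∈ {0,1}^n with g_i(a) = a_i for all i; the circuit is inherently stable if for every initial Boolean assignment and every fair schedule the dynamics is eventually constant. Theorem: if two distinct stable Boolean assignments exist for the circuit, then the circuit is not inherently stable. -/
namespace CircuitAux

variable {n : ℕ} {g : ∀ _ : Fin n, (Fin n → Bool) → Bool}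

variable (g) in
def stp (I : Finset (Fin n)) (x : Fin n → Bool) : Fin n → Bool :=
  fun j => if j ∈ I then g j x else x j

variable (g) in
def exec (x : Fin n → Bool) : List (Finset (Fin n)) → (Fin n → Bool)
  | [] => x
  | I :: L => exec (stp g I x) L

def Good (L : List (Finset (Fin n))) : Prop := ∀ I ∈ L, I.Nonempty

variable (g) in
def Rch (x y : Fin n → Bool) : Prop := ∃ L, Good L ∧ exec g x L = y

variable (g) in
def Fx (v : Fin n → Bool) : Prop := ∀ i, g i v = v i

variable (g) in
def Biv (x : Fin n → Bool) : Prop :=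
  ∃ p q, Fx g p ∧ Fx g q ∧ Rch g x p ∧ Rch g x q ∧ p ≠ q

variable (g) in
def Unv (x p : Fin n → Bool) : Prop :=
  Fx g p ∧ Rch g x p ∧ ∀ q, Fx g q → Rch g x q → q = p

lemma exec_append (x : Fin n → Bool) (L1 L2 : List (Finset (Fin n))) :
    exec g x (L1 ++ L2) = exec g (exec g x L1) L2 := by
  induction L1 generalizing x with
  | nil => rfl
  | cons I L ih => simp [exec, ih]

lemma Rch.refl (x : Fin n → Bool) : Rch g x x := ⟨[], by simp [Good], rfl⟩

lemma Rch.trans {x y z : Fin n → Bool} (h1 : Rch g x y) (h2 : Rch g y z) :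
    Rch g x z := by
  obtain ⟨L1, g1, e1⟩ := h1; obtain ⟨L2, g2, e2⟩ := h2
  refine ⟨L1 ++ L2, ?_, by rw [exec_append, e1, e2]⟩
  intro I hI
  rcases List.mem_append.1 hI with h | h
  exacts [g1 I h, g2 I h]

lemma Rch.single {I : Finset (Fin n)} (hI : I.Nonempty) (x : Fin n → Bool) :
    Rch g x (stp g I x) := ⟨[I], by simpa [Good], rfl⟩

lemma stp_fx {v : Fin n → Bool} (hv : Fx g v) (I : Finset (Fin n)) :
    stp g I v = v := by
  funext j; by_cases h : j ∈ I <;> simp [stp, h, hv j]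

lemma rch_fx {v y : Fin n → Bool} (hv : Fx g v) (h : Rch g v y) : y = v := by
  obtain ⟨L, -, e⟩ := h
  suffices h : exec g v L = v by rw [← e, h]
  clear e
  induction L with
  | nil => rfl
  | cons I L ih => simp [exec, stp_fx hv, ih]

variable (hsi : ∀ i, SelfIndependent (A := fun _ : Fin n => Bool) i (g i))
include hsi

lemma stp_merge {i : Fin n} {x y : Fin n → Bool}
    (h : ∀ j, j ≠ i → x j = y j) : stp g {i} x = stp g {i} y := by
  funext j
  by_cases hj : j = i
  · subst hj; simp [stp, hsi j x y h]
  · simp [stp, hj, h j hj]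

omit hsi in
lemma stp_insert_ne {i j : Fin n} (hj : j ≠ i) (I : Finset (Fin n))
    (x : Fin n → Bool) : stp g (insert i I) x j = stp g I x j := by
  simp [stp, Finset.mem_insert, hj]

lemma stp_comm (i : Fin n) (I : Finset (Fin n)) (x : Fin n → Bool) :
    stp g {i} (stp g (insert i I) x) = stp g {i} (stp g I x) :=
  stp_merge hsi (fun j hj => stp_insert_ne hj I x)


section
variable (Hne : ∀ x : Fin n → Bool, ∃ p, Fx g p ∧ Rch g x p)
include Hne

omit hsi in
lemma unv_of_not_biv {x : Fin n → Bool} (h : ¬ Biv g x) : ∃ p, Unv g x p := by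
  obtain ⟨p, hp, hrp⟩ := Hne x
  refine ⟨p, hp, hrp, fun q hq hrq => ?_⟩
  by_contra hne
  exact h ⟨q, p, hq, hp, hrq, hrp, hne⟩

omit hsi in
lemma unv_follow {x y p : Fin n → Bool} (h : Unv g x p) (hxy : Rch g x y) :
    Unv g y p := by
  obtain ⟨q, hq, hrq⟩ := Hne y
  have hqp : q = p := h.2.2 q hq (hxy.trans hrq)
  exact ⟨h.1, hqp ▸ hrq, fun q' hq' hrq' => h.2.2 q' hq' (hxy.trans hrq')⟩

omit hsi Hne in
lemma unv_unique {x p p' : Fin n → Bool} (h : Unv g x p) (h' : Unv g x p') :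
    p = p' := h'.2.2 p h.1 h.2.1

lemma exists_biv {a b : Fin n → Bool} (hab : a ≠ b) (ha : Fx g a)
    (hb : Fx g b) : ∃ x, Biv g x := by
  by_contra hnb
  push_neg at hnb
  -- unique reachable fixed point function
  have hu : ∀ x, ∃ p, Unv g x p := fun x => unv_of_not_biv Hne (hnb x)
  classical
  set u : (Fin n → Bool) → (Fin n → Bool) := fun x => (hu x).choose with hudef
  have huspec : ∀ x, Unv g x (u x) := fun x => (hu x).choose_spec
  have step_eq : ∀ (i : Fin n) (x y : Fin n → Bool),
      (∀ j, j ≠ i → x j = y j) → u x = u y := by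
    intro i x y h
    have hz : stp g {i} x = stp g {i} y := stp_merge hsi h
    have h1 : u x = u (stp g {i} x) := by
      have h2 : Rch g x (u (stp g {i} x)) :=
        (Rch.single (Finset.singleton_nonempty i) x).trans (huspec _).2.1
      exact ((huspec x).2.2 _ (huspec _).1 h2).symm
    have h1' : u y = u (stp g {i} y) := by
      have h2 : Rch g y (u (stp g {i} y)) :=
        (Rch.single (Finset.singleton_nonempty i) y).trans (huspec _).2.1
      exact ((huspec y).2.2 _ (huspec _).1 h2).symm
    rw [h1, h1', hz]
  have key : ∀ (D : Finset (Fin n)) (x y : Fin n → Bool),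
      (∀ j, j ∉ D → x j = y j) → u x = u y := by
    intro D
    induction D using Finset.induction_on with
    | empty =>
      intro x y h
      have : x = y := funext fun j => h j (Finset.notMem_empty j)
      rw [this]
    | @insert j D hj ih =>
      intro x y h
      set y' := Function.update y j (x j) with hy'
      have h1 : ∀ j', j' ∉ D → x j' = y' j' := by
        intro j' hj'
        by_cases hjj : j' = j
        · subst hjj; simp [hy']
        · have : y' j' = y j' := Function.update_of_ne hjj _ _
          rw [this]
          exact h j' (by simp [hjj, hj'])
      have h2 : u x = u y' := ih x y' h1
      have h3 : u y' = u y :=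
        step_eq j y' y (fun j' hj' => Function.update_of_ne hj' _ _)
      rw [h2, h3]
  have hua : a = u a := (huspec a).2.2 a ha (Rch.refl a)
  have hub : b = u b := (huspec b).2.2 b hb (Rch.refl b)
  exact hab (hua.trans ((key Finset.univ a b (fun j hj => absurd (Finset.mem_univ j) hj)).trans hub.symm))

/-- Key FLP-style lemma: from a bivalent state, for each node `i`, one can
reach a bivalent state via a sequence activating `i`. -/
lemma lemL {x : Fin n → Bool} (hx : Biv g x) (i : Fin n) :
    ∃ L, Good L ∧ (∃ I ∈ L, i ∈ I) ∧ Biv g (exec g x L) := by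
  classical
  by_contra H
  push_neg at H
  -- Rf : reachable without activating i
  set Rf : (Fin n → Bool) → Prop :=
    fun t => ∃ L, Good L ∧ (∀ I ∈ L, i ∉ I) ∧ exec g x L = t with hRf
  have hRfx : Rf x := ⟨[], by simp [Good], by simp, rfl⟩
  have H1 : ∀ t, Rf t → ∀ I : Finset (Fin n), i ∈ I → ∀ y,
      Rch g (stp g I t) y → ¬ Biv g y := by
    rintro t ⟨Lf, hGf, -, hef⟩ I hiI y ⟨Ly, hGy, hey⟩ hBy
    refine H (Lf ++ I :: Ly) ?_ ⟨I, by simp, hiI⟩ ?_ |>.elim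
    · intro J hJ
      rcases List.mem_append.1 hJ with h | h
      · exact hGf J h
      · rcases List.mem_cons.1 h with h | h
        · exact h ▸ ⟨i, hiI⟩
        · exact hGy J h
    · rw [exec_append, hef]
      show Biv g (exec g (stp g I t) Ly)
      rw [hey]; exact hBy
  have uv : ∀ t, Rf t → ∀ I : Finset (Fin n), i ∈ I →
      ∃ p, Unv g (stp g I t) p := by
    intro t ht I hiI
    exact unv_of_not_biv Hne (H1 t ht I hiI _ (Rch.refl _))
  have crux : ∀ t, Rf t → ∀ J : Finset (Fin n), i ∉ J →
      ∀ p, Unv g (stp g {i} t) p → Unv g (stp g (insert i J) t) p := by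
    intro t ht J
    induction J using Finset.induction_on with
    | empty => intro _ p hp; simpa using hp
    | @insert j J hj ih =>
      intro hiJ p hp
      have hji : j ≠ i := fun h => hiJ (h ▸ Finset.mem_insert_self j J)
      have hiJ' : i ∉ J := fun h => hiJ (Finset.mem_insert_of_mem h)
      have hIH : Unv g (stp g (insert i J) t) p := ih hiJ' p hp
      set wI := stp g (insert j (insert i J)) t with hwI
      set wJ := stp g (insert i J) t with hwJ
      have hdiff : ∀ j', j' ≠ j → wI j' = wJ j' :=
        fun j' hj' => stp_insert_ne hj' (insert i J) t
      have hz : stp g {j} wI = stp g {j} wJ := stp_merge hsi hdiff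
      have hzp : Unv g (stp g {j} wJ) p :=
        unv_follow Hne hIH (Rch.single (Finset.singleton_nonempty j) wJ)
      obtain ⟨p', hp'⟩ := uv t ht (insert j (insert i J))
        (Finset.mem_insert_of_mem (Finset.mem_insert_self i J))
      have hzp' : Unv g (stp g {j} wI) p' :=
        unv_follow Hne hp' (Rch.single (Finset.singleton_nonempty j) wI)
      rw [hz] at hzp'
      have : p' = p := unv_unique hzp' hzp
      rw [Finset.insert_comm]
      exact this ▸ hp'
  have commcor : ∀ t, Rf t → ∀ J : Finset (Fin n), i ∉ J →
      ∀ p, Unv g (stp g {i} t) p → Unv g (stp g {i} (stp g J t)) p := by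
    intro t ht J hiJ p hp
    have h1 : Unv g (stp g (insert i J) t) p := crux t ht J hiJ p hp
    rw [← stp_comm hsi]
    exact unv_follow Hne h1 (Rch.single (Finset.singleton_nonempty i) _)
  obtain ⟨p, q, hp, hq, hxp, hxq, hpq⟩ := hx
  obtain ⟨ρ, hρ⟩ := uv x hRfx {i} (Finset.mem_singleton_self i)
  have claim : ∀ (L : List (Finset (Fin n))), Good L →
      ∀ t, Rf t → Unv g (stp g {i} t) ρ →
      ∀ r, Fx g r → exec g t L = r → r = ρ := by
    intro L
    induction L with
    | nil =>
      intro _ t ht hU r hr he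
      have : t = r := he
      subst this
      rw [stp_fx hr] at hU
      exact (rch_fx hr hU.2.1).symm
    | cons I L ih =>
      intro hGood t ht hU r hr he
      by_cases hiI : i ∈ I
      · have hIrw : insert i (I.erase i) = I := Finset.insert_erase hiI
        have h1 : Unv g (stp g I t) ρ := by
          rw [← hIrw]
          exact crux t ht (I.erase i) (Finset.notMem_erase i I) ρ hU
        have h2 : Rch g (stp g I t) r :=
          ⟨L, fun J hJ => hGood J (List.mem_cons_of_mem I hJ), he⟩
        exact h1.2.2 r hr h2
      · have ht' : Rf (stp g I t) := by
          obtain ⟨Lf, hGf, hFree, hef⟩ := ht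
          refine ⟨Lf ++ [I], ?_, ?_, ?_⟩
          · intro J hJ
            rcases List.mem_append.1 hJ with h | h
            · exact hGf J h
            · simp at h; exact h ▸ hGood I List.mem_cons_self
          · intro J hJ
            rcases List.mem_append.1 hJ with h | h
            · exact hFree J h
            · simp at h; exact h ▸ hiI
          · rw [exec_append, hef]; rfl
        have hU' : Unv g (stp g {i} (stp g I t)) ρ := commcor t ht I hiI ρ hU
        exact ih (fun J hJ => hGood J (List.mem_cons_of_mem I hJ)) _ ht' hU' r hr he
  obtain ⟨Lp, hGp, hep⟩ := hxp
  obtain ⟨Lq, hGq, heq⟩ := hxq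
  exact hpq ((claim Lp hGp x hRfx hρ p hp hep).trans
    (claim Lq hGq x hRfx hρ q hq heq).symm)

end

end CircuitAux
namespace CircuitAux

structure MS (n : ℕ) where
  x : Fin n → Bool
  L : List (Finset (Fin n))
  k : ℕ
  d : Bool

section Machine

variable {n : ℕ} (g : ∀ _ : Fin n, (Fin n → Bool) → Bool)
  (hsi : ∀ i, SelfIndependent (A := fun _ : Fin n => Bool) i (g i))
  (Hne : ∀ x : Fin n → Bool, ∃ p, Fx g p ∧ Rch g x p)
  (hn : 0 < n)

noncomputable def epochL (i : Fin n) (x : Fin n → Bool) :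
    List (Finset (Fin n)) := by
  classical
  exact if h : Biv g x then (lemL hsi Hne h i).choose else []

lemma epochL_spec {x : Fin n → Bool} (h : Biv g x) (i : Fin n) :
    Good (epochL g hsi Hne i x) ∧ (∃ I ∈ epochL g hsi Hne i x, i ∈ I) ∧
      Biv g (exec g x (epochL g hsi Hne i x)) := by
  rw [epochL]
  simp only [dif_pos h]
  exact (lemL hsi Hne h i).choose_spec

def idx (k : ℕ) : Fin n := ⟨k % n, Nat.mod_lt _ hn⟩

noncomputable def dTrans (m : MS n) : MS n :=
  match m.L with
  | [] =>
    match epochL g hsi Hne (idx hn (m.k + 1)) m.x with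
    | [] => ⟨m.x, [], m.k + 1, true⟩
    | I :: R => ⟨stp g I m.x, R, m.k + 1, decide (idx hn (m.k + 1) ∈ I)⟩
  | I :: R => ⟨stp g I m.x, R, m.k, m.d || decide (idx hn m.k ∈ I)⟩

noncomputable def emit (m : MS n) : Finset (Fin n) :=
  match m.L with
  | [] =>
    match epochL g hsi Hne (idx hn (m.k + 1)) m.x with
    | [] => {idx hn 0}
    | I :: _ => I
  | I :: _ => I

noncomputable def Msd (x0 : Fin n → Bool) : ℕ → MS n
  | 0 => ⟨x0, epochL g hsi Hne (idx hn 0) x0, 0, false⟩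
  | m + 1 => dTrans g hsi Hne hn (Msd x0 m)

def Inv (m : MS n) : Prop :=
  Good m.L ∧ Biv g (exec g m.x m.L) ∧
    (m.d = true ∨ ∃ I ∈ m.L, idx hn m.k ∈ I) ∧ (m.L = [] → m.d = true)

lemma dTrans_cons {m : MS n} {I : Finset (Fin n)} {R : List (Finset (Fin n))}
    (h : m.L = I :: R) :
    dTrans g hsi Hne hn m = ⟨stp g I m.x, R, m.k, m.d || decide (idx hn m.k ∈ I)⟩ ∧
      emit g hsi Hne hn m = I := by
  rw [dTrans, emit, h]
  exact ⟨rfl, rfl⟩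

lemma dTrans_nil {m : MS n} (hm : Inv g hn m) (h : m.L = []) :
    ∃ I R, epochL g hsi Hne (idx hn (m.k + 1)) m.x = I :: R ∧
      dTrans g hsi Hne hn m = ⟨stp g I m.x, R, m.k + 1, decide (idx hn (m.k + 1) ∈ I)⟩ ∧
      emit g hsi Hne hn m = I ∧ Good (I :: R) ∧
      (∃ J ∈ I :: R, idx hn (m.k + 1) ∈ J) ∧
      Biv g (exec g m.x (I :: R)) := by
  have hbx : Biv g m.x := by
    have := hm.2.1
    rw [h] at this
    exact this
  obtain ⟨hG, hEx, hB⟩ := epochL_spec g hsi Hne hbx (idx hn (m.k + 1))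
  rcases hL' : epochL g hsi Hne (idx hn (m.k + 1)) m.x with _ | ⟨I, R⟩
  · rw [hL'] at hEx; simp at hEx
  · refine ⟨I, R, rfl, ?_, ?_, ?_, ?_, ?_⟩
    · rw [dTrans, h, hL']
    · rw [emit, h, hL']
    · rw [← hL']; exact hG
    · rw [← hL']; exact hEx
    · rw [← hL']; exact hB

lemma k_trans (m : MS n) :
    (dTrans g hsi Hne hn m).k = m.k ∨ (dTrans g hsi Hne hn m).k = m.k + 1 := by
  rcases h : m.L with _ | ⟨I, R⟩
  · right
    rw [dTrans, h]
    rcases epochL g hsi Hne (idx hn (m.k + 1)) m.x with _ | ⟨I, R⟩ <;> rfl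
  · left; rw [(dTrans_cons g hsi Hne hn h).1]

lemma k_trans_nil {m : MS n} (h : m.L = []) :
    (dTrans g hsi Hne hn m).k = m.k + 1 := by
  rw [dTrans, h]
  rcases epochL g hsi Hne (idx hn (m.k + 1)) m.x with _ | ⟨I, R⟩ <;> rfl

lemma inv_trans {m : MS n} (hm : Inv g hn m) : Inv g hn (dTrans g hsi Hne hn m) := by
  rcases h : m.L with _ | ⟨I, R⟩
  · obtain ⟨I, R, hL', hd, he, hG, hEx, hB⟩ := dTrans_nil g hsi Hne hn hm h
    rw [hd]
    refine ⟨fun J hJ => hG J (List.mem_cons_of_mem I hJ), hB, ?_, ?_⟩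
    · by_cases hm2 : idx hn (m.k + 1) ∈ I
      · left; simp [hm2]
      · right
        obtain ⟨J, hJ, hJm⟩ := hEx
        rcases List.mem_cons.1 hJ with rfl | hJ
        · exact absurd hJm hm2
        · exact ⟨J, hJ, hJm⟩
    · intro hR
      subst hR
      obtain ⟨J, hJ, hJm⟩ := hEx
      rcases List.mem_cons.1 hJ with rfl | hJ
      · simp [hJm]
      · simp at hJ
  · rw [(dTrans_cons g hsi Hne hn h).1]
    have hG := hm.1
    have hB := hm.2.1
    rw [h] at hG hB
    refine ⟨fun J hJ => hG J (List.mem_cons_of_mem I hJ), hB, ?_, ?_⟩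
    · by_cases hm2 : idx hn m.k ∈ I
      · left; simp [hm2]
      · rcases hm.2.2.1 with hd | ⟨J, hJ, hJm⟩
        · left; simp [hd]
        · rw [h] at hJ
          rcases List.mem_cons.1 hJ with rfl | hJ
          · exact absurd hJm hm2
          · right; exact ⟨J, hJ, hJm⟩
    · intro hR
      subst hR
      rcases hm.2.2.1 with hd | ⟨J, hJ, hJm⟩
      · simp [hd]
      · rw [h] at hJ
        rcases List.mem_cons.1 hJ with rfl | hJ
        · simp [hJm]
        · simp at hJ

end Machine
end CircuitAux

namespace CircuitAux
section Run

variable {n : ℕ} (g : ∀ _ : Fin n, (Fin n → Bool) → Bool)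
  (hsi : ∀ i, SelfIndependent (A := fun _ : Fin n => Bool) i (g i))
  (Hne : ∀ x : Fin n → Bool, ∃ p, Fx g p ∧ Rch g x p)
  (hn : 0 < n) (x0 : Fin n → Bool)

noncomputable def tau (m : ℕ) : Finset (Fin n) :=
  emit g hsi Hne hn (Msd g hsi Hne hn x0 m)

lemma inv_all (hx0 : Biv g x0) (m : ℕ) : Inv g hn (Msd g hsi Hne hn x0 m) := by
  induction m with
  | zero =>
    obtain ⟨hG, hEx, hB⟩ := epochL_spec g hsi Hne hx0 (idx hn 0)
    refine ⟨hG, hB, Or.inr hEx, ?_⟩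
    intro h
    exfalso
    have h' : epochL g hsi Hne (idx hn 0) x0 = [] := h
    rw [h'] at hEx
    simp at hEx
  | succ m ih => exact inv_trans g hsi Hne hn ih

lemma x_succ (hx0 : Biv g x0) (m : ℕ) :
    (Msd g hsi Hne hn x0 (m + 1)).x =
      stp g (tau g hsi Hne hn x0 m) ((Msd g hsi Hne hn x0 m).x) := by
  rcases h : (Msd g hsi Hne hn x0 m).L with _ | ⟨I, R⟩
  · obtain ⟨I, R, -, hd, he, -, -, -⟩ :=
      dTrans_nil g hsi Hne hn (inv_all g hsi Hne hn x0 hx0 m) h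
    show (dTrans g hsi Hne hn _).x = _
    rw [hd, tau, he]
  · have := dTrans_cons g hsi Hne hn h
    show (dTrans g hsi Hne hn _).x = _
    rw [this.1, tau, this.2]

lemma tau_nonempty (hx0 : Biv g x0) (m : ℕ) : (tau g hsi Hne hn x0 m).Nonempty := by
  rcases h : (Msd g hsi Hne hn x0 m).L with _ | ⟨I, R⟩
  · obtain ⟨I, R, -, -, he, hG, -, -⟩ :=
      dTrans_nil g hsi Hne hn (inv_all g hsi Hne hn x0 hx0 m) h
    rw [tau, he]
    exact hG I List.mem_cons_self
  · rw [tau, (dTrans_cons g hsi Hne hn h).2]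
    have := (inv_all g hsi Hne hn x0 hx0 m).1
    rw [h] at this
    exact this I List.mem_cons_self

lemma k_le (m : ℕ) : (Msd g hsi Hne hn x0 m).k ≤ m := by
  induction m with
  | zero => exact le_refl 0
  | succ m ih =>
    rcases k_trans g hsi Hne hn (Msd g hsi Hne hn x0 m) with h | h
    · exact le_trans (le_of_eq h) (le_trans ih (Nat.le_succ m))
    · show (dTrans g hsi Hne hn _).k ≤ m + 1
      omega

lemma progress : ∀ (l m : ℕ), (Msd g hsi Hne hn x0 m).L.length ≤ l →
    ∃ m', m < m' ∧ (Msd g hsi Hne hn x0 m').k = (Msd g hsi Hne hn x0 m).k + 1 := by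
  intro l
  induction l with
  | zero =>
    intro m hl
    have hnil : (Msd g hsi Hne hn x0 m).L = [] := List.eq_nil_of_length_eq_zero (Nat.le_zero.1 hl)
    exact ⟨m + 1, Nat.lt_succ_self m, k_trans_nil g hsi Hne hn hnil⟩
  | succ l ih =>
    intro m hl
    rcases h : (Msd g hsi Hne hn x0 m).L with _ | ⟨I, R⟩
    · exact ⟨m + 1, Nat.lt_succ_self m, k_trans_nil g hsi Hne hn h⟩
    · have hd := dTrans_cons g hsi Hne hn h
      have hL1 : (Msd g hsi Hne hn x0 (m + 1)).L = R := by
        show (dTrans g hsi Hne hn _).L = R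
        rw [hd.1]
      have hk1 : (Msd g hsi Hne hn x0 (m + 1)).k = (Msd g hsi Hne hn x0 m).k := by
        show (dTrans g hsi Hne hn _).k = _
        rw [hd.1]
      have hlen : (Msd g hsi Hne hn x0 (m + 1)).L.length ≤ l := by
        rw [hL1]
        have : (I :: R).length ≤ l + 1 := h ▸ hl
        simpa using this
      obtain ⟨m', hm', hk'⟩ := ih (m + 1) hlen
      exact ⟨m', lt_trans (Nat.lt_succ_self m) hm', by rw [hk', hk1]⟩

lemma reach_k : ∀ κ : ℕ, ∃ m, (Msd g hsi Hne hn x0 m).k = κ := by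
  intro κ
  induction κ with
  | zero => exact ⟨0, rfl⟩
  | succ κ ih =>
    obtain ⟨m, hm⟩ := ih
    obtain ⟨m', -, hk'⟩ := progress g hsi Hne hn x0
      (Msd g hsi Hne hn x0 m).L.length m (le_refl _)
    exact ⟨m', by rw [hk', hm]⟩

/-- For each positive epoch number κ, there is a fetch time `m0 ≥ κ - 1`:
the machine list is empty at `m0`, the state at `m0` is bivalent, and the
counter becomes κ at `m0 + 1`. -/
lemma fetch_time (hx0 : Biv g x0) (κ : ℕ) (hκ : 0 < κ) :
    ∃ m0, κ - 1 ≤ m0 ∧ (Msd g hsi Hne hn x0 m0).L = [] ∧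
      (Msd g hsi Hne hn x0 (m0 + 1)).k = κ ∧
      Biv g ((Msd g hsi Hne hn x0 m0).x) := by
  classical
  have hex := reach_k g hsi Hne hn x0 κ
  have hmk : (Msd g hsi Hne hn x0 (Nat.find hex)).k = κ := Nat.find_spec hex
  have hmge : κ ≤ Nat.find hex := by
    have := k_le g hsi Hne hn x0 (Nat.find hex)
    omega
  obtain ⟨m0, hme⟩ : ∃ m0, Nat.find hex = m0 + 1 := ⟨Nat.find hex - 1, by omega⟩
  rw [hme] at hmk
  have hm0lt : m0 < Nat.find hex := by omega
  have hne' : (Msd g hsi Hne hn x0 m0).k ≠ κ := Nat.find_min hex hm0lt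
  have hnil : (Msd g hsi Hne hn x0 m0).L = [] := by
    rcases h : (Msd g hsi Hne hn x0 m0).L with _ | ⟨I, R⟩
    · rfl
    · exfalso
      have : (Msd g hsi Hne hn x0 (m0 + 1)).k = (Msd g hsi Hne hn x0 m0).k := by
        show (dTrans g hsi Hne hn _).k = _
        rw [(dTrans_cons g hsi Hne hn h).1]
      exact hne' (this ▸ hmk)
  have hbiv : Biv g ((Msd g hsi Hne hn x0 m0).x) := by
    have := (inv_all g hsi Hne hn x0 hx0 m0).2.1
    rw [hnil] at this
    exact this
  exact ⟨m0, by omega, hnil, hmk, hbiv⟩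

lemma claimB : ∀ (l m : ℕ) (j : Fin n), (Msd g hsi Hne hn x0 m).L.length ≤ l →
    (∃ I ∈ (Msd g hsi Hne hn x0 m).L, j ∈ I) →
    ∃ m', m ≤ m' ∧ j ∈ tau g hsi Hne hn x0 m' := by
  intro l
  induction l with
  | zero =>
    intro m j hl hex
    rw [List.eq_nil_of_length_eq_zero (Nat.le_zero.1 hl)] at hex
    simp at hex
  | succ l ih =>
    intro m j hl hex
    rcases h : (Msd g hsi Hne hn x0 m).L with _ | ⟨I, R⟩
    · rw [h] at hex; simp at hex
    · rw [h] at hex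
      by_cases hj : j ∈ I
      · exact ⟨m, le_refl m, by rw [tau, (dTrans_cons g hsi Hne hn h).2]; exact hj⟩
      · obtain ⟨J, hJ, hJm⟩ := hex
        have hJR : J ∈ R := by
          rcases List.mem_cons.1 hJ with rfl | hJR
          · exact absurd hJm hj
          · exact hJR
        have hL1 : (Msd g hsi Hne hn x0 (m + 1)).L = R := by
          show (dTrans g hsi Hne hn _).L = R
          rw [(dTrans_cons g hsi Hne hn h).1]
        have hlen : (Msd g hsi Hne hn x0 (m + 1)).L.length ≤ l := by
          rw [hL1]
          have : (I :: R).length ≤ l + 1 := h ▸ hl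
          simpa using this
        obtain ⟨m', hm', hjm'⟩ := ih (m + 1) j hlen (by rw [hL1]; exact ⟨J, hJR, hJm⟩)
        exact ⟨m', le_trans (Nat.le_succ m) hm', hjm'⟩

lemma fair_tau (hx0 : Biv g x0) (j : Fin n) (N : ℕ) :
    ∃ m', N ≤ m' ∧ j ∈ tau g hsi Hne hn x0 m' := by
  set κ := (j : ℕ) + n * (N + 1) with hκdef
  have hκpos : 0 < κ := by positivity
  have hκge : N + 1 ≤ κ := by
    have : N + 1 ≤ n * (N + 1) := Nat.le_mul_of_pos_left _ hn
    omega
  have hidx : idx hn κ = j := by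
    apply Fin.ext
    show κ % n = (j : ℕ)
    rw [hκdef, Nat.add_mul_mod_self_left]
    exact Nat.mod_eq_of_lt j.isLt
  obtain ⟨m0, hm0, hnil, hk1, -⟩ := fetch_time g hsi Hne hn x0 hx0 κ hκpos
  obtain ⟨I, R, -, hd, he, -, hEx, -⟩ :=
    dTrans_nil g hsi Hne hn (inv_all g hsi Hne hn x0 hx0 m0) hnil
  have hkm0 : (Msd g hsi Hne hn x0 (m0 + 1)).k = (Msd g hsi Hne hn x0 m0).k + 1 :=
    k_trans_nil g hsi Hne hn hnil
  have hkm0' : (Msd g hsi Hne hn x0 m0).k + 1 = κ := hkm0 ▸ hk1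
  by_cases hjI : j ∈ I
  · exact ⟨m0, by omega, by
      show j ∈ emit g hsi Hne hn _
      rw [he]; exact hjI⟩
  · -- the flag at m0+1 is false, so the invariant gives a pending set with j
    have hstate : Msd g hsi Hne hn x0 (m0 + 1) =
        ⟨stp g I (Msd g hsi Hne hn x0 m0).x, R, (Msd g hsi Hne hn x0 m0).k + 1,
          decide (idx hn ((Msd g hsi Hne hn x0 m0).k + 1) ∈ I)⟩ := hd
    have hdfalse : (Msd g hsi Hne hn x0 (m0 + 1)).d = false := by
      rw [hstate]
      simp only [decide_eq_false_iff_not]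
      rw [hkm0']
      rw [hidx]
      exact hjI
    have hinv := (inv_all g hsi Hne hn x0 hx0 (m0 + 1)).2.2.1
    rcases hinv with hdt | hex
    · rw [hdfalse] at hdt; simp at hdt
    · rw [hk1, hidx] at hex
      obtain ⟨m', hm', hjm'⟩ := claimB g hsi Hne hn x0
        (Msd g hsi Hne hn x0 (m0 + 1)).L.length (m0 + 1) j (le_refl _) hex
      exact ⟨m', by omega, hjm'⟩

lemma biv_times (hx0 : Biv g x0) (N : ℕ) :
    ∃ m, N ≤ m ∧ Biv g ((Msd g hsi Hne hn x0 m).x) := by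
  obtain ⟨m0, hm0, -, -, hbiv⟩ := fetch_time g hsi Hne hn x0 hx0 (N + 1) (Nat.succ_pos N)
  exact ⟨m0, by omega, hbiv⟩

end Run
end CircuitAux

namespace CircuitAux

lemma fx_of_const {n : ℕ} {g : ∀ _ : Fin n, (Fin n → Bool) → Bool}
    {s0 : Fin n → Bool} {σ : ℕ → Finset (Fin n)} (hfair : Fair σ) {t0 : ℕ}
    (hc : ∀ t, t0 ≤ t → dynamics g s0 σ t = dynamics g s0 σ t0) :
    Fx g (dynamics g s0 σ t0) := by
  intro i
  obtain ⟨t, ht, hit⟩ := hfair i (t0 + 1)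
  obtain ⟨t', rfl⟩ : ∃ t', t = t' + 1 := ⟨t - 1, by omega⟩
  have h1 := hc (t' + 1) (by omega)
  have h2 := hc t' (by omega)
  have h3 : dynamics g s0 σ (t' + 1) i = g i (dynamics g s0 σ t') := by
    show (if i ∈ σ (t' + 1) then g i (dynamics g s0 σ t')
      else dynamics g s0 σ t' i) = _
    rw [if_pos hit]
  rw [h1, h2] at h3
  exact h3.symm

lemma dynamics_succ_stp {n : ℕ} (g : ∀ _ : Fin n, (Fin n → Bool) → Bool)
    (s0 : Fin n → Bool) (σ : ℕ → Finset (Fin n)) (t : ℕ) :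
    dynamics g s0 σ (t + 1) = stp g (σ (t + 1)) (dynamics g s0 σ t) := rfl

lemma rch_dyn {n : ℕ} {g : ∀ _ : Fin n, (Fin n → Bool) → Bool}
    {s0 : Fin n → Bool} {σ : ℕ → Finset (Fin n)} (hne : ∀ t, (σ t).Nonempty)
    (t : ℕ) : Rch g s0 (dynamics g s0 σ t) := by
  induction t with
  | zero => exact Rch.refl s0
  | succ t ih =>
    rw [dynamics_succ_stp]
    exact ih.trans (Rch.single (hne (t + 1)) _)

end CircuitAux
/-- An asynchronous Boolean circuit, modelled as an
interaction system whose components have action space `Bool` and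
deterministic, historyless, self-independent reaction functions (truth
tables), is not inherently stable whenever it admits two distinct stable
Boolean assignments. -/
theorem circuit_two_stable_assignments_not_inherently_stable
    {n : ℕ} (g : ∀ _ : Fin n, (Fin n → Bool) → Bool)
    (hsi : ∀ i, SelfIndependent (A := fun _ : Fin n => Bool) i (g i))
    (a b : Fin n → Bool) (hab : a ≠ b)
    (ha : ∀ i, g i a = a i) (hb : ∀ i, g i b = b i) :
    ∃ (s0 : Fin n → Bool) (σ : ℕ → Finset (Fin n)),
      (∀ t, (σ t).Nonempty) ∧ Fair σ ∧
      ¬ EventuallyConstant (dynamics g s0 σ) := by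
  classical
  rcases Nat.eq_zero_or_pos n with hn0 | hn
  · exfalso
    apply hab
    funext i
    exact absurd i.isLt (by omega)
  by_cases Hne : ∀ x : Fin n → Bool, ∃ p, CircuitAux.Fx g p ∧ CircuitAux.Rch g x p
  · obtain ⟨x0, hx0⟩ := CircuitAux.exists_biv hsi Hne hab ha hb
    set σ : ℕ → Finset (Fin n) := fun t => CircuitAux.tau g hsi Hne hn x0 (t - 1)
      with hσ
    have hfair : Fair σ := by
      intro j N
      obtain ⟨m', hm', hj⟩ := CircuitAux.fair_tau g hsi Hne hn x0 hx0 j N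
      refine ⟨m' + 1, by omega, ?_⟩
      have : σ (m' + 1) = CircuitAux.tau g hsi Hne hn x0 m' := by
        simp [hσ]
      rw [this]
      exact hj
    refine ⟨x0, σ, ?_, hfair, ?_⟩
    · intro t
      exact CircuitAux.tau_nonempty g hsi Hne hn x0 hx0 (t - 1)
    · rintro ⟨t0, hc⟩
      have hdyn : ∀ t, dynamics g x0 σ t = (CircuitAux.Msd g hsi Hne hn x0 t).x := by
        intro t
        induction t with
        | zero => rfl
        | succ t ih =>
          rw [CircuitAux.dynamics_succ_stp, ih]
          have hσt : σ (t + 1) = CircuitAux.tau g hsi Hne hn x0 t := by simp [hσ]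
          rw [hσt, ← CircuitAux.x_succ g hsi Hne hn x0 hx0 t]
      have hfx : CircuitAux.Fx g (dynamics g x0 σ t0) := CircuitAux.fx_of_const hfair hc
      obtain ⟨m, hm, hbiv⟩ := CircuitAux.biv_times g hsi Hne hn x0 hx0 t0
      have h1 : (CircuitAux.Msd g hsi Hne hn x0 m).x = dynamics g x0 σ t0 := by
        rw [← hdyn m]
        exact hc m hm
      rw [h1] at hbiv
      obtain ⟨p, q, hp, hq, hrp, hrq, hpq⟩ := hbiv
      exact hpq ((CircuitAux.rch_fx hfx hrp).trans (CircuitAux.rch_fx hfx hrq).symm)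
  · push_neg at Hne
    obtain ⟨x, hx⟩ := Hne
    have hnefin : Nonempty (Fin n) := ⟨⟨0, hn⟩⟩
    refine ⟨x, fun _ => Finset.univ, fun t => Finset.univ_nonempty, ?_, ?_⟩
    · intro i N
      exact ⟨N, le_refl N, Finset.mem_univ i⟩
    · rintro ⟨t0, hc⟩
      have hfair : Fair (fun _ => (Finset.univ : Finset (Fin n))) :=
        fun i N => ⟨N, le_refl N, Finset.mem_univ i⟩
      have hfx := CircuitAux.fx_of_const (g := g) (s0 := x) hfair hc
      have hrch := CircuitAux.rch_dyn (g := g) (s0 := x)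
        (σ := fun _ => (Finset.univ : Finset (Fin n)))
        (fun t => Finset.univ_nonempty) t0
      exact hx _ hfx hrch
end

section
/- Let a social network be a finite directed graph on vertex set {1,…,n} without self-loops in which every vertex has at least one out-neighbor ('friend'). Each user i has action space {X,Y}, and i's deterministic historyless (self-independent) reaction function selects technology X if at least half of i's friends currently use X, and selects Y otherwise. Then this system is not convergent: there exist an initial assignment of technologies and a fair schedule under which the diffusion dynamics is not eventually constant (it never reaches a stable global state). -/
/-- The majority reaction function of a user in a social network: user `i`
adopts technology `X` (encoded `true`) iff at least half of `i`'s friends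
currently use `X`; otherwise `i` adopts `Y` (encoded `false`). -/
def majorityReaction {n : ℕ} (Nb : Fin n → Finset (Fin n))
    (i : Fin n) (a : Fin n → Bool) : Bool :=
  decide ((Nb i).card ≤ 2 * ((Nb i).filter (fun j => a j = true)).card)

namespace SocialAux

variable {n : ℕ}

/-- The one-step update of the profile `s` when the set `A` of nodes is activated. -/
def Step (g : ∀ _ : Fin n, (Fin n → Bool) → Bool) (s : Fin n → Bool) (A : Finset (Fin n)) :
    Fin n → Bool :=
  fun i => if i ∈ A then g i s else s i

/-- Reachability by finitely many nonempty activations. -/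
def Reach (g : ∀ _ : Fin n, (Fin n → Bool) → Bool) :
    (Fin n → Bool) → (Fin n → Bool) → Prop :=
  Relation.ReflTransGen (fun s s' => ∃ A : Finset (Fin n), A.Nonempty ∧ s' = Step g s A)

def Stb (g : ∀ _ : Fin n, (Fin n → Bool) → Bool) (s : Fin n → Bool) : Prop :=
  ∀ i, g i s = s i

/-- The set of stable states reachable from `s`. -/
def Vl (g : ∀ _ : Fin n, (Fin n → Bool) → Bool) (s : Fin n → Bool) :
    Set (Fin n → Bool) :=
  {t | Reach g s t ∧ Stb g t}

/-- `s` is bivalent: two distinct stable states are reachable from it. -/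
def Bv (g : ∀ _ : Fin n, (Fin n → Bool) → Bool) (s : Fin n → Bool) : Prop :=
  ∃ t₁ ∈ Vl g s, ∃ t₂ ∈ Vl g s, t₁ ≠ t₂

def endSt (g : ∀ _ : Fin n, (Fin n → Bool) → Bool) (s : Fin n → Bool)
    (L : List (Finset (Fin n))) : Fin n → Bool :=
  L.foldl (Step g) s

/-- A good path: all activation sets nonempty, all intermediate states bivalent. -/
def GP (g : ∀ _ : Fin n, (Fin n → Bool) → Bool) :
    (Fin n → Bool) → List (Finset (Fin n)) → Prop
  | _, [] => True
  | s, A :: L => A.Nonempty ∧ Bv g (Step g s A) ∧ GP g (Step g s A) L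

variable {g : ∀ _ : Fin n, (Fin n → Bool) → Bool}

theorem endSt_nil (s : Fin n → Bool) : endSt g s [] = s := rfl

theorem endSt_cons (s : Fin n → Bool) (A : Finset (Fin n)) (L : List (Finset (Fin n))) :
    endSt g s (A :: L) = endSt g (Step g s A) L := rfl

theorem endSt_append (s : Fin n → Bool) (L : List (Finset (Fin n))) (A : Finset (Fin n)) :
    endSt g s (L ++ [A]) = Step g (endSt g s L) A := by
  simp [endSt, List.foldl_append]

theorem vl_mono {s s' : Fin n → Bool} (A : Finset (Fin n)) (hA : A.Nonempty)
    (h : s' = Step g s A) : Vl g s' ⊆ Vl g s :=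
  fun t ht => ⟨Relation.ReflTransGen.head ⟨A, hA, h⟩ ht.1, ht.2⟩

theorem stb_step {t : Fin n → Bool} (ht : Stb g t) (A : Finset (Fin n)) :
    Step g t A = t := by
  funext i
  by_cases hi : i ∈ A <;> simp [Step, hi]
  exact ht i

theorem reach_stb {t x : Fin n → Bool} (ht : Stb g t) (h : Reach g t x) : x = t := by
  induction h with
  | refl => rfl
  | tail _ hstep ih =>
    obtain ⟨A, _, rfl⟩ := hstep
    rw [ih, stb_step ht]

theorem vl_stb {t : Fin n → Bool} (ht : Stb g t) : Vl g t = {t} := by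
  ext x
  constructor
  · intro hx; exact reach_stb ht hx.1
  · rintro rfl; exact ⟨Relation.ReflTransGen.refl, ht⟩

theorem bv_not_stb {s : Fin n → Bool} (h : Bv g s) : ¬ Stb g s := by
  intro hs
  obtain ⟨t₁, h₁, t₂, h₂, hne⟩ := h
  rw [vl_stb hs] at h₁ h₂
  exact hne (h₁.trans h₂.symm)

theorem bridge (hSI : ∀ i, SelfIndependent i (g i)) {s s' : Fin n → Bool} (i : Fin n)
    (h : ∀ j, j ≠ i → s j = s' j) : Step g s {i} = Step g s' {i} := by
  funext j
  by_cases hj : j = i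
  · subst hj
    simp only [Step, Finset.mem_singleton, if_pos rfl]
    exact hSI j s s' h
  · simp only [Step, Finset.mem_singleton, if_neg hj]
    exact h j hj

theorem gp_append {L : List (Finset (Fin n))} {s : Fin n → Bool} {A : Finset (Fin n)}
    (hL : GP g s L) (hA : A.Nonempty) (hB : Bv g (Step g (endSt g s L) A)) :
    GP g s (L ++ [A]) := by
  induction L generalizing s with
  | nil => exact ⟨hA, hB, trivial⟩
  | cons B L' ih =>
    obtain ⟨h1, h2, h3⟩ := hL
    exact ⟨h1, h2, ih h3 hB⟩

theorem gp_endBv {L : List (Finset (Fin n))} {s : Fin n → Bool}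
    (hs : Bv g s) (hL : GP g s L) : Bv g (endSt g s L) := by
  induction L generalizing s with
  | nil => exact hs
  | cons B L' ih =>
    obtain ⟨_, h2, h3⟩ := hL
    exact ih h2 h3

theorem gp_take {L : List (Finset (Fin n))} {s : Fin n → Bool}
    (hL : GP g s L) : ∀ j, GP g s (L.take j) := by
  induction L generalizing s with
  | nil => intro j; rw [List.take_nil]; trivial
  | cons B L' ih =>
    intro j
    cases j with
    | zero => exact trivial
    | succ j' =>
      obtain ⟨h1, h2, h3⟩ := hL
      exact ⟨h1, h2, ih h3 j'⟩

theorem gp_nonempty {L : List (Finset (Fin n))} {s : Fin n → Bool}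
    (hL : GP g s L) : ∀ A ∈ L, A.Nonempty := by
  induction L generalizing s with
  | nil => intro A hA; cases hA
  | cons B L' ih =>
    intro A hA
    rcases List.mem_cons.mp hA with rfl | hA'
    · exact hL.1
    · exact ih hL.2.2 A hA'

theorem gp_reach {L : List (Finset (Fin n))} {s : Fin n → Bool}
    (hL : ∀ A ∈ L, A.Nonempty) : Reach g s (endSt g s L) := by
  induction L generalizing s with
  | nil => exact Relation.ReflTransGen.refl
  | cons B L' ih =>
    refine Relation.ReflTransGen.head ⟨B, hL B (by simp), rfl⟩ ?_
    exact ih fun A hA => hL A (by simp [hA])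

theorem reach_list {s t : Fin n → Bool} (h : Reach g s t) :
    ∃ L : List (Finset (Fin n)), (∀ A ∈ L, A.Nonempty) ∧ t = endSt g s L := by
  induction h with
  | refl => exact ⟨[], by simp, rfl⟩
  | tail _ hstep ih =>
    obtain ⟨L, hL, rfl⟩ := ih
    obtain ⟨A, hA, rfl⟩ := hstep
    refine ⟨L ++ [A], ?_, (endSt_append _ _ _).symm⟩
    intro B hB
    rcases List.mem_append.mp hB with h | h
    · exact hL B h
    · simp at h; subst h; exact hA

end SocialAux

namespace SocialAux

variable {n : ℕ} {g : ∀ _ : Fin n, (Fin n → Bool) → Bool}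

noncomputable def uv (hV1 : ∀ s : Fin n → Bool, (Vl g s).Nonempty) (s : Fin n → Bool) :
    Fin n → Bool :=
  (hV1 s).some

theorem uv_mem (hV1 : ∀ s : Fin n → Bool, (Vl g s).Nonempty) (s : Fin n → Bool) :
    uv hV1 s ∈ Vl g s :=
  (hV1 s).some_mem

theorem uv_eq (hV1 : ∀ s : Fin n → Bool, (Vl g s).Nonempty) {s t : Fin n → Bool}
    (hU : ¬ Bv g s) (ht : t ∈ Vl g s) : t = uv hV1 s := by
  by_contra hne
  exact hU ⟨t, ht, uv hV1 s, uv_mem hV1 s, hne⟩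

theorem crux (hSI : ∀ i, SelfIndependent i (g i))
    (hV1 : ∀ s : Fin n → Bool, (Vl g s).Nonempty)
    {y : Fin n → Bool} (hy : Bv g y) (i : Fin n) :
    ∃ L : List (Finset (Fin n)), GP g y L ∧ ∃ A ∈ L, i ∈ A := by
  by_contra hOK
  push_neg at hOK
  -- hOK : ∀ L, GP g y L → ∀ A ∈ L, i ∉ A
  set BB : (Fin n → Bool) → Prop := fun z => ∃ L, GP g y L ∧ z = endSt g y L with hBBdef
  have hBB_y : BB y := ⟨[], trivial, rfl⟩
  have hBz : ∀ z, BB z → Bv g z := by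
    rintro z ⟨L, hL, rfl⟩; exact gp_endBv hy hL
  have hBext : ∀ z, BB z → ∀ A : Finset (Fin n), A.Nonempty → Bv g (Step g z A) →
      BB (Step g z A) := by
    rintro z ⟨L, hL, rfl⟩ A hA hBv
    exact ⟨L ++ [A], gp_append hL hA hBv, (endSt_append _ _ _).symm⟩
  have S2 : ∀ z, BB z → ∀ A : Finset (Fin n), i ∈ A → ¬ Bv g (Step g z A) := by
    intro z hz A hiA hBv
    obtain ⟨L, hL, rfl⟩ := hz
    exact hOK (L ++ [A]) (gp_append hL ⟨i, hiA⟩ hBv) A (by simp) hiA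
  have S3 : ∀ z, BB z → g i z ≠ z i := by
    intro z hz heq
    have hstep : Step g z {i} = z := by
      funext j
      by_cases hj : j = i
      · subst hj; simp only [Step, Finset.mem_singleton, if_pos rfl]; exact heq
      · simp only [Step, Finset.mem_singleton, if_neg hj]
    exact S2 z hz {i} (Finset.mem_singleton_self i) (by rw [hstep]; exact hBz z hz)
  -- membership agreement for inserts/erases
  have hins : ∀ (z : Fin n → Bool) (A : Finset (Fin n)) (l : Fin n), l ≠ i →
      Step g z (insert i A) l = Step g z A l := by
    intro z A l hl
    by_cases hlA : l ∈ A
    · simp only [Step, if_pos (Finset.mem_insert.mpr (Or.inr hlA)), if_pos hlA]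
    · have : l ∉ insert i A := by
        intro h; rcases Finset.mem_insert.mp h with h | h
        · exact hl h
        · exact hlA h
      simp only [Step, if_neg this, if_neg hlA]
  have S4 : ∀ (m : ℕ) (z : Fin n → Bool), BB z → ∀ A : Finset (Fin n), i ∈ A →
      A.card ≤ m → uv hV1 (Step g z A) = uv hV1 (Step g z {i}) := by
    intro m
    induction m with
    | zero =>
      intro z hz A hiA hcard
      have := Finset.card_pos.mpr ⟨i, hiA⟩
      omega
    | succ m ih =>
      intro z hz A hiA hcard
      by_cases hA : A = {i}
      · subst hA; rfl
      · have hex : ∃ j ∈ A, j ≠ i := by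
          by_contra hno
          push_neg at hno
          exact hA (Finset.eq_singleton_iff_unique_mem.mpr ⟨hiA, hno⟩)
        obtain ⟨j, hjA, hji⟩ := hex
        have hiA' : i ∈ A.erase j := Finset.mem_erase.mpr ⟨Ne.symm hji, hiA⟩
        have hcard' : (A.erase j).card ≤ m := by
          have h1 := Finset.card_erase_of_mem hjA
          have h2 := Finset.card_pos.mpr ⟨i, hiA⟩
          omega
        have hagree : ∀ l, l ≠ j → Step g z (A.erase j) l = Step g z A l := by
          intro l hl
          by_cases hlA : l ∈ A
          · simp only [Step, if_pos (Finset.mem_erase.mpr ⟨hl, hlA⟩), if_pos hlA]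
          · simp only [Step, if_neg (fun h => hlA (Finset.mem_of_mem_erase h)), if_neg hlA]
        have hbr : Step g (Step g z (A.erase j)) {j} = Step g (Step g z A) {j} :=
          bridge hSI j hagree
        obtain ⟨t, htc⟩ := hV1 (Step g (Step g z (A.erase j)) {j})
        have hU1 : ¬ Bv g (Step g z (A.erase j)) := S2 z hz _ hiA'
        have hU2 : ¬ Bv g (Step g z A) := S2 z hz A hiA
        have e1 : t = uv hV1 (Step g z (A.erase j)) :=
          uv_eq hV1 hU1 (vl_mono {j} ⟨j, Finset.mem_singleton_self j⟩ rfl htc)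
        have e2 : t = uv hV1 (Step g z A) := by
          rw [hbr] at htc
          exact uv_eq hV1 hU2 (vl_mono {j} ⟨j, Finset.mem_singleton_self j⟩ rfl htc)
        rw [← e2, e1, ih z hz _ hiA' hcard']
  have S4' : ∀ (z : Fin n → Bool), BB z → ∀ A : Finset (Fin n), i ∈ A →
      uv hV1 (Step g z A) = uv hV1 (Step g z {i}) :=
    fun z hz A hiA => S4 A.card z hz A hiA le_rfl
  have S5 : ∀ (z : Fin n → Bool), BB z → ∀ A : Finset (Fin n), A.Nonempty →
      Bv g (Step g z A) →
      uv hV1 (Step g (Step g z A) {i}) = uv hV1 (Step g z {i}) := by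
    intro z hz A hA hBv
    have hUX : ¬ Bv g (Step g z (insert i A)) := S2 z hz _ (Finset.mem_insert_self i A)
    have hbr : Step g (Step g z (insert i A)) {i} = Step g (Step g z A) {i} :=
      bridge hSI i (fun l hl => hins z A l hl)
    have hz' : BB (Step g z A) := hBext z hz A hA hBv
    have hU' : ¬ Bv g (Step g (Step g z A) {i}) := S2 _ hz' {i} (Finset.mem_singleton_self i)
    obtain ⟨t, htc⟩ := hV1 (Step g (Step g z A) {i})
    have e2 : t = uv hV1 (Step g (Step g z A) {i}) := uv_eq hV1 hU' htc
    rw [← hbr] at htc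
    have e1 : t = uv hV1 (Step g z (insert i A)) :=
      uv_eq hV1 hUX (vl_mono {i} ⟨i, Finset.mem_singleton_self i⟩ rfl htc)
    rw [← e2, e1, S4' z hz _ (Finset.mem_insert_self i A)]
  have DL : ∀ (L : List (Finset (Fin n))) (z : Fin n → Bool), BB z →
      (∀ A ∈ L, A.Nonempty) → Stb g (endSt g z L) →
      endSt g z L = uv hV1 (Step g z {i}) := by
    intro L
    induction L with
    | nil =>
      intro z hz _ hstb
      exact absurd hstb (bv_not_stb (hBz z hz))
    | cons A L' ih =>
      intro z hz hnon hstb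
      have hA : A.Nonempty := hnon A (by simp)
      rw [endSt_cons] at hstb ⊢
      by_cases hBv : Bv g (Step g z A)
      · have hz' := hBext z hz A hA hBv
        rw [ih _ hz' (fun B hB => hnon B (by simp [hB])) hstb, S5 z hz A hA hBv]
      · have ht : endSt g (Step g z A) L' ∈ Vl g (Step g z A) :=
          ⟨gp_reach (fun B hB => hnon B (by simp [hB])), hstb⟩
        by_cases hiA : i ∈ A
        · rw [uv_eq hV1 hBv ht, S4' z hz A hiA]
        · have hUX : ¬ Bv g (Step g z (insert i A)) := S2 z hz _ (Finset.mem_insert_self i A)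
          have hbr : Step g (Step g z (insert i A)) {i} = Step g (Step g z A) {i} :=
            bridge hSI i (fun l hl => hins z A l hl)
          obtain ⟨u, huc⟩ := hV1 (Step g (Step g z A) {i})
          have huz' : u ∈ Vl g (Step g z A) :=
            vl_mono {i} ⟨i, Finset.mem_singleton_self i⟩ rfl huc
          rw [← hbr] at huc
          have huX : u ∈ Vl g (Step g z (insert i A)) :=
            vl_mono {i} ⟨i, Finset.mem_singleton_self i⟩ rfl huc
          have e1 : u = uv hV1 (Step g z (insert i A)) := uv_eq hV1 hUX huX
          have e0 : endSt g (Step g z A) L' = u := by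
            by_contra hne
            exact hBv ⟨_, ht, u, huz', hne⟩
          rw [e0, e1, S4' z hz _ (Finset.mem_insert_self i A)]
  obtain ⟨t₁, h₁, t₂, h₂, hne⟩ := hy
  obtain ⟨L₁, hL₁, hend₁⟩ := reach_list h₁.1
  obtain ⟨L₂, hL₂, hend₂⟩ := reach_list h₂.1
  have e₁ : t₁ = uv hV1 (Step g y {i}) := by
    rw [hend₁]; exact DL L₁ y hBB_y hL₁ (hend₁ ▸ h₁.2)
  have e₂ : t₂ = uv hV1 (Step g y {i}) := by
    rw [hend₂]; exact DL L₂ y hBB_y hL₂ (hend₂ ▸ h₂.2)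
  exact hne (e₁.trans e₂.symm)

end SocialAux

namespace SocialAux

theorem foldl_take_succ {α β : Type*} (f : β → α → β) (junk : α) :
    ∀ (L : List α) (j : ℕ), j < L.length → ∀ s : β,
      (L.take (j + 1)).foldl f s = f ((L.take j).foldl f s) (L.getD j junk) := by
  intro L
  induction L with
  | nil => intro j h; simp at h
  | cons A L' ih =>
    intro j h s
    cases j with
    | zero => simp
    | succ j' =>
      simp only [List.take_succ_cons, List.foldl_cons, List.getD_cons_succ]
      exact ih j' (by simpa using h) (f s A)

section Run

variable {n : ℕ} (g : ∀ _ : Fin n, (Fin n → Bool) → Bool) (hn : 0 < n)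
  (hc : ∀ y : Fin n → Bool, Bv g y → ∀ i : Fin n,
    ∃ L : List (Finset (Fin n)), GP g y L ∧ ∃ A ∈ L, i ∈ A)
  (y₀ : Fin n → Bool) (hy₀ : Bv g y₀)

noncomputable def blk : (k : ℕ) →
    {p : (Fin n → Bool) × List (Finset (Fin n)) //
      Bv g p.1 ∧ GP g p.1 p.2 ∧ ∃ A ∈ p.2, (⟨k % n, Nat.mod_lt k hn⟩ : Fin n) ∈ A}
  | 0 =>
    ⟨(y₀, (hc y₀ hy₀ ⟨0 % n, Nat.mod_lt 0 hn⟩).choose), hy₀,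
      (hc y₀ hy₀ _).choose_spec.1, (hc y₀ hy₀ _).choose_spec.2⟩
  | (k + 1) =>
    let prev := blk k
    have hBv' : Bv g (endSt g prev.1.1 prev.1.2) := gp_endBv prev.2.1 prev.2.2.1
    ⟨(endSt g prev.1.1 prev.1.2,
        (hc _ hBv' ⟨(k + 1) % n, Nat.mod_lt (k + 1) hn⟩).choose), hBv',
      (hc _ hBv' _).choose_spec.1, (hc _ hBv' _).choose_spec.2⟩

noncomputable def Yk (k : ℕ) : Fin n → Bool := (blk g hn hc y₀ hy₀ k).1.1

noncomputable def Lk (k : ℕ) : List (Finset (Fin n)) := (blk g hn hc y₀ hy₀ k).1.2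

theorem Yk_zero : Yk g hn hc y₀ hy₀ 0 = y₀ := rfl

theorem Yk_succ (k : ℕ) :
    Yk g hn hc y₀ hy₀ (k + 1) = endSt g (Yk g hn hc y₀ hy₀ k) (Lk g hn hc y₀ hy₀ k) := rfl

theorem blkBv (k : ℕ) : Bv g (Yk g hn hc y₀ hy₀ k) := (blk g hn hc y₀ hy₀ k).2.1

theorem blkGP (k : ℕ) : GP g (Yk g hn hc y₀ hy₀ k) (Lk g hn hc y₀ hy₀ k) :=
  (blk g hn hc y₀ hy₀ k).2.2.1

theorem blkEx (k : ℕ) :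
    ∃ A ∈ Lk g hn hc y₀ hy₀ k, (⟨k % n, Nat.mod_lt k hn⟩ : Fin n) ∈ A :=
  (blk g hn hc y₀ hy₀ k).2.2.2

noncomputable def csum : ℕ → ℕ
  | 0 => 0
  | k + 1 => csum k + (Lk g hn hc y₀ hy₀ k).length

theorem len_pos (k : ℕ) : 0 < (Lk g hn hc y₀ hy₀ k).length := by
  obtain ⟨A, hA, _⟩ := blkEx g hn hc y₀ hy₀ k
  exact List.length_pos_iff.mpr (List.ne_nil_of_mem hA)

theorem csum_succ (k : ℕ) :
    csum g hn hc y₀ hy₀ (k + 1) = csum g hn hc y₀ hy₀ k + (Lk g hn hc y₀ hy₀ k).length :=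
  rfl

theorem csum_lt (k : ℕ) : csum g hn hc y₀ hy₀ k < csum g hn hc y₀ hy₀ (k + 1) := by
  have h1 := csum_succ g hn hc y₀ hy₀ k
  have h2 := len_pos g hn hc y₀ hy₀ k
  omega

theorem csum_mono : ∀ {k l : ℕ}, k ≤ l → csum g hn hc y₀ hy₀ k ≤ csum g hn hc y₀ hy₀ l := by
  have := strictMono_nat_of_lt_succ (csum_lt g hn hc y₀ hy₀)
  exact fun {k l} h => this.monotone h

theorem csum_le_self (k : ℕ) : k ≤ csum g hn hc y₀ hy₀ k := by
  induction k with
  | zero => exact Nat.zero_le _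
  | succ k ih =>
    have := csum_lt g hn hc y₀ hy₀ k
    omega

theorem hex (t : ℕ) : ∃ k, t < csum g hn hc y₀ hy₀ (k + 1) :=
  ⟨t, by have := csum_le_self g hn hc y₀ hy₀ (t + 1); have := csum_lt g hn hc y₀ hy₀ t; omega⟩

noncomputable def kOf (t : ℕ) : ℕ := Nat.find (hex g hn hc y₀ hy₀ t)

theorem kOf_lt (t : ℕ) : t < csum g hn hc y₀ hy₀ (kOf g hn hc y₀ hy₀ t + 1) :=
  Nat.find_spec (hex g hn hc y₀ hy₀ t)

theorem kOf_le (t : ℕ) : csum g hn hc y₀ hy₀ (kOf g hn hc y₀ hy₀ t) ≤ t := by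
  rcases h : kOf g hn hc y₀ hy₀ t with _ | m
  · show csum g hn hc y₀ hy₀ 0 ≤ t
    exact Nat.zero_le t
  · have hmin := Nat.find_min (hex g hn hc y₀ hy₀ t) (show m < kOf g hn hc y₀ hy₀ t by omega)
    omega

theorem kOf_eq (k j : ℕ) (hj : j < (Lk g hn hc y₀ hy₀ k).length) :
    kOf g hn hc y₀ hy₀ (csum g hn hc y₀ hy₀ k + j) = k := by
  have hup : csum g hn hc y₀ hy₀ k + j < csum g hn hc y₀ hy₀ (k + 1) := by
    have := csum_succ g hn hc y₀ hy₀ k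
    omega
  refine (Nat.find_eq_iff (hex g hn hc y₀ hy₀ _)).mpr ⟨hup, ?_⟩
  intro m hm
  simp only [not_lt]
  have : csum g hn hc y₀ hy₀ (m + 1) ≤ csum g hn hc y₀ hy₀ k :=
    csum_mono g hn hc y₀ hy₀ (by omega)
  omega

noncomputable def sigT : ℕ → Finset (Fin n)
  | 0 => Finset.univ
  | t + 1 =>
    (Lk g hn hc y₀ hy₀ (kOf g hn hc y₀ hy₀ t)).getD
      (t - csum g hn hc y₀ hy₀ (kOf g hn hc y₀ hy₀ t)) ∅

theorem sigT_val (k j : ℕ) (hj : j < (Lk g hn hc y₀ hy₀ k).length) :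
    sigT g hn hc y₀ hy₀ (csum g hn hc y₀ hy₀ k + j + 1) = (Lk g hn hc y₀ hy₀ k).getD j ∅ := by
  show (Lk g hn hc y₀ hy₀ (kOf g hn hc y₀ hy₀ (csum g hn hc y₀ hy₀ k + j))).getD _ ∅ = _
  rw [kOf_eq g hn hc y₀ hy₀ k j hj]
  congr 1
  omega

theorem align :
    ∀ k j, j ≤ (Lk g hn hc y₀ hy₀ k).length →
      dynamics g y₀ (sigT g hn hc y₀ hy₀) (csum g hn hc y₀ hy₀ k + j) =
        endSt g (Yk g hn hc y₀ hy₀ k) ((Lk g hn hc y₀ hy₀ k).take j) := by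
  have inner : ∀ k, dynamics g y₀ (sigT g hn hc y₀ hy₀) (csum g hn hc y₀ hy₀ k) =
      Yk g hn hc y₀ hy₀ k →
      ∀ j, j ≤ (Lk g hn hc y₀ hy₀ k).length →
      dynamics g y₀ (sigT g hn hc y₀ hy₀) (csum g hn hc y₀ hy₀ k + j) =
        endSt g (Yk g hn hc y₀ hy₀ k) ((Lk g hn hc y₀ hy₀ k).take j) := by
    intro k hk j
    induction j with
    | zero => intro _; simpa [endSt] using hk
    | succ j' ihj =>
      intro hj
      have hj' : j' < (Lk g hn hc y₀ hy₀ k).length := by omega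
      have hd : dynamics g y₀ (sigT g hn hc y₀ hy₀) (csum g hn hc y₀ hy₀ k + j' + 1) =
          Step g (dynamics g y₀ (sigT g hn hc y₀ hy₀) (csum g hn hc y₀ hy₀ k + j'))
            (sigT g hn hc y₀ hy₀ (csum g hn hc y₀ hy₀ k + j' + 1)) := rfl
      have hstep : csum g hn hc y₀ hy₀ k + (j' + 1) = csum g hn hc y₀ hy₀ k + j' + 1 := rfl
      rw [hstep, hd, ihj (by omega), sigT_val g hn hc y₀ hy₀ k j' hj']
      exact (foldl_take_succ (Step g) ∅ (Lk g hn hc y₀ hy₀ k) j' hj' (Yk g hn hc y₀ hy₀ k)).symm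
  have outer : ∀ k, dynamics g y₀ (sigT g hn hc y₀ hy₀) (csum g hn hc y₀ hy₀ k) =
      Yk g hn hc y₀ hy₀ k := by
    intro k
    induction k with
    | zero => rfl
    | succ k ihk =>
      have h := inner k ihk (Lk g hn hc y₀ hy₀ k).length le_rfl
      rw [List.take_length] at h
      rw [csum_succ g hn hc y₀ hy₀ k, Yk_succ g hn hc y₀ hy₀ k]
      exact h
  exact fun k => inner k (outer k)

theorem bivAll (t : ℕ) : Bv g (dynamics g y₀ (sigT g hn hc y₀ hy₀) t) := by
  have h1 := kOf_le g hn hc y₀ hy₀ t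
  have h2 := kOf_lt g hn hc y₀ hy₀ t
  have h3 := csum_succ g hn hc y₀ hy₀ (kOf g hn hc y₀ hy₀ t)
  have hj : t - csum g hn hc y₀ hy₀ (kOf g hn hc y₀ hy₀ t) ≤
      (Lk g hn hc y₀ hy₀ (kOf g hn hc y₀ hy₀ t)).length := by omega
  have ht : t = csum g hn hc y₀ hy₀ (kOf g hn hc y₀ hy₀ t) +
      (t - csum g hn hc y₀ hy₀ (kOf g hn hc y₀ hy₀ t)) := by omega
  rw [ht, align g hn hc y₀ hy₀ _ _ hj]
  exact gp_endBv (blkBv g hn hc y₀ hy₀ _)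
    (gp_take (blkGP g hn hc y₀ hy₀ _) _)

theorem nonemptyAll (t : ℕ) : (sigT g hn hc y₀ hy₀ t).Nonempty := by
  cases t with
  | zero => exact ⟨⟨0, hn⟩, Finset.mem_univ _⟩
  | succ t' =>
    have h1 := kOf_le g hn hc y₀ hy₀ t'
    have h2 := kOf_lt g hn hc y₀ hy₀ t'
    have h3 := csum_succ g hn hc y₀ hy₀ (kOf g hn hc y₀ hy₀ t')
    have hj : t' - csum g hn hc y₀ hy₀ (kOf g hn hc y₀ hy₀ t') <
        (Lk g hn hc y₀ hy₀ (kOf g hn hc y₀ hy₀ t')).length := by omega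
    show ((Lk g hn hc y₀ hy₀ (kOf g hn hc y₀ hy₀ t')).getD
      (t' - csum g hn hc y₀ hy₀ (kOf g hn hc y₀ hy₀ t')) ∅).Nonempty
    rw [List.getD_eq_getElem _ _ hj]
    exact gp_nonempty (blkGP g hn hc y₀ hy₀ _) _ (List.getElem_mem _)

theorem fairAll : Fair (sigT g hn hc y₀ hy₀) := by
  intro i N
  set k := i.val + n * (N + 1) with hk
  have hkn : k % n = i.val := by
    rw [hk, Nat.add_mul_mod_self_left, Nat.mod_eq_of_lt i.isLt]
  obtain ⟨A, hAL, hiA⟩ := blkEx g hn hc y₀ hy₀ k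
  have hieq : (⟨k % n, Nat.mod_lt k hn⟩ : Fin n) = i := Fin.ext hkn
  rw [hieq] at hiA
  obtain ⟨jA, hjA, hAeq⟩ := List.mem_iff_getElem.mp hAL
  refine ⟨csum g hn hc y₀ hy₀ k + jA + 1, ?_, ?_⟩
  · have hck := csum_le_self g hn hc y₀ hy₀ k
    have : N + 1 ≤ n * (N + 1) := Nat.le_mul_of_pos_left _ hn
    omega
  · rw [sigT_val g hn hc y₀ hy₀ k jA hjA, List.getD_eq_getElem _ _ hjA, hAeq]
    exact hiA

end Run

end SocialAux

namespace SocialAux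

/-- Main abstract theorem: a system of self-independent historyless reaction
functions over `Bool` with two distinct stable states is not convergent. -/
theorem not_convergent_of_two_stable {n : ℕ} (hn : 0 < n)
    (g : ∀ _ : Fin n, (Fin n → Bool) → Bool)
    (hSI : ∀ i, SelfIndependent i (g i))
    (a b : Fin n → Bool) (ha : Stable g a) (hb : Stable g b) (hab : a ≠ b) :
    ∃ (s0 : Fin n → Bool) (σ : ℕ → Finset (Fin n)),
      (∀ t, (σ t).Nonempty) ∧ Fair σ ∧
      ¬ EventuallyConstant (dynamics g s0 σ) := by
  by_contra hcon
  push_neg at hcon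
  -- round-robin singleton schedule
  set σrr : ℕ → Finset (Fin n) := fun t => {⟨t % n, Nat.mod_lt t hn⟩} with hσrr
  have hfair_rr : Fair σrr := by
    intro i N
    refine ⟨i.val + n * (N + 1), ?_, ?_⟩
    · have : N + 1 ≤ n * (N + 1) := Nat.le_mul_of_pos_left _ hn
      omega
    · simp only [hσrr, Finset.mem_singleton]
      apply Fin.ext
      show (i : ℕ) = (↑i + n * (N + 1)) % n
      rw [Nat.add_mul_mod_self_left, Nat.mod_eq_of_lt i.isLt]
  have reach_dyn : ∀ (s : Fin n → Bool) (σ : ℕ → Finset (Fin n)),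
      (∀ t, (σ t).Nonempty) → ∀ t, Reach g s (dynamics g s σ t) := by
    intro s σ hne t
    induction t with
    | zero => exact Relation.ReflTransGen.refl
    | succ t ih => exact Relation.ReflTransGen.tail ih ⟨σ (t + 1), hne (t + 1), rfl⟩
  have hV1 : ∀ s : Fin n → Bool, (Vl g s).Nonempty := by
    intro s
    obtain ⟨t0, hconst⟩ :=
      hcon s σrr (fun t => ⟨_, Finset.mem_singleton_self _⟩) hfair_rr
    refine ⟨dynamics g s σrr t0, reach_dyn s σrr (fun t => ⟨_, Finset.mem_singleton_self _⟩) t0, ?_⟩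
    intro i
    obtain ⟨t, htN, hti⟩ := hfair_rr i (t0 + 1)
    obtain ⟨t', rfl⟩ : ∃ t', t = t' + 1 := ⟨t - 1, by omega⟩
    have h1 : dynamics g s σrr (t' + 1) = dynamics g s σrr t0 := hconst _ (by omega)
    have h2 : dynamics g s σrr t' = dynamics g s σrr t0 := hconst _ (by omega)
    have h3 : dynamics g s σrr (t' + 1) i = g i (dynamics g s σrr t') := by
      show (if i ∈ σrr (t' + 1) then g i (dynamics g s σrr t') else dynamics g s σrr t' i) = _
      rw [if_pos hti]
    rw [h1, h2] at h3
    exact h3.symm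
  by_cases hbv : ∃ y, Bv g y
  · -- there is a bivalent state: build a fair schedule along which all states
    -- stay bivalent, contradicting convergence
    obtain ⟨y₀, hy₀⟩ := hbv
    have hc : ∀ y : Fin n → Bool, Bv g y → ∀ i : Fin n,
        ∃ L : List (Finset (Fin n)), GP g y L ∧ ∃ A ∈ L, i ∈ A :=
      fun y hy i => crux hSI hV1 hy i
    obtain ⟨t0, hconst⟩ :=
      hcon y₀ (sigT g hn hc y₀ hy₀) (nonemptyAll g hn hc y₀ hy₀) (fairAll g hn hc y₀ hy₀)
    have hBv0 := bivAll g hn hc y₀ hy₀ t0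
    obtain ⟨j, hj⟩ := not_forall.mp (bv_not_stb hBv0)
    obtain ⟨t, htN, htj⟩ := fairAll g hn hc y₀ hy₀ j (t0 + 1)
    obtain ⟨t', rfl⟩ : ∃ t', t = t' + 1 := ⟨t - 1, by omega⟩
    have h1 : dynamics g y₀ (sigT g hn hc y₀ hy₀) (t' + 1) =
        dynamics g y₀ (sigT g hn hc y₀ hy₀) t0 := hconst _ (by omega)
    have h2 : dynamics g y₀ (sigT g hn hc y₀ hy₀) t' =
        dynamics g y₀ (sigT g hn hc y₀ hy₀) t0 := hconst _ (by omega)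
    have h3 : dynamics g y₀ (sigT g hn hc y₀ hy₀) (t' + 1) j =
        g j (dynamics g y₀ (sigT g hn hc y₀ hy₀) t') := by
      show (if j ∈ sigT g hn hc y₀ hy₀ (t' + 1) then _ else _) = _
      rw [if_pos htj]
    rw [h1, h2] at h3
    exact hj h3.symm
  · -- no bivalent state: all states univalent, contradiction via a hypercube chain
    push_neg at hbv
    have huv_flip : ∀ (s s' : Fin n → Bool) (i : Fin n),
        (∀ j, j ≠ i → s j = s' j) → uv hV1 s = uv hV1 s' := by
      intro s s' i h
      have hbr := bridge hSI i h
      obtain ⟨t, htc⟩ := hV1 (Step g s {i})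
      have e1 : t = uv hV1 s :=
        uv_eq hV1 (hbv s) (vl_mono {i} ⟨i, Finset.mem_singleton_self i⟩ rfl htc)
      rw [hbr] at htc
      have e2 : t = uv hV1 s' :=
        uv_eq hV1 (hbv s') (vl_mono {i} ⟨i, Finset.mem_singleton_self i⟩ rfl htc)
      rw [← e1, ← e2]
    set zk : ℕ → (Fin n → Bool) := fun m => fun j => if j.val < m then b j else a j with hzk
    have hz0 : zk 0 = a := funext fun j => by simp [hzk]
    have hzn : zk n = b := funext fun j => by simp [hzk, j.isLt]
    have hchain : ∀ m, uv hV1 (zk (m + 1)) = uv hV1 (zk m) := by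
      intro m
      by_cases hmn : m < n
      · refine huv_flip (zk (m + 1)) (zk m) ⟨m, hmn⟩ (fun j hj => ?_)
        have hjm : j.val ≠ m := fun h => hj (Fin.ext h)
        simp only [hzk]
        rcases Nat.lt_or_ge j.val m with h | h
        · rw [if_pos (by omega), if_pos h]
        · rw [if_neg (by omega), if_neg (by omega)]
      · have : zk (m + 1) = zk m := funext fun j => by
          have := j.isLt
          simp only [hzk]
          rw [if_pos (by omega), if_pos (by omega)]
        rw [this]
    have hall : ∀ m, uv hV1 (zk m) = uv hV1 (zk 0) := by
      intro m
      induction m with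
      | zero => rfl
      | succ m ih => rw [hchain m, ih]
    have ea : uv hV1 a = a := by
      have h := uv_mem hV1 a
      rw [vl_stb ha] at h
      exact h
    have eb : uv hV1 b = b := by
      have h := uv_mem hV1 b
      rw [vl_stb hb] at h
      exact h
    have := hall n
    rw [hzn, hz0, ea, eb] at this
    exact hab this.symm

end SocialAux

namespace SocialAux

theorem majority_selfIndependent {n : ℕ} (Nb : Fin n → Finset (Fin n))
    (hloop : ∀ i, i ∉ Nb i) (i : Fin n) :
    SelfIndependent i (majorityReaction Nb i) := by
  intro a b hab
  simp only [majorityReaction]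
  have hfil : (Nb i).filter (fun j => a j = true) = (Nb i).filter (fun j => b j = true) := by
    apply Finset.filter_congr
    intro j hj
    have hji : j ≠ i := fun h => hloop i (h ▸ hj)
    rw [hab j hji]
  rw [hfil]

theorem majority_stable_bot {n : ℕ} (Nb : Fin n → Finset (Fin n))
    (hfriend : ∀ i, (Nb i).Nonempty) :
    Stable (majorityReaction Nb) (fun _ => false) := by
  intro i
  have h := Finset.card_pos.mpr (hfriend i)
  simp only [majorityReaction]
  simp only [decide_eq_false_iff_not, not_le]
  simp only [Bool.false_eq_true, Finset.filter_false, Finset.card_empty]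
  omega

theorem majority_stable_top {n : ℕ} (Nb : Fin n → Finset (Fin n)) :
    Stable (majorityReaction Nb) (fun _ => true) := by
  intro i
  simp only [majorityReaction]
  rw [decide_eq_true_iff]
  simp only [Finset.filter_true]
  omega

end SocialAux

/-- For every social network (a directed graph on `n ≥ 1`
vertices without self-loops in which every vertex has at least one friend),
the diffusion-of-technologies system is not convergent: there are an initial
assignment of technologies and a fair schedule under which the dynamics is
not eventually constant. -/
theorem social_network_diffusion_not_convergent
    {n : ℕ} (hn : 0 < n) (Nb : Fin n → Finset (Fin n))
    (hloop : ∀ i, i ∉ Nb i) (hfriend : ∀ i, (Nb i).Nonempty) :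
    ∃ (s0 : Fin n → Bool) (σ : ℕ → Finset (Fin n)),
      (∀ t, (σ t).Nonempty) ∧ Fair σ ∧
      ¬ EventuallyConstant (dynamics (majorityReaction Nb) s0 σ) := by
  refine SocialAux.not_convergent_of_two_stable hn (majorityReaction Nb)
    (SocialAux.majority_selfIndependent Nb hloop)
    (fun _ => false) (fun _ => true)
    (SocialAux.majority_stable_bot Nb hfriend)
    (SocialAux.majority_stable_top Nb)
    (fun h => ?_)
  have := congrFun h ⟨0, hn⟩
  simp at this
end

section
/- Consider a convergent interaction system with deterministic, historyless, self-independent reaction functions g_1,…,g_n. If there are initial profiles s and s' and fair schedules under which the respective dynamics converge to two distinct stable states, then there exists a single initial profile from which the dynamics under two different fair schedules converge to two distinct stable states (i.e., a polychromatic initial state exists, from which multiple stable states are reachable). -/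
/-- The `(s0,σ)`-dynamics converges to the profile `a`. -/
def ConvergesTo {n : ℕ} {A : Fin n → Type*}
    (g : ∀ i : Fin n, (∀ j, A j) → A i) (s0 : ∀ j, A j)
    (σ : ℕ → Finset (Fin n)) (a : ∀ j, A j) : Prop :=
  ∃ t0 : ℕ, ∀ t, t0 ≤ t → dynamics g s0 σ t = a


private lemma dyn_congr {n : ℕ} {A : Fin n → Type*}
    (g : ∀ i : Fin n, (∀ j, A j) → A i) (s0 : ∀ j, A j)
    (σ σ' : ℕ → Finset (Fin n)) (h : ∀ t, 1 ≤ t → σ t = σ' t) :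
    ∀ t, dynamics g s0 σ t = dynamics g s0 σ' t := by
  intro t
  induction t with
  | zero => rfl
  | succ t ih =>
    have hs : σ (t + 1) = σ' (t + 1) := h _ (Nat.succ_le_succ (Nat.zero_le _))
    funext i
    simp only [dynamics, hs, ih]

private lemma dyn_shift {n : ℕ} {A : Fin n → Type*}
    (g : ∀ i : Fin n, (∀ j, A j) → A i) (s0 : ∀ j, A j)
    (σ : ℕ → Finset (Fin n)) :
    ∀ t, dynamics g s0 σ (t + 1)
      = dynamics g (dynamics g s0 σ 1) (fun u => σ (u + 1)) t := by
  intro t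
  induction t with
  | zero => rfl
  | succ t ih =>
    funext i
    have h1 : dynamics g s0 σ (t + 1 + 1) i
        = if i ∈ σ (t + 1 + 1) then g i (dynamics g s0 σ (t + 1))
          else dynamics g s0 σ (t + 1) i := rfl
    rw [h1, ih]
    rfl

private lemma stable_of_fair_convergesTo {n : ℕ} {A : Fin n → Type*}
    (g : ∀ i : Fin n, (∀ j, A j) → A i) (s0 : ∀ j, A j)
    (σ : ℕ → Finset (Fin n)) (hfair : Fair σ) (c : ∀ j, A j)
    (hc : ConvergesTo g s0 σ c) : Stable g c := by
  obtain ⟨t0, ht0⟩ := hc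
  intro i
  obtain ⟨t, ht, hit⟩ := hfair i (t0 + 1)
  obtain ⟨u, rfl⟩ : ∃ u, t = u + 1 := ⟨t - 1, by omega⟩
  have hu : dynamics g s0 σ u = c := ht0 u (by omega)
  have hu1 : dynamics g s0 σ (u + 1) = c := ht0 (u + 1) (by omega)
  have : dynamics g s0 σ (u + 1) i = g i (dynamics g s0 σ u) := by
    simp only [dynamics, if_pos hit]
  rw [hu1, hu] at this
  exact this.symm

/-- In a convergent system of deterministic, historyless,
self-independent reaction functions, if two (initial profile, fair schedule)
pairs lead to two distinct stable states, then there is a single initial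
profile from which two fair schedules lead to two distinct stable states
(a polychromatic initial state exists). -/
theorem polychromatic_initial_state_exists
    {n : ℕ} {A : Fin n → Type*} [∀ i, Nonempty (A i)]
    (g : ∀ i : Fin n, (∀ j, A j) → A i)
    (hsi : ∀ i, SelfIndependent i (g i))
    (hconv : Convergent g)
    (s s' : ∀ j, A j) (σ σ' : ℕ → Finset (Fin n))
    (hσ : ∀ t, (σ t).Nonempty) (hfair : Fair σ)
    (hσ' : ∀ t, (σ' t).Nonempty) (hfair' : Fair σ')
    (a b : ∀ j, A j) (hab : a ≠ b)
    (hsa : Stable g a) (hsb : Stable g b)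
    (hca : ConvergesTo g s σ a) (hcb : ConvergesTo g s' σ' b) :
    ∃ (s0 : ∀ j, A j) (σ1 σ2 : ℕ → Finset (Fin n)) (a' b' : ∀ j, A j),
      (∀ t, (σ1 t).Nonempty) ∧ Fair σ1 ∧
      (∀ t, (σ2 t).Nonempty) ∧ Fair σ2 ∧
      Stable g a' ∧ Stable g b' ∧ a' ≠ b' ∧
      ConvergesTo g s0 σ1 a' ∧ ConvergesTo g s0 σ2 b' := by
  classical
  -- n > 0
  have hn0 : 0 < n := by
    obtain ⟨i, -⟩ := hσ 0
    exact i.pos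
  haveI : NeZero n := ⟨by omega⟩
  -- the always-everyone schedule
  set ρ : ℕ → Finset (Fin n) := fun _ => (Finset.univ : Finset (Fin n)) with hρ
  have hρne : ∀ t, (ρ t).Nonempty := fun t => ⟨⟨0, hn0⟩, Finset.mem_univ _⟩
  have hρfair : Fair ρ := fun i N => ⟨N, le_refl _, Finset.mem_univ _⟩
  by_contra hpoly
  -- reachability predicate
  set P : (∀ j, A j) → (∀ j, A j) → Prop :=
    fun x c => ∃ τ : ℕ → Finset (Fin n),
      (∀ t, (τ t).Nonempty) ∧ Fair τ ∧ ConvergesTo g x τ c with hP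
  -- uniqueness of reachable stable state under ¬poly
  have uniq : ∀ x c d, P x c → P x d → c = d := by
    intro x c d ⟨τ1, hτ1, hf1, hc1⟩ ⟨τ2, hτ2, hf2, hc2⟩
    by_contra hcd
    exact hpoly ⟨x, τ1, τ2, c, d, hτ1, hf1, hτ2, hf2,
      stable_of_fair_convergesTo g x τ1 hf1 c hc1,
      stable_of_fair_convergesTo g x τ2 hf2 d hc2, hcd, hc1, hc2⟩
  -- neighboring profiles have the same color
  have step : ∀ (x y : ∀ j, A j) (i : Fin n), (∀ j, j ≠ i → x j = y j) →
      ∀ c, P x c → P y c := by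
    intro x y i hxy c hxc
    set z : ∀ j, A j := Function.update x i (g i x) with hz
    have hzy : z = Function.update y i (g i y) := by
      rw [hz]
      funext j
      by_cases hj : j = i
      · rw [hj, Function.update_self, Function.update_self]
        exact hsi i x y hxy
      · rw [Function.update_of_ne hj, Function.update_of_ne hj]
        exact hxy j hj
    -- limit of z under ρ
    obtain ⟨t0, ht0⟩ := hconv z ρ hρne hρfair
    set cz : ∀ j, A j := dynamics g z ρ t0 with hcz
    -- from any profile w agreeing with x off i, reach cz
    have reach : ∀ w : ∀ j, A j, Function.update w i (g i w) = z → P w cz := by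
      intro w hw
      set τ : ℕ → Finset (Fin n) :=
        fun t => if t ≤ 1 then ({i} : Finset (Fin n)) else Finset.univ with hτ
      have hτne : ∀ t, (τ t).Nonempty := by
        intro t
        by_cases h : t ≤ 1
        · simp [hτ, h]
        · simp only [hτ, if_neg h]
          exact ⟨⟨0, hn0⟩, Finset.mem_univ _⟩
      have hτfair : Fair τ := by
        intro j N
        refine ⟨max N 2, le_max_left _ _, ?_⟩
        have : ¬ (max N 2 ≤ 1) := by omega
        simp [hτ, this]
      -- after one step from w we are at z
      have hstep1 : dynamics g w τ 1 = z := by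
        funext j
        by_cases hj : j = i
        · subst hj
          have : j ∈ τ 1 := by simp [hτ]
          rw [← hw]
          simp only [dynamics, if_pos this, Function.update_self]
        · have : j ∉ τ (0 + 1) := by simp [hτ, hj]
          rw [← hw]
          simp only [dynamics, if_neg this, Function.update_of_ne hj]
      refine ⟨τ, hτne, hτfair, t0 + 1, ?_⟩
      intro t ht
      obtain ⟨u, rfl⟩ : ∃ u, t = u + 1 := ⟨t - 1, by omega⟩
      have h1 : dynamics g w τ (u + 1)
          = dynamics g z (fun v => τ (v + 1)) u := by
        rw [dyn_shift, hstep1]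
      have h2 : dynamics g z (fun v => τ (v + 1)) u = dynamics g z ρ u := by
        apply dyn_congr
        intro v hv
        have : ¬ (v + 1 ≤ 1) := by omega
        simp [hτ, hρ, this]
      rw [h1, h2]
      exact ht0 u (by omega)
    have hxz : Function.update x i (g i x) = z := rfl
    have hyz : Function.update y i (g i y) = z := hzy.symm
    have hx : P x cz := reach x hxz
    have hy : P y cz := reach y hyz
    have : c = cz := uniq x c cz hxc hx
    rw [this]
    exact hy
  -- chain from s to s'
  have chain : ∀ F : Finset (Fin n),
      P (fun j => if j ∈ F then s' j else s j) a := by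
    intro F
    induction F using Finset.induction_on with
    | empty =>
      simpa using (⟨σ, hσ, hfair, hca⟩ : P s a)
    | @insert i F hi ih =>
      refine step (fun j => if j ∈ F then s' j else s j)
        (fun j => if j ∈ insert i F then s' j else s j) i ?_ a ih
      intro j hj
      have : j ∈ insert i F ↔ j ∈ F := by
        simp [Finset.mem_insert, hj]
      simp [this]
  have hPs' : P s' a := by
    have := chain Finset.univ
    simpa using this
  have hPs'b : P s' b := ⟨σ', hσ', hfair', hcb⟩
  exact hab (uniq s' a b hPs' hPs'b)
end
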